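/- arXiv:0706.3740 — 10 statements merged into one kernel-verified Lean document; each statement's English description precedes it below -/
import Mathlib

section
/- If φ : [0,∞) → ℝ is strictly convex and increasing, r is a symmetric random variable with ‖r‖_∞ = 1 (and r is not almost surely 0), and a, b are real numbers with b ≠ 0, then E[φ(|a + r b|)] > φ(|a|). -/
open MeasureTheory
open scoped ENNReal NNReal

private lemma smo_of_convex {φ : ℝ → ℝ} (hφ : StrictConvexOn ℝ (Set.Ici 0) φ)
    (hφm : MonotoneOn φ (Set.Ici 0)) : StrictMonoOn φ (Set.Ici 0) := by
  intro s hs t ht hst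
  rcases lt_or_eq_of_le (hφm hs ht hst.le) with h | h
  · exact h
  exfalso
  have hm : (s + t) / 2 ∈ Set.Ici (0:ℝ) := by
    simp only [Set.mem_Ici] at *; linarith
  have h2 := hφ.2 hs ht hst.ne (by norm_num : (0:ℝ) < 1/2) (by norm_num : (0:ℝ) < 1/2)
    (by norm_num)
  simp only [smul_eq_mul] at h2
  have h3 : φ s ≤ φ (1/2 * s + 1/2 * t) := hφm hs (by simp only [Set.mem_Ici] at *; linarith)
    (by linarith [hst.le])
  linarith

private lemma key_le {φ : ℝ → ℝ} (hφ : StrictConvexOn ℝ (Set.Ici 0) φ)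
    (hφm : MonotoneOn φ (Set.Ici 0)) (a x : ℝ) :
    φ |a| ≤ (φ |a + x| + φ |a - x|) / 2 := by
  have habs : 2 * |a| ≤ |a + x| + |a - x| := by
    have := abs_add_le (a + x) (a - x)
    have h2 : |(a+x)+(a-x)| = 2 * |a| := by
      have : (a+x)+(a-x) = 2*a := by ring
      rw [this, abs_mul]; norm_num
    linarith
  have h2 := hφ.convexOn.2 (abs_nonneg (a+x)) (abs_nonneg (a-x))
    (by norm_num : (0:ℝ) ≤ 1/2) (by norm_num : (0:ℝ) ≤ 1/2) (by norm_num)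
  simp only [smul_eq_mul] at h2
  have h3 : φ |a| ≤ φ (1/2 * |a + x| + 1/2 * |a - x|) :=
    hφm (abs_nonneg a) (Set.mem_Ici.mpr (by positivity)) (by linarith)
  linarith

private lemma key_lt {φ : ℝ → ℝ} (hφ : StrictConvexOn ℝ (Set.Ici 0) φ)
    (hφm : MonotoneOn φ (Set.Ici 0)) (a : ℝ) {x : ℝ} (hx : x ≠ 0) :
    φ |a| < (φ |a + x| + φ |a - x|) / 2 := by
  by_cases ha : a = 0
  · subst ha
    simp only [zero_add, zero_sub, abs_neg, abs_zero]
    have := smo_of_convex hφ hφm (Set.mem_Ici.mpr (le_refl 0)) (abs_nonneg x) (abs_pos.mpr hx)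
    linarith
  · have hne : |a + x| ≠ |a - x| := by
      intro h
      have := congrArg (· ^ 2) h
      simp only [sq_abs] at this
      have : 4 * (a * x) = 0 := by nlinarith
      rcases mul_eq_zero.mp (by linarith : a * x = 0) with h | h
      · exact ha h
      · exact hx h
    have h2 := hφ.2 (abs_nonneg (a+x)) (abs_nonneg (a-x)) hne
      (by norm_num : (0:ℝ) < 1/2) (by norm_num : (0:ℝ) < 1/2) (by norm_num)
    simp only [smul_eq_mul] at h2
    have habs : 2 * |a| ≤ |a + x| + |a - x| := by
      have := abs_add_le (a + x) (a - x)
      have h2 : |(a+x)+(a-x)| = 2 * |a| := by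
        have : (a+x)+(a-x) = 2*a := by ring
        rw [this, abs_mul]; norm_num
      linarith
    have h3 : φ |a| ≤ φ (1/2 * |a + x| + 1/2 * |a - x|) :=
      hφm (abs_nonneg a) (Set.mem_Ici.mpr (by positivity)) (by linarith)
    linarith

theorem stmt3 {Ω : Type*} [MeasurableSpace Ω] (P : Measure Ω) [IsProbabilityMeasure P]
    (r : Ω → ℝ) (hmeas : Measurable r)
    (hsymm : Measure.map r P = Measure.map (fun ω => -(r ω)) P)
    (hnorm : eLpNorm r ⊤ P = 1)
    (φ : ℝ → ℝ) (hφ : StrictConvexOn ℝ (Set.Ici 0) φ) (hφm : MonotoneOn φ (Set.Ici 0))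
    (a b : ℝ) (hb : b ≠ 0) :
    φ |a| < ∫ ω, φ |a + r ω * b| ∂P := by
  -- measurable monotone extension of φ
  set ψ : ℝ → ℝ := fun x => φ (max x 0) with hψdef
  have hψmono : Monotone ψ := fun x y hxy =>
    hφm (Set.mem_Ici.mpr (le_max_right _ _)) (Set.mem_Ici.mpr (le_max_right _ _)) (max_le_max hxy le_rfl)
  have hψmeas : Measurable ψ := hψmono.measurable
  have hψeq : ∀ u : ℝ, ψ (|u|) = φ (|u|) := fun u => by
    simp [hψdef, max_eq_left (abs_nonneg u)]
  -- a.e. bound on r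
  have hr1 : ∀ᵐ ω ∂P, |r ω| ≤ 1 := by
    have h := ae_le_eLpNormEssSup (f := r) (μ := P)
    rw [← eLpNorm_exponent_top, hnorm] at h
    filter_upwards [h] with ω hω
    rw [show (1:ℝ≥0∞) = ((1:ℝ≥0):ℝ≥0∞) from rfl, enorm_eq_nnnorm, ENNReal.coe_le_coe] at hω
    have := NNReal.coe_le_coe.mpr hω
    simpa [Real.norm_eq_abs] using this
  -- positive measure of {r ≠ 0}
  have hpos : 0 < P {ω | r ω ≠ 0} := by
    rcases eq_or_lt_of_le (zero_le : 0 ≤ P {ω | r ω ≠ 0}) with h | h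
    · exfalso
      have hae : r =ᵐ[P] (fun _ => 0) := by
        rw [Filter.EventuallyEq, ae_iff]
        simpa using h.symm
      rw [eLpNorm_congr_ae hae, eLpNorm_zero'] at hnorm
      exact zero_ne_one hnorm
    · exact h
  -- measurability & integrability
  have hFmeas : ∀ c : ℝ, Measurable (fun t : ℝ => ψ |a + t * c|) := fun c =>
    hψmeas.comp ((measurable_const.add ((measurable_id).mul_const c)).abs)
  have hmeasp : Measurable (fun ω => ψ |a + r ω * b|) := (hFmeas b).comp hmeas
  have hmeasm : Measurable (fun ω => ψ |a - r ω * b|) := by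
    have : (fun ω => ψ |a - r ω * b|) = (fun t : ℝ => ψ |a + t * (-b)|) ∘ r := by
      funext ω; simp only [Function.comp]; ring_nf
    rw [this]; exact (hFmeas (-b)).comp hmeas
  set C : ℝ := max |φ 0| |φ (|a| + |b|)| with hC
  have hbound : ∀ (s : ℝ), 0 ≤ s → s ≤ |a| + |b| → ‖φ s‖ ≤ C := by
    intro s hs hs2
    have h1 : φ 0 ≤ φ s := hφm (Set.mem_Ici.mpr (le_refl 0)) hs hs
    have h2 : φ s ≤ φ (|a| + |b|) := hφm hs (Set.mem_Ici.mpr (by positivity)) hs2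
    rw [Real.norm_eq_abs, abs_le]
    constructor
    · calc -C ≤ -|φ 0| := by simp [hC]
        _ ≤ φ 0 := neg_abs_le _
        _ ≤ φ s := h1
    · calc φ s ≤ φ (|a| + |b|) := h2
        _ ≤ |φ (|a| + |b|)| := le_abs_self _
        _ ≤ C := le_max_right _ _
  have habound : ∀ (c : ℝ) (ω : Ω), |r ω| ≤ 1 → |a + r ω * c| ≤ |a| + |c| := by
    intro c ω hω
    calc |a + r ω * c| ≤ |a| + |r ω * c| := abs_add_le _ _
      _ ≤ |a| + |c| := by
        rw [abs_mul]
        have : |r ω| * |c| ≤ 1 * |c| := mul_le_mul_of_nonneg_right hω (abs_nonneg c)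
        linarith
  have hintp : Integrable (fun ω => ψ |a + r ω * b|) P := by
    refine Integrable.mono' (integrable_const C) hmeasp.aestronglyMeasurable ?_
    filter_upwards [hr1] with ω hω
    rw [hψeq]
    exact hbound _ (abs_nonneg _) (habound b ω hω)
  have hintm : Integrable (fun ω => ψ |a - r ω * b|) P := by
    refine Integrable.mono' (integrable_const C) hmeasm.aestronglyMeasurable ?_
    filter_upwards [hr1] with ω hω
    rw [hψeq]
    have : a - r ω * b = a + r ω * (-b) := by ring
    rw [this]
    have := habound (-b) ω hω
    simpa using hbound _ (abs_nonneg _) (by simpa using this)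
  -- symmetry: ∫ ψ|a + r b| = ∫ ψ|a - r b|
  have hsym : ∫ ω, ψ |a + r ω * b| ∂P = ∫ ω, ψ |a - r ω * b| ∂P := by
    have h1 : ∫ ω, ψ |a + r ω * b| ∂P = ∫ t, ψ |a + t * b| ∂(Measure.map r P) :=
      (integral_map hmeas.aemeasurable (hFmeas b).aestronglyMeasurable).symm
    have h2 : ∫ t, ψ |a + t * b| ∂(Measure.map (fun ω => -(r ω)) P)
        = ∫ ω, ψ |a + (-(r ω)) * b| ∂P :=
      integral_map hmeas.neg.aemeasurable (hFmeas b).aestronglyMeasurable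
    rw [h1, hsymm, h2]
    congr 1
    funext ω
    congr 2
    ring
  -- main inequality via positivity of the integral of g
  set g : Ω → ℝ := fun ω => (ψ |a + r ω * b| + ψ |a - r ω * b|) / 2 - φ |a| with hg
  have hgnn : ∀ ω, 0 ≤ g ω := by
    intro ω
    have := key_le hφ hφm a (r ω * b)
    simp only [hg, hψeq]
    linarith
  have hI : Integrable (fun ω => (ψ |a + r ω * b| + ψ |a - r ω * b|) / 2) P := by
    exact Integrable.div_const (hintp.add hintm) 2
  have hgint : Integrable g P := by
    exact Integrable.sub hI (integrable_const _)
  have hgpos : 0 < ∫ ω, g ω ∂P := by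
    rw [integral_pos_iff_support_of_nonneg hgnn hgint]
    refine lt_of_lt_of_le hpos (measure_mono ?_)
    intro ω hω
    have hx : r ω * b ≠ 0 := mul_ne_zero hω hb
    have := key_lt hφ hφm a hx
    simp only [Function.mem_support, hg, hψeq]
    intro hcon
    linarith
  have hgint_eq : ∫ ω, g ω ∂P
      = (∫ ω, ψ |a + r ω * b| ∂P + ∫ ω, ψ |a - r ω * b| ∂P) / 2 - φ |a| := by
    simp only [hg]
    rw [integral_sub hI (integrable_const _), integral_div, integral_add hintp hintm,
      integral_const]
    simp
  have hfinal : φ |a| < ∫ ω, ψ |a + r ω * b| ∂P := by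
    rw [hgint_eq, ← hsym] at hgpos
    linarith
  have : (fun ω => φ |a + r ω * b|) = fun ω => ψ |a + r ω * b| := by
    funext ω; rw [hψeq]
  rw [this]
  exact hfinal
end

section
/- Let x_1,...,x_n be vectors in a Banach space X, φ a strictly convex increasing function on [0,∞) with φ(0)=0, and (r_i) symmetric independent random variables with ‖r_i‖_∞ = 1. If there is ρ > 0 such that sup over all signs ε_i = ±1 of ‖ε_1 x_1 + ... + ε_n x_n‖ ≥ ‖x_1‖ + ρ, then there exists δ > 0 (depending only on ρ, φ, n, the distributions of the r_i, and ‖x_1‖) such that E[φ(‖x_1 + r_2 x_2 + ... + r_n x_n‖)] ≥ φ(‖x_1‖) + δ. -/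
open MeasureTheory ProbabilityTheory
open scoped ENNReal NNReal

section Aux
variable {φ : ℝ → ℝ}

lemma phi_base (hφc : ConvexOn ℝ (Set.Ici 0) φ) (hφm : MonotoneOn φ (Set.Ici 0))
    {c a b : ℝ} (hc : 0 ≤ c) (ha : 0 ≤ a) (hb : 0 ≤ b) (hab : 2 * c ≤ a + b) :
    2 * φ c ≤ φ a + φ b := by
  have hmem : (a + b) / 2 ∈ Set.Ici (0:ℝ) := by simp; linarith
  have h1 : φ c ≤ φ ((a + b) / 2) := hφm (Set.mem_Ici.mpr hc) hmem (by linarith)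
  have h2 := hφc.2 (Set.mem_Ici.mpr ha) (Set.mem_Ici.mpr hb)
    (by norm_num : (0:ℝ) ≤ (1:ℝ)/2) (by norm_num : (0:ℝ) ≤ (1:ℝ)/2) (by norm_num)
  simp only [smul_eq_mul] at h2
  have e : (1:ℝ)/2 * a + 1/2 * b = (a + b)/2 := by ring
  rw [e] at h2
  linarith

lemma phi_transfer (hφc : ConvexOn ℝ (Set.Ici 0) φ) (hφm : MonotoneOn φ (Set.Ici 0))
    {c ρ a b : ℝ} (hc : 0 ≤ c) (hρ : 0 < ρ) (hb : 0 ≤ b) (ha : c + ρ ≤ a)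
    (hab : 2 * c ≤ a + b) :
    φ (c + ρ) + φ (max (c - ρ) 0) ≤ φ a + φ b := by
  have ha0 : (0:ℝ) ≤ a := by linarith
  rcases le_or_gt (max (c - ρ) 0) b with h | h
  · exact add_le_add (hφm (Set.mem_Ici.mpr (by linarith)) (Set.mem_Ici.mpr ha0) ha)
      (hφm (Set.mem_Ici.mpr (le_max_right _ _)) (Set.mem_Ici.mpr hb) h)
  · have hcρ : 0 < c - ρ := by
      rcases le_or_gt (c - ρ) 0 with h' | h'
      · exfalso; rw [max_eq_right h'] at h; linarith
      · exact h'
    rw [max_eq_left hcρ.le] at h ⊢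
    set u := c - ρ with hu
    set v := a - (u - b) with hvdef
    have hbu : b < u := h
    have huv : u < v := by simp only [hvdef, hu]; linarith
    have hva : v < a := by simp only [hvdef]; linarith
    have hvmem : v ∈ Set.Ici (0:ℝ) := Set.mem_Ici.mpr (by simp only [hvdef, hu]; linarith)
    have hs1 := hφc.slope_mono_adjacent (Set.mem_Ici.mpr hb) hvmem hbu huv
    have hs2 := hφc.slope_mono_adjacent (Set.mem_Ici.mpr (by linarith : (0:ℝ) ≤ u))
      (Set.mem_Ici.mpr ha0) huv hva
    have hchain : (φ u - φ b) / (u - b) ≤ (φ a - φ v) / (a - v) := le_trans hs1 hs2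
    have heq : a - v = u - b := by simp only [hvdef]; ring
    rw [heq] at hchain
    have hub : 0 < u - b := by linarith
    have hkey : φ u - φ b ≤ φ a - φ v := by
      have := (div_le_div_iff_of_pos_right hub).mp hchain
      linarith [this]
    have hφv : φ (c + ρ) ≤ φ v := hφm (Set.mem_Ici.mpr (by linarith)) hvmem
      (by simp only [hvdef, hu]; linarith)
    linarith

lemma phi_gap (hφ : StrictConvexOn ℝ (Set.Ici 0) φ) (hφm : MonotoneOn φ (Set.Ici 0))
    (hφ0 : φ 0 = 0) {c ρ : ℝ} (hc : 0 ≤ c) (hρ : 0 < ρ) :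
    2 * φ c < φ (c + ρ) + φ (max (c - ρ) 0) := by
  rcases le_or_gt ρ c with hcρ | hcρ
  · rw [max_eq_left (by linarith)]
    have h := hφ.2 (Set.mem_Ici.mpr (by linarith : (0:ℝ) ≤ c - ρ))
      (Set.mem_Ici.mpr (by linarith : (0:ℝ) ≤ c + ρ))
      (by intro hcon; nlinarith [hcon] : c - ρ ≠ c + ρ)
      (by norm_num : (0:ℝ) < 1/2) (by norm_num : (0:ℝ) < 1/2) (by norm_num)
    simp only [smul_eq_mul] at h
    have e : (1:ℝ)/2 * (c - ρ) + 1/2 * (c + ρ) = c := by ring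
    rw [e] at h
    linarith
  · rw [max_eq_right (by linarith), hφ0, add_zero]
    rcases eq_or_lt_of_le hc with hc0 | hc0
    · -- c = 0
      have h := hφ.2 (Set.mem_Ici.mpr le_rfl) (Set.mem_Ici.mpr hρ.le)
        (by intro hcon; exact hρ.ne hcon : (0:ℝ) ≠ ρ)
        (by norm_num : (0:ℝ) < 1/2) (by norm_num : (0:ℝ) < 1/2) (by norm_num)
      simp only [smul_eq_mul, hφ0] at h
      have hm : 0 ≤ φ (1/2 * 0 + 1/2 * ρ) := by
        rw [← hφ0]
        exact hφm (Set.mem_Ici.mpr le_rfl) (Set.mem_Ici.mpr (by linarith)) (by linarith)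
      rw [← hc0, hφ0]
      simp only [zero_add, mul_zero]
      linarith
    · -- 0 < c < ρ
      have hcρ0 : 0 < c + ρ := by linarith
      have hsum : ρ / (c + ρ) + c / (c + ρ) = 1 := by field_simp; ring
      have h := hφ.2 (Set.mem_Ici.mpr le_rfl) (Set.mem_Ici.mpr hcρ0.le)
        (by intro hcon; exact hcρ0.ne hcon : (0:ℝ) ≠ c + ρ)
        (div_pos hρ hcρ0) (div_pos hc0 hcρ0) hsum
      simp only [smul_eq_mul, hφ0, mul_zero, zero_add] at h
      rw [div_mul_cancel₀ _ hcρ0.ne'] at h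
      have hφpos : 0 ≤ φ (c + ρ) := by
        rw [← hφ0]
        exact hφm (Set.mem_Ici.mpr le_rfl) (Set.mem_Ici.mpr hcρ0.le) hcρ0.le
      have hq : c / (c + ρ) * 2 ≤ 1 := by
        rw [div_mul_eq_mul_div, div_le_one hcρ0]; linarith
      nlinarith [h, hφpos, hq]

end Aux

set_option maxHeartbeats 1000000 in
theorem stmt4 {Ω : Type*} [MeasurableSpace Ω] (P : Measure Ω) [IsProbabilityMeasure P]
    {X : Type*} [NormedAddCommGroup X] [NormedSpace ℝ X] [CompleteSpace X]
    (n : ℕ) (x : ℕ → X)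
    (r : ℕ → Ω → ℝ) (hmeas : ∀ i, Measurable (r i))
    (hindep : iIndepFun (m := fun _ => Real.measurableSpace) r P)
    (hsymm : ∀ i, Measure.map (r i) P = Measure.map (fun ω => -(r i ω)) P)
    (hnorm : ∀ i, eLpNorm (r i) ⊤ P = 1)
    (φ : ℝ → ℝ) (hφ : StrictConvexOn ℝ (Set.Ici 0) φ)
    (hφm : MonotoneOn φ (Set.Ici 0)) (hφ0 : φ 0 = 0)
    (ρ : ℝ) (hρ : 0 < ρ)
    (hx : ∃ ε : ℕ → ℝ, (∀ i, ε i = 1 ∨ ε i = -1) ∧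
      ‖x 1‖ + ρ ≤ ‖∑ i ∈ Finset.Icc 1 n, ε i • x i‖) :
    ∃ δ : ℝ, 0 < δ ∧
      φ ‖x 1‖ + δ ≤ ∫ ω, φ ‖x 1 + ∑ i ∈ Finset.Icc 2 n, r i ω • x i‖ ∂P := by
  classical
  obtain ⟨ε, hε, hεx⟩ := hx
  set c : ℝ := ‖x 1‖ with hc_def
  have hc : 0 ≤ c := norm_nonneg _
  rcases Nat.eq_zero_or_pos n with rfl | hn
  · exfalso
    rw [show Finset.Icc 1 0 = (∅ : Finset ℕ) from Finset.Icc_eq_empty (by omega)] at hεx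
    simp only [Finset.sum_empty, norm_zero] at hεx
    linarith
  -- normalize signs so that ε' 1 = 1
  set ε' : ℕ → ℝ := fun i => ε 1 * ε i with hε'def
  have hε'1 : ∀ i, ε' i = 1 ∨ ε' i = -1 := by
    intro i
    rcases hε 1 with h1 | h1 <;> rcases hε i with h2 | h2 <;> simp [hε'def, h1, h2]
  have hε'one : ε' 1 = 1 := by rcases hε 1 with h1 | h1 <;> simp [hε'def, h1]
  have h1mem : (1:ℕ) ∉ Finset.Icc 2 n := by simp
  have hsplit : Finset.Icc 1 n = insert 1 (Finset.Icc 2 n) := by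
    ext k; simp only [Finset.mem_Icc, Finset.mem_insert]; omega
  set v : X := ∑ i ∈ Finset.Icc 2 n, ε' i • x i with hv_def
  have hv : c + ρ ≤ ‖x 1 + v‖ := by
    have e1 : ∑ i ∈ Finset.Icc 1 n, ε' i • x i = ε 1 • ∑ i ∈ Finset.Icc 1 n, ε i • x i := by
      rw [Finset.smul_sum]
      exact Finset.sum_congr rfl fun i _ => (smul_smul (ε 1) (ε i) (x i)).symm
    have e2 : ‖∑ i ∈ Finset.Icc 1 n, ε' i • x i‖ = ‖∑ i ∈ Finset.Icc 1 n, ε i • x i‖ := by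
      rw [e1, norm_smul]
      rcases hε 1 with h1 | h1 <;> simp [h1]
    have e3 : ∑ i ∈ Finset.Icc 1 n, ε' i • x i = x 1 + v := by
      rw [hsplit, Finset.sum_insert h1mem, hε'one, one_smul]
    calc c + ρ ≤ ‖∑ i ∈ Finset.Icc 1 n, ε i • x i‖ := hεx
      _ = ‖∑ i ∈ Finset.Icc 1 n, ε' i • x i‖ := e2.symm
      _ = ‖x 1 + v‖ := by rw [e3]
  -- constants
  set K : ℝ := ∑ i ∈ Finset.Icc 2 n, ‖x i‖ with hK_def
  have hK : 0 ≤ K := Finset.sum_nonneg fun i _ => norm_nonneg _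
  set η : ℝ := ρ / (2 * (K + 1)) with hη_def
  have hη : 0 < η := div_pos hρ (by linarith)
  have hηK1 : η * (K + 1) = ρ / 2 := by
    rw [hη_def]; field_simp
  have hηK : η * K ≤ ρ / 2 := by nlinarith [hη]
  set δ0 : ℝ := (φ (c + ρ/2) + φ (max (c - ρ/2) 0) - 2 * φ c) / 2 with hδ0_def
  have hδ0 : 0 < δ0 := by
    have := phi_gap hφ hφm hφ0 hc (half_pos hρ)
    rw [hδ0_def]; linarith
  -- index type
  set s : Finset ℕ := Finset.Icc 2 n with hs_def
  set μm : ↥s → Measure ℝ := fun i => P.map (r i.1) with hμm_def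
  haveI hprob : ∀ i : ↥s, IsProbabilityMeasure (μm i) :=
    fun i => Measure.isProbabilityMeasure_map (hmeas i.1).aemeasurable
  set vec : Ω → (↥s → ℝ) := fun ω i => r i.1 ω with hvec_def
  have hvec : Measurable vec := measurable_pi_lambda _ fun i => hmeas i.1
  set ν : Measure (↥s → ℝ) := Measure.pi μm with hν_def
  haveI : IsProbabilityMeasure ν := by rw [hν_def]; infer_instance
  -- joint law is the product measure
  have hmapeq : ν = P.map vec := by
    rw [hν_def]
    refine Measure.pi_eq fun B hB => ?_
    rw [Measure.map_apply hvec (MeasurableSet.univ_pi hB)]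
    set sets : ℕ → Set ℝ := fun k => if h : k ∈ s then B ⟨k, h⟩ else Set.univ with hsets_def
    have hpre : vec ⁻¹' Set.univ.pi B = ⋂ k ∈ s, r k ⁻¹' sets k := by
      ext ω
      simp only [Set.mem_preimage, Set.mem_pi, Set.mem_univ, forall_true_left, Set.mem_iInter]
      constructor
      · intro h k hk
        simp only [hsets_def, dif_pos hk]
        exact h ⟨k, hk⟩
      · intro h i
        have := h i.1 i.2
        simpa only [hsets_def, dif_pos i.2] using this
    rw [hpre, hindep.measure_inter_preimage_eq_mul s
      (fun k hk => by
        simp only [hsets_def]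
        rw [dif_pos hk]
        exact hB _)]
    rw [← Finset.prod_attach s (fun k => P (r k ⁻¹' sets k)), ← Finset.univ_eq_attach]
    refine Finset.prod_congr rfl fun i _ => ?_
    rw [hμm_def]
    simp only
    rw [Measure.map_apply (hmeas i.1) (hB i)]
    congr 1
    simp only [hsets_def, dif_pos i.2]
  -- negation invariance
  have hnegpres : MeasurePreserving (fun t : ↥s → ℝ => -t) ν ν := by
    have hcomp : ∀ i : ↥s, MeasurePreserving (fun u : ℝ => -u) (μm i) (μm i) := by
      intro i
      refine ⟨measurable_neg, ?_⟩
      rw [hμm_def]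
      simp only
      rw [Measure.map_map measurable_neg (hmeas i.1)]
      exact ((hsymm i.1).symm : Measure.map (fun ω => -(r i.1 ω)) P = Measure.map (r i.1) P)
    have h := measurePreserving_pi μm μm hcomp
    rw [hν_def]
    convert h using 2
    rfl
  -- the function F
  set ψ : ℝ → ℝ := fun u => φ (max u 0) with hψ_def
  have hψmono : Monotone ψ := fun u w huw =>
    hφm (Set.mem_Ici.mpr (le_max_right _ _)) (Set.mem_Ici.mpr (le_max_right _ _))
      (max_le_max huw le_rfl)
  have hψφ : ∀ y : X, ψ ‖y‖ = φ ‖y‖ := fun y => by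
    simp only [hψ_def, max_eq_left (norm_nonneg y)]
  set w : (↥s → ℝ) → X := fun t => ∑ i : ↥s, t i • x i.1 with hw_def
  have hw_cont : Continuous w :=
    continuous_finset_sum _ fun i _ => (continuous_apply i).smul continuous_const
  set F : (↥s → ℝ) → ℝ := fun t => ψ ‖x 1 + w t‖ with hF_def
  have hF_meas : Measurable F :=
    hψmono.measurable.comp (continuous_norm.comp (continuous_const.add hw_cont)).measurable
  -- rewrite the integral on the product space
  have hwvec : ∀ ω, ∑ i ∈ Finset.Icc 2 n, r i ω • x i = w (vec ω) := by
    intro ω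
    rw [hw_def]
    exact (Finset.sum_coe_sort s (fun k => r k ω • x k)).symm
  have hinteq : ∫ ω, φ ‖x 1 + ∑ i ∈ Finset.Icc 2 n, r i ω • x i‖ ∂P = ∫ t, F t ∂ν := by
    rw [hmapeq, integral_map hvec.aemeasurable hF_meas.aestronglyMeasurable]
    refine integral_congr_ae (Filter.Eventually.of_forall fun ω => ?_)
    rw [hF_def]
    simp only
    rw [hψφ, hwvec ω]
  -- a.e. bounds on the r's
  have hone : ∀ k, ∀ᵐ ω ∂P, |r k ω| ≤ 1 := by
    intro k
    have h := ae_le_eLpNormEssSup (f := r k) (μ := P)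
    rw [← eLpNorm_exponent_top, hnorm k] at h
    filter_upwards [h] with ω hω
    have h1 : (‖r k ω‖₊ : ℝ≥0∞) ≤ 1 := hω
    rw [ENNReal.coe_le_one_iff] at h1
    rwa [← Real.norm_eq_abs, ← coe_nnnorm, ← NNReal.coe_one, NNReal.coe_le_coe]
  have honeC : ∀ k, P {ω | |r k ω| ≤ 1}ᶜ = 0 := by
    intro k
    rw [Set.compl_setOf]
    exact ae_iff.mp (hone k)
  have hboxP : ∀ k, P (r k ⁻¹' Set.Icc (-1:ℝ) 1) = 1 := by
    intro k
    rw [← prob_compl_eq_zero_iff ((hmeas k) measurableSet_Icc)]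
    have h' : ∀ᵐ ω ∂P, r k ω ∈ Set.Icc (-1:ℝ) 1 := by
      filter_upwards [hone k] with ω hω
      exact Set.mem_Icc.mpr (abs_le.mp hω)
    have := ae_iff.mp h'
    rw [Set.compl_def]
    simpa using this
  have haebox : ∀ᵐ t ∂ν, ∀ i : ↥s, |t i| ≤ 1 := by
    have hmeasB : MeasurableSet (Set.univ.pi fun _ : ↥s => Set.Icc (-1:ℝ) 1) :=
      MeasurableSet.univ_pi fun _ => measurableSet_Icc
    have hbox : ν (Set.univ.pi fun _ : ↥s => Set.Icc (-1:ℝ) 1) = 1 := by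
      rw [hν_def, Measure.pi_pi]
      refine Finset.prod_eq_one fun i _ => ?_
      rw [hμm_def]
      simp only
      rw [Measure.map_apply (hmeas i.1) measurableSet_Icc]
      exact hboxP i.1
    have h0 : ν (Set.univ.pi fun _ : ↥s => Set.Icc (-1:ℝ) 1)ᶜ = 0 :=
      (prob_compl_eq_zero_iff hmeasB).mpr hbox
    rw [ae_iff]
    refine measure_mono_null ?_ h0
    intro t ht
    simp only [Set.mem_setOf_eq, not_forall] at ht
    obtain ⟨i, hi⟩ := ht
    simp only [Set.mem_compl_iff, Set.mem_pi, Set.mem_univ, forall_true_left, Set.mem_Icc,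
      not_forall]
    exact ⟨i, fun hcon => hi (abs_le.mpr hcon)⟩
  -- the key event A
  set B : ↥s → Set ℝ := fun i => Set.Icc (ε' i.1 - η) (ε' i.1 + η) with hB_def
  set A : Set (↥s → ℝ) := Set.univ.pi B with hA_def
  have hAmeas : MeasurableSet A := MeasurableSet.univ_pi fun i => measurableSet_Icc
  have hApos : 0 < ν A := by
    rw [hA_def, hν_def, Measure.pi_pi]
    refine CanonicallyOrderedAdd.prod_pos.mpr fun i _ => ?_
    have hTT' : P {ω | r i.1 ω ≤ -(1 - η)} = P {ω | 1 - η ≤ r i.1 ω} := by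
      have h1 : P {ω | r i.1 ω ≤ -(1 - η)} = (P.map (r i.1)) (Set.Iic (-(1 - η))) := by
        rw [Measure.map_apply (hmeas i.1) measurableSet_Iic]
        rfl
      rw [h1, hsymm i.1, Measure.map_apply (f := fun ω => -r i.1 ω) ((hmeas i.1).neg) measurableSet_Iic]
      congr 1
      ext ω
      simp only [Set.mem_preimage, Set.mem_Iic, Set.mem_setOf_eq, neg_le_neg_iff]
    have hT : 0 < P {ω | 1 - η ≤ r i.1 ω} := by
      by_contra hT0
      push_neg at hT0
      have hT0' : P {ω | 1 - η ≤ r i.1 ω} = 0 := le_antisymm hT0 zero_le'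
      have hT0'' : P {ω | r i.1 ω ≤ -(1 - η)} = 0 := by rw [hTT']; exact hT0'
      rcases lt_or_ge η 1 with hη1 | hη1
      · have hae1 : ∀ᵐ ω ∂P, ¬ (1 - η ≤ r i.1 ω) := by
          rw [ae_iff]; simpa using hT0'
        have hae2 : ∀ᵐ ω ∂P, ¬ (r i.1 ω ≤ -(1 - η)) := by
          rw [ae_iff]; simpa using hT0''
        have haebd : ∀ᵐ ω ∂P, ‖r i.1 ω‖ ≤ 1 - η := by
          filter_upwards [hae1, hae2] with ω h1 h2
          push_neg at h1 h2
          rw [Real.norm_eq_abs, abs_le]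
          constructor <;> linarith
        have hle := eLpNormEssSup_le_of_ae_bound haebd
        rw [← eLpNorm_exponent_top, hnorm i.1] at hle
        have hcon : (1:ℝ≥0∞) < 1 :=
          lt_of_le_of_lt hle (ENNReal.ofReal_lt_one.mpr (by linarith))
        exact absurd hcon (lt_irrefl _)
      · have huniv : {ω | 1 - η ≤ r i.1 ω} ∪ {ω | r i.1 ω ≤ -(1 - η)} = Set.univ := by
          ext ω
          simp only [Set.mem_union, Set.mem_setOf_eq, Set.mem_univ, iff_true]
          rcases le_or_gt (1 - η) (r i.1 ω) with h | h
          · exact Or.inl h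
          · exact Or.inr (by linarith)
        have hb := measure_union_le (μ := P) {ω | 1 - η ≤ r i.1 ω} {ω | r i.1 ω ≤ -(1 - η)}
        rw [huniv, measure_univ, hT0', hT0''] at hb
        simpa using hb
    have hT' : 0 < P {ω | r i.1 ω ≤ -(1 - η)} := by rw [hTT']; exact hT
    rw [hμm_def]
    simp only
    rw [Measure.map_apply (hmeas i.1) measurableSet_Icc]
    rcases hε'1 i.1 with he | he
    · refine lt_of_lt_of_le hT ?_
      rw [← measure_inter_conull (s := {ω | 1 - η ≤ r i.1 ω})
        (t := {ω | |r i.1 ω| ≤ 1}) (honeC i.1)]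
      refine measure_mono ?_
      intro ω hω
      obtain ⟨h1, h2⟩ := hω
      simp only [Set.mem_setOf_eq] at h1
      have h3 := abs_le.mp (Set.mem_setOf_eq ▸ h2)
      simp only [Set.mem_preimage, hB_def, Set.mem_Icc, he]
      constructor <;> linarith [h3.1, h3.2]
    · refine lt_of_lt_of_le hT' ?_
      rw [← measure_inter_conull (s := {ω | r i.1 ω ≤ -(1 - η)})
        (t := {ω | |r i.1 ω| ≤ 1}) (honeC i.1)]
      refine measure_mono ?_
      intro ω hω
      obtain ⟨h1, h2⟩ := hω
      simp only [Set.mem_setOf_eq] at h1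
      have h3 := abs_le.mp (Set.mem_setOf_eq ▸ h2)
      simp only [Set.mem_preimage, hB_def, Set.mem_Icc, he]
      constructor <;> linarith [h3.1, h3.2]
  -- pointwise estimates
  have hwneg : ∀ t, w (-t) = -(w t) := by
    intro t
    rw [hw_def]
    simp only [Pi.neg_apply, neg_smul]
    exact Finset.sum_neg_distrib _
  have hF0 : ∀ t, 0 ≤ F t := by
    intro t
    rw [hF_def]
    simp only
    rw [← hφ0]
    exact hφm (Set.mem_Ici.mpr le_rfl) (Set.mem_Ici.mpr (le_max_right _ _)) (le_max_right _ _)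
  have hpoint : ∀ t, 2 * φ c + A.indicator (fun _ => 2 * δ0) t ≤ F t + F (-t) := by
    intro t
    have haF : F t = φ ‖x 1 + w t‖ := hψφ _
    have hbF : F (-t) = φ ‖x 1 - w t‖ := by
      rw [hF_def]
      simp only
      rw [hwneg t, ← sub_eq_add_neg]
      exact hψφ _
    have hab : 2 * c ≤ ‖x 1 + w t‖ + ‖x 1 - w t‖ := by
      have e : (x 1 + w t) + (x 1 - w t) = (2:ℝ) • x 1 := by
        rw [two_smul]; abel
      calc 2 * c = ‖(2:ℝ) • x 1‖ := by
            rw [norm_smul, hc_def]; simp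
        _ = ‖(x 1 + w t) + (x 1 - w t)‖ := by rw [e]
        _ ≤ ‖x 1 + w t‖ + ‖x 1 - w t‖ := norm_add_le _ _
    by_cases htA : t ∈ A
    · rw [Set.indicator_of_mem htA]
      have hti : ∀ i : ↥s, |t i - ε' i.1| ≤ η := by
        intro i
        have := htA i (Set.mem_univ i)
        rw [hB_def] at this
        simp only [Set.mem_Icc] at this
        rw [abs_le]
        constructor <;> linarith [this.1, this.2]
      have hvcoe : v = ∑ i : ↥s, ε' i.1 • x i.1 :=
        (Finset.sum_coe_sort s (fun k => ε' k • x k)).symm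
      have hKcoe : K = ∑ i : ↥s, ‖x i.1‖ :=
        (Finset.sum_coe_sort s (fun k => ‖x k‖)).symm
      have hwv : ‖w t - v‖ ≤ ρ / 2 := by
        have e : w t - v = ∑ i : ↥s, (t i - ε' i.1) • x i.1 := by
          rw [hw_def, hvcoe, ← Finset.sum_sub_distrib]
          exact Finset.sum_congr rfl fun i _ => (sub_smul _ _ _).symm
        calc ‖w t - v‖ = ‖∑ i : ↥s, (t i - ε' i.1) • x i.1‖ := by rw [e]
          _ ≤ ∑ i : ↥s, ‖(t i - ε' i.1) • x i.1‖ := norm_sum_le _ _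
          _ = ∑ i : ↥s, |t i - ε' i.1| * ‖x i.1‖ := by
              refine Finset.sum_congr rfl fun i _ => ?_
              rw [norm_smul, Real.norm_eq_abs]
          _ ≤ ∑ i : ↥s, η * ‖x i.1‖ :=
              Finset.sum_le_sum fun i _ =>
                mul_le_mul_of_nonneg_right (hti i) (norm_nonneg _)
          _ = η * K := by rw [← Finset.mul_sum, hKcoe]
          _ ≤ ρ / 2 := hηK
      have ha : c + ρ / 2 ≤ ‖x 1 + w t‖ := by
        have e : x 1 + v = (x 1 + w t) - (w t - v) := by abel
        have h1 : ‖x 1 + v‖ ≤ ‖x 1 + w t‖ + ‖w t - v‖ := by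
          rw [e]
          exact norm_sub_le _ _
        linarith [hv, hwv]
      have key := phi_transfer hφ.convexOn hφm hc (half_pos hρ) (norm_nonneg (x 1 - w t)) ha hab
      rw [haF, hbF, hδ0_def]
      linarith [key]
    · rw [Set.indicator_of_notMem htA, add_zero, haF, hbF]
      exact phi_base hφ.convexOn hφm hc (norm_nonneg _) (norm_nonneg _) hab
  -- integrability
  have hKnorm : ∀ᵐ t ∂ν, ‖F t‖ ≤ ψ (c + K) := by
    filter_upwards [haebox] with t ht
    have hKcoe : K = ∑ i : ↥s, ‖x i.1‖ :=
      (Finset.sum_coe_sort s (fun k => ‖x k‖)).symm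
    have h1 : ‖x 1 + w t‖ ≤ c + K := by
      calc ‖x 1 + w t‖ ≤ ‖x 1‖ + ‖w t‖ := norm_add_le _ _
        _ ≤ c + K := by
            refine add_le_add le_rfl ?_
            rw [hw_def, hKcoe]
            refine le_trans (norm_sum_le _ _) (Finset.sum_le_sum fun i _ => ?_)
            rw [norm_smul, Real.norm_eq_abs]
            calc |t i| * ‖x i.1‖ ≤ 1 * ‖x i.1‖ :=
                  mul_le_mul_of_nonneg_right (ht i) (norm_nonneg _)
              _ = ‖x i.1‖ := one_mul _
    rw [Real.norm_eq_abs, abs_of_nonneg (hF0 t)]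
    exact hψmono h1
  have hFint : Integrable F ν :=
    (integrable_const (ψ (c + K))).mono' hF_meas.aestronglyMeasurable hKnorm
  have hFneg_meas : Measurable (fun t : ↥s → ℝ => F (-t)) :=
    hF_meas.comp measurable_neg
  have hFneg_int : Integrable (fun t => F (-t)) ν := by
    have h := (hnegpres.integrable_comp hF_meas.aestronglyMeasurable).mpr hFint
    exact h
  have hsymint : ∫ t, F t ∂ν = ∫ t, F (-t) ∂ν := by
    conv_lhs => rw [← hnegpres.map_eq]
    rw [integral_map measurable_neg.aemeasurable]
    rw [hnegpres.map_eq]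
    exact hF_meas.aestronglyMeasurable
  -- conclusion
  have hνA_ne_top : ν A ≠ ⊤ := measure_ne_top ν A
  refine ⟨δ0 * (ν A).toReal, mul_pos hδ0 (ENNReal.toReal_pos hApos.ne' hνA_ne_top), ?_⟩
  rw [hinteq]
  have hGint : Integrable (fun t => φ c + A.indicator (fun _ => δ0) t) ν :=
    (integrable_const _).add ((integrable_const δ0).indicator hAmeas)
  have hhalf : ∫ t, F t ∂ν = ∫ t, (F t + F (-t)) / 2 ∂ν := by
    rw [integral_div, integral_add hFint hFneg_int, ← hsymint]
    ring
  rw [hhalf]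
  have hle : ∀ t, φ c + A.indicator (fun _ => δ0) t ≤ (F t + F (-t)) / 2 := by
    intro t
    have h := hpoint t
    by_cases htA : t ∈ A
    · rw [Set.indicator_of_mem htA] at h ⊢
      linarith
    · rw [Set.indicator_of_notMem htA] at h ⊢
      linarith
  calc φ c + δ0 * (ν A).toReal
      = ∫ t, (φ c + A.indicator (fun _ => δ0) t) ∂ν := by
        rw [integral_add (integrable_const _) ((integrable_const δ0).indicator hAmeas),
          integral_const, measureReal_def, measure_univ, ENNReal.toReal_one, one_smul,
          integral_indicator hAmeas, setIntegral_const, measureReal_def, smul_eq_mul, mul_comm]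
    _ ≤ ∫ t, (F t + F (-t)) / 2 ∂ν :=
        integral_mono hGint ((hFint.add hFneg_int).div_const 2) hle
end

section
/- Let X be a real Banach space and n ≥ 2. If for every ρ > 0 there exist unit vectors x_1,...,x_n in X such that ‖ε_1 x_1 + ... + ε_n x_n‖ < 1 + ρ for all sign choices ε_i = ±1, then ℓ_∞^n is representable in X. -/
/-- Box lemma: if the norm of every sign combination is ≤ C, then the norm of every
combination with coefficients in [-1,1] is ≤ C. -/
lemma aux_box {X : Type*} [NormedAddCommGroup X] [NormedSpace ℝ X] {n : ℕ}
    (x : Fin n → X) (C : ℝ)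
    (hC : ∀ ε : Fin n → ℝ, (∀ i, ε i = 1 ∨ ε i = -1) → ‖∑ i, ε i • x i‖ ≤ C)
    (s : Finset (Fin n)) :
    ∀ l : Fin n → ℝ, (∀ i, |l i| ≤ 1) → (∀ i ∉ s, l i = 1 ∨ l i = -1) →
      ‖∑ i, l i • x i‖ ≤ C := by
  induction s using Finset.induction with
  | empty =>
    intro l _ h2
    exact hC l (fun i => h2 i (Finset.notMem_empty i))
  | @insert a s ha ih =>
    intro l hl hl2
    set t : ℝ := (1 + l a) / 2 with ht
    have hla := hl a
    have hla1 : -1 ≤ l a := (abs_le.mp hla).1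
    have hla2 : l a ≤ 1 := (abs_le.mp hla).2
    have ht0 : 0 ≤ t := by rw [ht]; linarith
    have ht1 : t ≤ 1 := by rw [ht]; linarith
    set l1 := Function.update l a 1 with hl1def
    set l2 := Function.update l a (-1) with hl2def
    have h1 : ‖∑ i, l1 i • x i‖ ≤ C := by
      refine ih l1 ?_ ?_
      · intro i
        by_cases hi : i = a
        · subst hi; simp [hl1def]
        · simp [hl1def, Function.update_of_ne hi]; exact hl i
      · intro i hi
        by_cases hia : i = a
        · subst hia; left; simp [hl1def]
        · rw [hl1def, Function.update_of_ne hia]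
          exact hl2 i (by simp [hia, hi])
    have h2 : ‖∑ i, l2 i • x i‖ ≤ C := by
      refine ih l2 ?_ ?_
      · intro i
        by_cases hi : i = a
        · subst hi; simp [hl2def]
        · simp [hl2def, Function.update_of_ne hi]; exact hl i
      · intro i hi
        by_cases hia : i = a
        · subst hia; right; simp [hl2def]
        · rw [hl2def, Function.update_of_ne hia]
          exact hl2 i (by simp [hia, hi])
    have hdecomp : ∑ i, l i • x i = t • ∑ i, l1 i • x i + (1 - t) • ∑ i, l2 i • x i := by
      rw [Finset.smul_sum, Finset.smul_sum, ← Finset.sum_add_distrib]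
      refine Finset.sum_congr rfl fun i _ => ?_
      rw [smul_smul, smul_smul, ← add_smul]
      congr 1
      by_cases hia : i = a
      · subst hia
        simp only [hl1def, hl2def, Function.update_self]
        rw [ht]; ring
      · rw [hl1def, hl2def, Function.update_of_ne hia, Function.update_of_ne hia]
        ring
    rw [hdecomp]
    calc ‖t • ∑ i, l1 i • x i + (1 - t) • ∑ i, l2 i • x i‖
        ≤ ‖t • ∑ i, l1 i • x i‖ + ‖(1 - t) • ∑ i, l2 i • x i‖ := norm_add_le _ _
      _ = t * ‖∑ i, l1 i • x i‖ + (1 - t) * ‖∑ i, l2 i • x i‖ := by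
          rw [norm_smul, norm_smul, Real.norm_eq_abs, Real.norm_eq_abs,
            abs_of_nonneg ht0, abs_of_nonneg (by linarith)]
      _ ≤ t * C + (1 - t) * C :=
          add_le_add (mul_le_mul_of_nonneg_left h1 ht0)
            (mul_le_mul_of_nonneg_left h2 (by linarith))
      _ = C := by ring

theorem stmt6 {X : Type*} [NormedAddCommGroup X] [NormedSpace ℝ X] [CompleteSpace X]
    (n : ℕ) (hn : 2 ≤ n)
    (h : ∀ ρ : ℝ, 0 < ρ → ∃ x : Fin n → X, (∀ i, ‖x i‖ = 1) ∧
      ∀ ε : Fin n → ℝ, (∀ i, ε i = 1 ∨ ε i = -1) → ‖∑ i, ε i • x i‖ < 1 + ρ) :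
    ∀ lam : ℝ, 1 < lam → ∃ T : (Fin n → ℝ) →L[ℝ] X,
      ∀ v, ‖v‖ ≤ ‖T v‖ ∧ ‖T v‖ ≤ lam * ‖v‖ := by
  intro lam hlam
  set ρ : ℝ := (lam - 1) / (lam + 1) with hρdef
  have hlam1 : (0:ℝ) < lam + 1 := by linarith
  have hρ0 : 0 < ρ := div_pos (by linarith) hlam1
  have hρ1 : ρ < 1 := by rw [hρdef, div_lt_one hlam1]; linarith
  obtain ⟨x, hx1, hxs⟩ := h ρ hρ0
  have hC : ∀ ε : Fin n → ℝ, (∀ i, ε i = 1 ∨ ε i = -1) → ‖∑ i, ε i • x i‖ ≤ 1 + ρ :=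
    fun ε hε => (hxs ε hε).le
  have hbox : ∀ l : Fin n → ℝ, (∀ i, |l i| ≤ 1) → ‖∑ i, l i • x i‖ ≤ 1 + ρ := by
    intro l hl
    exact aux_box x (1 + ρ) hC Finset.univ l hl (fun i hi => absurd (Finset.mem_univ i) hi)
  -- upper bound for general v
  have key : ∀ v : Fin n → ℝ, ‖∑ i, v i • x i‖ ≤ (1 + ρ) * ‖v‖ := by
    intro v
    rcases eq_or_ne v 0 with rfl | hv
    · simp
    · have hvpos : 0 < ‖v‖ := norm_pos_iff.mpr hv
      set u : Fin n → ℝ := fun i => ‖v‖⁻¹ * v i with hudef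
      have hu : ∀ i, |u i| ≤ 1 := by
        intro i
        rw [hudef]
        rw [abs_mul, abs_inv, abs_norm, inv_mul_le_iff₀ hvpos, mul_one]
        exact norm_le_pi_norm v i
      have hsum : ∑ i, v i • x i = ‖v‖ • ∑ i, u i • x i := by
        rw [Finset.smul_sum]
        refine Finset.sum_congr rfl fun i _ => ?_
        rw [smul_smul, hudef]
        congr 1
        field_simp
      rw [hsum, norm_smul, Real.norm_eq_abs, abs_norm, mul_comm]
      gcongr
      exact hbox u hu
  -- lower bound
  have lower : ∀ v : Fin n → ℝ, (1 - ρ) * ‖v‖ ≤ ‖∑ i, v i • x i‖ := by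
    intro v
    rcases eq_or_ne v 0 with rfl | hv
    · simp
    · obtain ⟨i, -, hi⟩ := Finset.exists_max_image Finset.univ (fun j => |v j|)
        ⟨⟨0, by omega⟩, Finset.mem_univ _⟩
      have hvi : ‖v‖ = |v i| := by
        refine le_antisymm ?_ ?_
        · apply pi_norm_le_iff_of_nonneg (abs_nonneg _) |>.mpr
          intro j
          exact hi j (Finset.mem_univ j)
        · exact norm_le_pi_norm v i
      set w : Fin n → ℝ := Function.update v i (-(v i)) with hwdef
      have hw : ‖w‖ ≤ ‖v‖ := by
        apply pi_norm_le_iff_of_nonneg (norm_nonneg v) |>.mpr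
        intro j
        by_cases hj : j = i
        · subst hj
          rw [hwdef, Function.update_self, Real.norm_eq_abs, abs_neg, ← hvi]
        · rw [hwdef, Function.update_of_ne hj]
          exact norm_le_pi_norm v j
      have hdiff : (∑ j, v j • x j) - ∑ j, w j • x j = (2 * v i) • x i := by
        rw [← Finset.sum_sub_distrib]
        rw [Finset.sum_eq_single i]
        · rw [hwdef, Function.update_self, ← sub_smul]
          congr 1; ring
        · intro j _ hj
          rw [hwdef, Function.update_of_ne hj, sub_self]
        · intro hni; exact absurd (Finset.mem_univ i) hni
      have h2vi : ‖(2 * v i) • x i‖ = 2 * |v i| := by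
        rw [norm_smul, Real.norm_eq_abs, hx1 i, mul_one, abs_mul]
        norm_num
      have hwx : ‖∑ j, w j • x j‖ ≤ (1 + ρ) * ‖v‖ :=
        (key w).trans (by nlinarith [norm_nonneg w])
      have htri : ‖(2 * v i) • x i‖ ≤ ‖∑ j, v j • x j‖ + ‖∑ j, w j • x j‖ := by
        rw [← hdiff]; exact norm_sub_le _ _
      rw [h2vi, ← hvi] at htri
      linarith
  -- build the map
  have hρne : (1 : ℝ) - ρ > 0 := by linarith
  set c : ℝ := (1 - ρ)⁻¹ with hcdef
  have hc0 : 0 < c := inv_pos.mpr hρne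
  set L : (Fin n → ℝ) →ₗ[ℝ] X :=
    { toFun := fun v => ∑ i, v i • x i
      map_add' := by
        intro v w
        simp [add_smul, Finset.sum_add_distrib]
      map_smul' := by
        intro r v
        simp [Finset.smul_sum, smul_smul] } with hLdef
  refine ⟨c • LinearMap.toContinuousLinearMap L, ?_⟩
  intro v
  have hTv : (c • LinearMap.toContinuousLinearMap L) v = c • ∑ i, v i • x i := by
    simp [hLdef]
  rw [hTv, norm_smul, Real.norm_eq_abs, abs_of_pos hc0]
  constructor
  · have := lower v
    calc ‖v‖ = c * ((1 - ρ) * ‖v‖) := by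
          rw [hcdef]; field_simp
      _ ≤ c * ‖∑ i, v i • x i‖ := by gcongr
  · calc c * ‖∑ i, v i • x i‖ ≤ c * ((1 + ρ) * ‖v‖) := by gcongr; exact key v
      _ = lam * ‖v‖ := by
          rw [hcdef, hρdef]
          field_simp
          ring
end

section
/- Let X be a real Banach space, 1 < p < ∞, n ≥ 2, and (M, 𝔐, μ) a measure space containing a measurable set A with 0 < μ(A) < ∞. Then ℓ_∞^n is representable in X if and only if ℓ_∞^n is representable in the Lebesgue–Bochner space L_p(M, μ; X). -/
open MeasureTheory

/-- `Y` is representable in `Z`: for each `λ > 1` there is a bounded linear map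
`T : Y → Z` with `‖y‖ ≤ ‖Ty‖ ≤ λ‖y‖` for all `y`. -/
def Representable (Y Z : Type*) [NormedAddCommGroup Y] [NormedSpace ℝ Y]
    [NormedAddCommGroup Z] [NormedSpace ℝ Z] : Prop :=
  ∀ lam : ℝ, 1 < lam → ∃ T : Y →L[ℝ] Z, ∀ y, ‖y‖ ≤ ‖T y‖ ∧ ‖T y‖ ≤ lam * ‖y‖

namespace Stmt8Aux
open Finset
set_option linter.unusedSectionVars false
set_option maxHeartbeats 1000000

section
variable {X : Type*} [NormedAddCommGroup X] [NormedSpace ℝ X]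
variable {X : Type*} [NormedAddCommGroup X] [NormedSpace ℝ X]

lemma norm_add_smul_le (v w : X) {t b : ℝ} (ht : |t| ≤ 1)
    (h1 : ‖v + w‖ ≤ b) (h2 : ‖v - w‖ ≤ b) : ‖v + t • w‖ ≤ b := by
  obtain ⟨ht1, ht2⟩ := abs_le.mp ht
  have hd : v + t • w = ((1+t)/2) • (v + w) + ((1-t)/2) • (v - w) := by
    rw [smul_add, smul_sub]; module
  have hb : 0 ≤ b := le_trans (norm_nonneg _) h1
  calc ‖v + t • w‖ ≤ ‖((1+t)/2) • (v + w)‖ + ‖((1-t)/2) • (v - w)‖ := by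
        rw [hd]; exact norm_add_le _ _
    _ = ((1+t)/2) * ‖v + w‖ + ((1-t)/2) * ‖v - w‖ := by
        rw [norm_smul, norm_smul, Real.norm_eq_abs, Real.norm_eq_abs,
          abs_of_nonneg (by linarith), abs_of_nonneg (by linarith)]
    _ ≤ ((1+t)/2) * b + ((1-t)/2) * b := by
        gcongr <;> linarith
    _ = b := by ring

lemma cube_bound {ι : Type*} [DecidableEq ι] (x : ι → X) {b : ℝ} :
    ∀ (s : Finset ι) (c : X),
      (∀ θ : ι → ℝ, (∀ i, θ i = 1 ∨ θ i = -1) → ‖c + ∑ i ∈ s, θ i • x i‖ ≤ b) →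
      ∀ y : ι → ℝ, (∀ i, |y i| ≤ 1) → ‖c + ∑ i ∈ s, y i • x i‖ ≤ b := by
  intro s
  induction s using Finset.cons_induction with
  | empty =>
    intro c h y _
    simpa using h (fun _ => 1) (fun _ => Or.inl rfl)
  | cons a s ha ih =>
    intro c h y hy
    have step : ∀ e : ℝ, e = 1 ∨ e = -1 →
        ‖(c + e • x a) + ∑ i ∈ s, y i • x i‖ ≤ b := by
      intro e he
      refine ih (c + e • x a) ?_ y hy
      intro θ hθ
      have := h (Function.update θ a e) ?_
      · have hsum : ∑ i ∈ Finset.cons a s ha, Function.update θ a e i • x i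
            = e • x a + ∑ i ∈ s, θ i • x i := by
          rw [Finset.sum_cons]
          congr 1
          · rw [Function.update_self]
          · exact Finset.sum_congr rfl fun i hi => by
              have hia : i ≠ a := fun hia => ha (hia ▸ hi)
              rw [Function.update_of_ne hia]
        rw [hsum, ← add_assoc] at this
        exact this
      · intro i
        rcases eq_or_ne i a with rfl | hia
        · rw [Function.update_self]; exact he
        · rw [Function.update_of_ne hia]; exact hθ i
    have h1 : ‖(c + ∑ i ∈ s, y i • x i) + x a‖ ≤ b := by
      have := step 1 (Or.inl rfl)
      rw [one_smul] at this
      calc ‖(c + ∑ i ∈ s, y i • x i) + x a‖ = ‖(c + x a) + ∑ i ∈ s, y i • x i‖ := by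
            rw [add_right_comm]
        _ ≤ b := by simpa using this
    have h2 : ‖(c + ∑ i ∈ s, y i • x i) - x a‖ ≤ b := by
      have := step (-1) (Or.inr rfl)
      rw [neg_one_smul] at this
      calc ‖(c + ∑ i ∈ s, y i • x i) - x a‖ = ‖(c + -x a) + ∑ i ∈ s, y i • x i‖ := by
            rw [sub_eq_add_neg, add_right_comm]
        _ ≤ b := this
    have := norm_add_smul_le (c + ∑ i ∈ s, y i • x i) (x a) (hy a) h1 h2
    rw [Finset.sum_cons, ← add_assoc, add_right_comm] at *
    convert this using 2
    abel


lemma exists_clm {n : ℕ} (hn : 0 < n) (x : Fin n → X) {m b lam : ℝ} (hm : 0 < m)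
    (hb2 : b < 2 * m) (hlam : b ≤ lam * (2 * m - b))
    (hlow : ∀ i, m ≤ ‖x i‖)
    (hup : ∀ θ : Fin n → ℝ, (∀ i, θ i = 1 ∨ θ i = -1) → ‖∑ i, θ i • x i‖ ≤ b) :
    ∃ T : (Fin n → ℝ) →L[ℝ] X, ∀ y, ‖y‖ ≤ ‖T y‖ ∧ ‖T y‖ ≤ lam * ‖y‖ := by
  haveI : Nonempty (Fin n) := ⟨⟨0, hn⟩⟩
  set T0 : (Fin n → ℝ) →L[ℝ] X :=
    ∑ i, (ContinuousLinearMap.proj (R := ℝ) (φ := fun _ : Fin n => ℝ) i).smulRight (x i) with hT0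
  have hT0app : ∀ y : Fin n → ℝ, T0 y = ∑ i, y i • x i := by
    intro y
    simp [hT0, ContinuousLinearMap.sum_apply]
  -- upper bound for T0
  have hupper : ∀ y : Fin n → ℝ, ‖T0 y‖ ≤ b * ‖y‖ := by
    intro y
    rcases eq_or_ne y 0 with rfl | hy0
    · simp
    have hyn : 0 < ‖y‖ := norm_pos_iff.mpr hy0
    have hz : ∀ i, |(‖y‖⁻¹ • y) i| ≤ 1 := by
      intro i
      have : |y i| ≤ ‖y‖ := norm_le_pi_norm y i
      rw [Pi.smul_apply, smul_eq_mul, abs_mul, abs_of_nonneg (inv_nonneg.mpr hyn.le)]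
      rw [inv_mul_le_iff₀ hyn, mul_one]
      exact this
    have := cube_bound x Finset.univ 0 (fun θ hθ => by simpa using hup θ hθ) (‖y‖⁻¹ • y) hz
    rw [zero_add] at this
    have heq : ∑ i, y i • x i = ‖y‖ • ∑ i, (‖y‖⁻¹ • y) i • x i := by
      rw [Finset.smul_sum]
      refine Finset.sum_congr rfl fun i _ => ?_
      rw [smul_smul, Pi.smul_apply, smul_eq_mul, ← mul_assoc,
        mul_inv_cancel₀ hyn.ne', one_mul]
    rw [hT0app, heq, norm_smul, Real.norm_eq_abs, abs_of_pos hyn, mul_comm]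
    exact mul_le_mul_of_nonneg_right this hyn.le
  -- lower bound for T0
  have hb0 : 0 ≤ b := le_trans (norm_nonneg _) (hup (fun _ => 1) (fun _ => Or.inl rfl))
  have hlower : ∀ y : Fin n → ℝ, (2 * m - b) * ‖y‖ ≤ ‖T0 y‖ := by
    intro y
    obtain ⟨i₀, -, hi₀⟩ := Finset.exists_max_image Finset.univ (fun i => |y i|)
      Finset.univ_nonempty
    have hni : ‖y‖ = |y i₀| := by
      refine le_antisymm ?_ (norm_le_pi_norm y i₀)
      exact pi_norm_le_iff_of_nonneg (abs_nonneg _) |>.mpr fun i => hi₀ i (Finset.mem_univ i)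
    set y' := Function.update y i₀ (-(y i₀)) with hy'
    have hy'n : ‖y'‖ = ‖y‖ := by
      have habs : ∀ i, |y' i| = |y i| := by
        intro i
        rcases eq_or_ne i i₀ with rfl | hi
        · rw [hy', Function.update_self, abs_neg]
        · rw [hy', Function.update_of_ne hi]
      refine le_antisymm ?_ ?_
      · rw [hni]
        exact pi_norm_le_iff_of_nonneg (abs_nonneg _) |>.mpr
          fun i => (habs i).le.trans (hi₀ i (Finset.mem_univ i))
      · rw [hni, ← abs_neg (y i₀)]
        have : -(y i₀) = y' i₀ := by rw [hy', Function.update_self]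
        rw [this]
        exact norm_le_pi_norm y' i₀
    have hdiff : T0 y - T0 y' = (2 * y i₀) • x i₀ := by
      rw [hT0app, hT0app, ← Finset.sum_sub_distrib]
      rw [Finset.sum_eq_single i₀]
      · rw [hy', Function.update_self, ← sub_smul]; ring_nf
      · intro i _ hi
        rw [hy', Function.update_of_ne hi, sub_self]
      · intro h; exact absurd (Finset.mem_univ i₀) h
    have h2 : 2 * |y i₀| * m ≤ ‖T0 y‖ + b * ‖y‖ := by
      have : ‖T0 y - T0 y'‖ ≤ ‖T0 y‖ + ‖T0 y'‖ := norm_sub_le _ _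
      rw [hdiff, norm_smul, Real.norm_eq_abs, abs_mul, abs_two] at this
      have hx0 : m ≤ ‖x i₀‖ := hlow i₀
      nlinarith [hupper y', norm_nonneg (T0 y'), hy'n, abs_nonneg (y i₀)]
    rw [hni]
    nlinarith [h2]
  have hpos : 0 < 2 * m - b := by linarith
  refine ⟨(2 * m - b)⁻¹ • T0, fun y => ?_⟩
  have happ : ‖((2 * m - b)⁻¹ • T0) y‖ = (2 * m - b)⁻¹ * ‖T0 y‖ := by
    rw [ContinuousLinearMap.smul_apply, norm_smul, Real.norm_eq_abs,
      abs_of_pos (inv_pos.mpr hpos)]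
  constructor
  · rw [happ, le_inv_mul_iff₀ hpos]
    exact hlower y
  · rw [happ, inv_mul_le_iff₀ hpos]
    calc ‖T0 y‖ ≤ b * ‖y‖ := hupper y
      _ ≤ (lam * (2 * m - b)) * ‖y‖ := mul_le_mul_of_nonneg_right hlam (norm_nonneg _)
      _ = (2 * m - b) * (lam * ‖y‖) := by ring
variable {X : Type*} [NormedAddCommGroup X] [NormedSpace ℝ X]

lemma pairing {n : ℕ} (x : Fin n → X) (i : Fin n) :
    (Fintype.card (Finset (Fin n)) : ℝ) * ‖x i‖ ≤
      ∑ σ : Finset (Fin n), ‖∑ j, (if j ∈ σ then (1:ℝ) else -1) • x j‖ := by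
  set F : Finset (Fin n) → X := fun σ => ∑ j, (if j ∈ σ then (1:ℝ) else -1) • x j with hF
  have key1 : ∀ σ : Finset (Fin n), 2 * ‖x i‖ ≤ ‖F σ‖ + ‖F (symmDiff σ {i})‖ := by
    intro σ
    have hdiff : F σ - F (symmDiff σ {i}) = ((if i ∈ σ then (1:ℝ) else -1) * 2) • x i := by
      rw [hF, ← Finset.sum_sub_distrib]
      rw [Finset.sum_eq_single i]
      · have hmem : i ∈ symmDiff σ {i} ↔ i ∉ σ := by
          simp [Finset.mem_symmDiff]
        rw [← sub_smul]
        congr 1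
        by_cases h : i ∈ σ <;> simp [h, hmem] <;> norm_num
      · intro j _ hj
        have : j ∈ symmDiff σ {i} ↔ j ∈ σ := by
          simp [Finset.mem_symmDiff, hj]
        rw [if_congr this rfl rfl, sub_self]
      · intro h; exact absurd (Finset.mem_univ i) h
    have h1 : ‖F σ - F (symmDiff σ {i})‖ = 2 * ‖x i‖ := by
      rw [hdiff, norm_smul, Real.norm_eq_abs, abs_mul, abs_two]
      by_cases h : i ∈ σ <;> simp [h]
    calc 2 * ‖x i‖ = ‖F σ - F (symmDiff σ {i})‖ := h1.symm
      _ ≤ ‖F σ‖ + ‖F (symmDiff σ {i})‖ := norm_sub_le _ _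
  have hinv : Function.Involutive (fun σ : Finset (Fin n) => symmDiff σ {i}) := fun σ => by
    simp only []
    rw [symmDiff_assoc, symmDiff_self, symmDiff_bot]
  have key2 : ∑ σ : Finset (Fin n), ‖F (symmDiff σ {i})‖ = ∑ σ : Finset (Fin n), ‖F σ‖ :=
    Fintype.sum_equiv hinv.toPerm _ _ (fun σ => rfl)
  have h2 : (Fintype.card (Finset (Fin n)) : ℝ) * (2 * ‖x i‖) ≤
      (∑ σ : Finset (Fin n), ‖F σ‖) + ∑ σ : Finset (Fin n), ‖F σ‖ := by
    calc (Fintype.card (Finset (Fin n)) : ℝ) * (2 * ‖x i‖)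
        = ∑ _σ : Finset (Fin n), 2 * ‖x i‖ := by
          rw [Finset.sum_const, Finset.card_univ, nsmul_eq_mul]
      _ ≤ ∑ σ : Finset (Fin n), (‖F σ‖ + ‖F (symmDiff σ {i})‖) :=
          Finset.sum_le_sum (fun σ _ => key1 σ)
      _ = (∑ σ : Finset (Fin n), ‖F σ‖) + ∑ σ : Finset (Fin n), ‖F σ‖ := by
          rw [Finset.sum_add_distrib, key2]
  nlinarith [h2]

lemma pointwise_lemma {ι : Type*} [Fintype ι] [DecidableEq ι] {q s : ℝ} (hq : 1 < q) (hs : 0 < s) (hs1 : s ≤ 1)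
    (hcard : 2 ≤ Fintype.card ι) :
    ∃ δ : ℝ, 0 < δ ∧ δ ≤ 1 ∧ ∀ (c : ι → ℝ) (m : ℝ), 0 < m → (∀ σ, 0 ≤ c σ) →
      m * (Fintype.card ι) ≤ ∑ σ, c σ →
      (∑ σ, c σ ^ q) ≤ (1 + δ) * m ^ q * (Fintype.card ι) →
      ∀ σ, c σ ≤ (1 + s) * m := by
  have hq0 : (0:ℝ) < q := lt_trans zero_lt_one hq
  set N : ℝ := (Fintype.card ι : ℝ) with hN
  have hN2 : (2:ℝ) ≤ N := by rw [hN]; exact_mod_cast hcard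
  have hN0 : 0 < N := by linarith
  set R : ℝ := (2 * N) ^ q⁻¹ with hR
  set K : Set (ℝ × ℝ) :=
    (Set.Icc (1+s) R ×ˢ Set.Icc 0 R) ∩ {z : ℝ × ℝ | N ≤ z.1 + (N - 1) * z.2} with hK
  set φ : ℝ × ℝ → ℝ := fun z => (z.1 ^ q + (N - 1) * z.2 ^ q) / N with hφ
  -- φ > 1 on K
  have claimA : ∀ z ∈ K, 1 < φ z := by
    rintro ⟨xx, yy⟩ ⟨⟨hx, hy⟩, hcon⟩
    simp only [Set.mem_Icc] at hx hy
    simp only [Set.mem_setOf_eq] at hcon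
    have hx1 : 1 + s ≤ xx := hx.1
    have hy0 : 0 ≤ yy := hy.1
    have hxpos : 0 < xx := by linarith
    rcases eq_or_ne xx yy with rfl | hne
    · have h1 : (1:ℝ) < xx := by linarith
      have h2 : (1:ℝ) < xx ^ q := (Real.one_lt_rpow_iff_of_pos hxpos).mpr (Or.inl ⟨h1, hq0⟩)
      have h3 : φ (xx, xx) = xx ^ q := by
        simp only [hφ]; field_simp; ring
      rw [h3]; exact h2
    · have ha : (0:ℝ) < 1 / N := by positivity
      have hb : (0:ℝ) < (N - 1) / N := by
        apply div_pos <;> linarith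
      have hab : 1 / N + (N - 1) / N = 1 := by field_simp; ring
      have hstrict := (strictConvexOn_rpow hq).2 (Set.mem_Ici.mpr hxpos.le)
        (Set.mem_Ici.mpr hy0) hne ha hb hab
      have hu : (1:ℝ) ≤ (1/N) • xx + ((N-1)/N) • yy := by
        simp only [smul_eq_mul]
        rw [div_mul_eq_mul_div, div_mul_eq_mul_div, ← add_div, le_div_iff₀ hN0]
        linarith
      have hu_q : (1:ℝ) ≤ ((1/N) • xx + ((N-1)/N) • yy) ^ q :=
        Real.one_le_rpow hu hq0.le
      have : φ (xx, yy) = (1/N) • xx ^ q + ((N-1)/N) • yy ^ q := by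
        simp only [smul_eq_mul, hφ]
        field_simp
        try ring
      rw [this]
      exact lt_of_le_of_lt hu_q hstrict
  -- get a uniform gap ε on K
  obtain ⟨ε, hε, hεK⟩ : ∃ ε : ℝ, 0 < ε ∧ ∀ z ∈ K, 1 + ε ≤ φ z := by
    by_cases hKne : K.Nonempty
    · have hcomp : IsCompact K := by
        apply IsCompact.inter_right (isCompact_Icc.prod isCompact_Icc)
        exact isClosed_le continuous_const (by fun_prop)
      have hφc : ContinuousOn φ K := by
        apply Continuous.continuousOn
        apply Continuous.div_const
        apply Continuous.add
        · exact (Real.continuous_rpow_const hq0.le).comp continuous_fst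
        · exact continuous_const.mul ((Real.continuous_rpow_const hq0.le).comp continuous_snd)
      obtain ⟨z0, hz0K, hz0⟩ := hcomp.exists_isMinOn hKne hφc
      refine ⟨φ z0 - 1, by linarith [claimA z0 hz0K], fun z hz => by
        have := hz0 hz; simp only [Set.mem_setOf_eq] at this; linarith⟩
    · exact ⟨1, one_pos, fun z hz => absurd ⟨z, hz⟩ hKne⟩
  refine ⟨min 1 (ε/2), by positivity, min_le_left _ _, ?_⟩
  intro c m hm hc0 hsum hpow σ0
  by_contra hcontra
  push_neg at hcontra
  set δ : ℝ := min 1 (ε/2) with hδdef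
  have hδ1 : δ ≤ 1 := min_le_left _ _
  have hδε : δ < ε := lt_of_le_of_lt (min_le_right _ _) (by linarith)
  have hδ0 : 0 < δ := lt_min one_pos (by linarith)
  set r : ι → ℝ := fun σ => c σ / m with hr
  have hr0 : ∀ σ, 0 ≤ r σ := fun σ => div_nonneg (hc0 σ) hm.le
  have hmq : 0 < m ^ q := Real.rpow_pos_of_pos hm q
  have hrq : ∀ σ, r σ ^ q = c σ ^ q / m ^ q := fun σ => Real.div_rpow (hc0 σ) hm.le q
  have hsum_rq : ∑ σ, r σ ^ q ≤ (1 + δ) * N := by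
    have : ∑ σ, r σ ^ q = (∑ σ, c σ ^ q) / m ^ q := by
      rw [Finset.sum_div]; exact Finset.sum_congr rfl fun σ _ => hrq σ
    rw [this, div_le_iff₀ hmq]
    calc ∑ σ, c σ ^ q ≤ (1 + δ) * m ^ q * N := hpow
      _ = (1 + δ) * N * m ^ q := by ring
  have hrR : ∀ σ, r σ ≤ R := by
    intro σ
    have h1 : r σ ^ q ≤ 2 * N := by
      have h2 : r σ ^ q ≤ ∑ τ, r τ ^ q :=
        Finset.single_le_sum (fun τ _ => Real.rpow_nonneg (hr0 τ) q) (Finset.mem_univ σ)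
      have h3 : (1 + δ) * N ≤ 2 * N := by nlinarith
      linarith
    calc r σ = (r σ ^ q) ^ q⁻¹ := (Real.rpow_rpow_inv (hr0 σ) hq0.ne').symm
      _ ≤ (2 * N) ^ q⁻¹ :=
          Real.rpow_le_rpow (Real.rpow_nonneg (hr0 σ) q) h1 (inv_nonneg.mpr hq0.le)
  have hrsum : N ≤ ∑ σ, r σ := by
    have : ∑ σ, r σ = (∑ σ, c σ) / m := by
      rw [Finset.sum_div]
    rw [this, le_div_iff₀ hm]
    calc N * m = m * N := by ring
      _ ≤ ∑ σ, c σ := hsum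
  have hN1 : (0:ℝ) < N - 1 := by linarith
  have hcard' : ((Finset.univ.erase σ0).card : ℝ) = N - 1 := by
    rw [Finset.card_erase_of_mem (Finset.mem_univ σ0), Finset.card_univ]
    have h1 : 1 ≤ Fintype.card ι := by omega
    rw [Nat.cast_sub h1, Nat.cast_one, hN]
  set B : ℝ := (∑ σ ∈ Finset.univ.erase σ0, r σ) / (N - 1) with hB
  have hB0 : 0 ≤ B :=
    div_nonneg (Finset.sum_nonneg fun σ _ => hr0 σ) hN1.le
  have hBR : B ≤ R := by
    rw [hB, div_le_iff₀ hN1]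
    calc ∑ σ ∈ Finset.univ.erase σ0, r σ ≤ ∑ _σ ∈ Finset.univ.erase σ0, R :=
          Finset.sum_le_sum fun σ _ => hrR σ
      _ = R * (N - 1) := by rw [Finset.sum_const, nsmul_eq_mul, hcard']; ring
  have hsplit : r σ0 + ∑ σ ∈ Finset.univ.erase σ0, r σ = ∑ σ, r σ :=
    Finset.add_sum_erase Finset.univ r (Finset.mem_univ σ0)
  have hconstr : N ≤ r σ0 + (N - 1) * B := by
    rw [hB, mul_div_cancel₀ _ hN1.ne']
    rw [hsplit]; exact hrsum
  have hJensen : B ^ q ≤ (∑ σ ∈ Finset.univ.erase σ0, r σ ^ q) / (N - 1) := by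
    have hw : ∑ _σ ∈ Finset.univ.erase σ0, (1 / (N - 1)) = 1 := by
      rw [Finset.sum_const, nsmul_eq_mul, hcard']
      field_simp
    have hmap := (convexOn_rpow hq.le).map_sum_le (t := Finset.univ.erase σ0)
      (w := fun _ => 1 / (N - 1)) (p := r)
      (fun σ _ => by positivity) hw (fun σ _ => Set.mem_Ici.mpr (hr0 σ))
    have hL : ∑ σ ∈ Finset.univ.erase σ0, (1 / (N - 1)) • r σ = B := by
      simp only [smul_eq_mul, hB]
      rw [Finset.sum_div]
      exact Finset.sum_congr rfl fun σ _ => by ring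
    have hRr : ∑ σ ∈ Finset.univ.erase σ0, (1 / (N - 1)) • r σ ^ q
        = (∑ σ ∈ Finset.univ.erase σ0, r σ ^ q) / (N - 1) := by
      simp only [smul_eq_mul]
      rw [Finset.sum_div]
      exact Finset.sum_congr rfl fun σ _ => by ring
    rw [hL, hRr] at hmap
    exact hmap
  have hrs : 1 + s ≤ r σ0 := by
    rw [hr, le_div_iff₀ hm]
    exact hcontra.le
  have hmem : (r σ0, B) ∈ K := by
    refine ⟨⟨?_, ?_⟩, ?_⟩
    · exact ⟨hrs, hrR σ0⟩
    · exact ⟨hB0, hBR⟩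
    · exact hconstr
  have hgap := hεK _ hmem
  have hφle : φ (r σ0, B) ≤ 1 + δ := by
    have h1 : (N - 1) * B ^ q ≤ ∑ σ ∈ Finset.univ.erase σ0, r σ ^ q := by
      have := mul_le_mul_of_nonneg_left hJensen hN1.le
      rwa [mul_div_cancel₀ _ hN1.ne'] at this
    have h2 : r σ0 ^ q + (N - 1) * B ^ q ≤ ∑ σ, r σ ^ q := by
      rw [← Finset.add_sum_erase Finset.univ (fun σ => r σ ^ q) (Finset.mem_univ σ0)]
      linarith
    show (r σ0 ^ q + (N - 1) * B ^ q) / N ≤ 1 + δ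
    rw [div_le_iff₀ hN0]
    calc r σ0 ^ q + (N - 1) * B ^ q ≤ ∑ σ, r σ ^ q := h2
      _ ≤ (1 + δ) * N := hsum_rq
  linarith

variable {M : Type*} [MeasurableSpace M] {μ : Measure M} {p : ENNReal} [Fact (1 ≤ p)]

lemma Lp_norm_rpow (hp0 : p ≠ 0) (hptop : p ≠ ⊤) (f : Lp X p μ) :
    ∫ t, ‖f t‖ ^ p.toReal ∂μ = ‖f‖ ^ p.toReal := by
  have h := (Lp.memLp f).eLpNorm_eq_integral_rpow_norm hp0 hptop
  have hint : (0:ℝ) ≤ ∫ t, ‖f t‖ ^ p.toReal ∂μ :=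
    integral_nonneg fun t => Real.rpow_nonneg (norm_nonneg _) _
  have hq0 : p.toReal ≠ 0 := by
    simp [ENNReal.toReal_eq_zero_iff, hp0, hptop]
  rw [Lp.norm_def, h, ENNReal.toReal_ofReal (Real.rpow_nonneg hint _),
    Real.rpow_inv_rpow hint hq0]

lemma coeFn_sum_smul {n : ℕ} (a : Fin n → ℝ) (f : Fin n → Lp X p μ) (s : Finset (Fin n)) :
    ⇑(∑ i ∈ s, a i • f i) =ᵐ[μ] fun t => ∑ i ∈ s, a i • f i t := by
  induction s using Finset.cons_induction with
  | empty => simp only [Finset.sum_empty]; exact Lp.coeFn_zero (E := X) (p := p) (μ := μ)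
  | cons i s hi ih =>
    rw [Finset.sum_cons]
    filter_upwards [Lp.coeFn_add (a i • f i) (∑ j ∈ s, a j • f j),
      Lp.coeFn_smul (a i) (f i), ih] with t h1 h2 h3
    rw [Finset.sum_cons, h1, Pi.add_apply, h2, ← h3]
    rfl

lemma indicatorConstLp_smul' {A : Set M} (hAm : MeasurableSet A) (hAtop : μ A ≠ ⊤)
    (r : ℝ) (x : X) :
    indicatorConstLp p hAm hAtop (r • x) = r • indicatorConstLp p hAm hAtop x := by
  apply Lp.ext
  filter_upwards [indicatorConstLp_coeFn (p := p) (hs := hAm) (hμs := hAtop) (c := r • x),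
    Lp.coeFn_smul r (indicatorConstLp p hAm hAtop x),
    indicatorConstLp_coeFn (p := p) (hs := hAm) (hμs := hAtop) (c := x)] with t h1 h2 h3
  rw [h1, h2, Pi.smul_apply, h3]
  by_cases ht : t ∈ A <;> simp [Set.indicator, ht]

lemma forward_dir {A : Set M} (hAm : MeasurableSet A) (hA0 : 0 < μ A) (hAtop : μ A < ⊤)
    (hp0 : p ≠ 0) (hptop : p ≠ ⊤) :
    ∃ J : X →L[ℝ] Lp X p μ, ∀ x, ‖J x‖ = ‖x‖ := by
  set κ : ℝ := (μ A).toReal ^ (1 / p.toReal) with hκ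
  have hκ0 : 0 < κ := by
    apply Real.rpow_pos_of_pos
    exact ENNReal.toReal_pos hA0.ne' hAtop.ne
  set J0 : X →ₗ[ℝ] Lp X p μ :=
    { toFun := fun x => indicatorConstLp p hAm hAtop.ne x
      map_add' := fun x y => (indicatorConstLp_add).symm
      map_smul' := fun r x => indicatorConstLp_smul' hAm hAtop.ne r x } with hJ0
  have hnorm : ∀ x : X, ‖J0 x‖ = ‖x‖ * κ := fun x =>
    norm_indicatorConstLp (hs := hAm) (hμs := hAtop.ne) (c := x) hp0 hptop
  set J : X →L[ℝ] Lp X p μ :=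
    LinearMap.mkContinuous J0 κ (fun x => by rw [hnorm x, mul_comm]) with hJ
  refine ⟨κ⁻¹ • J, fun x => ?_⟩
  rw [ContinuousLinearMap.smul_apply, norm_smul, Real.norm_eq_abs,
    abs_of_pos (inv_pos.mpr hκ0)]
  have : J x = J0 x := rfl
  rw [this, hnorm x]
  field_simp


end
end Stmt8Aux

set_option maxHeartbeats 3000000 in
open Stmt8Aux Finset in
theorem stmt8 {X : Type*} [NormedAddCommGroup X] [NormedSpace ℝ X] [CompleteSpace X]
    {M : Type*} [MeasurableSpace M] (μ : Measure M)
    (hA : ∃ A : Set M, MeasurableSet A ∧ 0 < μ A ∧ μ A < ⊤)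
    (p : ENNReal) (hp1 : 1 < p) (hptop : p ≠ ⊤) [Fact (1 ≤ p)]
    (n : ℕ) (hn : 2 ≤ n) :
    Representable (Fin n → ℝ) X ↔ Representable (Fin n → ℝ) (Lp X p μ) := by
  classical
  obtain ⟨A, hAm, hA0, hAtop⟩ := hA
  have hp0 : p ≠ 0 := by
    intro h; rw [h] at hp1; exact absurd hp1 (by simp)
  have hq1 : 1 < p.toReal := by
    rw [← ENNReal.toReal_one]
    exact ENNReal.toReal_strict_mono hptop hp1
  set q : ℝ := p.toReal with hqdef
  have hq0 : (0:ℝ) < q := lt_trans zero_lt_one hq1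
  haveI : Nonempty (Fin n) := ⟨⟨0, by omega⟩⟩
  constructor
  · -- forward
    intro hX lam hlam
    obtain ⟨J, hJ⟩ := forward_dir (X := X) (μ := μ) (p := p) hAm hA0 hAtop hp0 hptop
    obtain ⟨T, hT⟩ := hX lam hlam
    refine ⟨J.comp T, fun y => ?_⟩
    rw [ContinuousLinearMap.comp_apply, hJ]
    exact hT y
  · -- backward
    intro hLp lam hlam
    set s : ℝ := min (1/2) ((lam - 1)/(lam + 1)) with hsdef
    have hs0 : 0 < s := lt_min (by norm_num) (div_pos (by linarith) (by linarith))
    have hs1 : s ≤ 1 := le_trans (min_le_left _ _) (by norm_num)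
    have hshalf : s ≤ 1/2 := min_le_left _ _
    have hslam : s ≤ (lam - 1)/(lam + 1) := min_le_right _ _
    have hcard : 2 ≤ Fintype.card (Finset (Fin n)) := by
      rw [Fintype.card_finset, Fintype.card_fin]
      calc 2 = 2^1 := rfl
        _ ≤ 2^n := Nat.pow_le_pow_right (by norm_num) (by omega)
    obtain ⟨δ, hδ0, hδ1, hδprop⟩ :=
      pointwise_lemma (ι := Finset (Fin n)) hq1 hs0 hs1 hcard
    set N : ℝ := (Fintype.card (Finset (Fin n)) : ℝ) with hNdef
    have hN0 : (0:ℝ) < N := by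
      rw [hNdef]; exact_mod_cast Fintype.card_pos
    set nn : ℝ := (n : ℝ) with hnndef
    have hnn : (2:ℝ) ≤ nn := by rw [hnndef]; exact_mod_cast hn
    set e : ℝ := δ / (2 * nn^2) with hedef
    have he0 : 0 < e := by rw [hedef]; positivity
    set lam0 : ℝ := (1 + e) ^ q⁻¹ with hlam0def
    have hlam0q : lam0 ^ q = 1 + e :=
      Real.rpow_inv_rpow (by linarith) hq0.ne'
    have hlam0 : 1 < lam0 :=
      (Real.one_lt_rpow_iff_of_pos (by linarith)).mpr (Or.inl ⟨by linarith, by positivity⟩)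
    obtain ⟨T, hT⟩ := hLp lam0 hlam0
    set g : Fin n → M → X := fun i => ⇑(T (Pi.single i 1)) with hgdef
    set sgn : Finset (Fin n) → Fin n → ℝ := fun σ i => if i ∈ σ then 1 else -1 with hsgndef
    set c : Finset (Fin n) → M → ℝ := fun σ t => ‖∑ j, sgn σ j • g j t‖ with hcdef
    set u : Fin n → M → ℝ := fun i t => ‖g i t‖ with hudef
    set m : M → ℝ := fun t => Finset.univ.inf' Finset.univ_nonempty (fun i => u i t) with hmdef
    set i0 : Fin n := ⟨0, by omega⟩ with hi0def
    have hm_le : ∀ t i, m t ≤ u i t := fun t i =>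
      Finset.inf'_le _ (Finset.mem_univ i)
    have hm0 : ∀ t, 0 ≤ m t := by
      intro t
      obtain ⟨i, -, hi⟩ := Finset.exists_mem_eq_inf' (s := Finset.univ)
        (H := Finset.univ_nonempty) (fun i => u i t)
      rw [hmdef]
      simp only []
      rw [hi]
      exact norm_nonneg _
    have hc0 : ∀ σ t, 0 ≤ c σ t := fun σ t => norm_nonneg _
    -- Lp identities
    have hTsum : ∀ σ, ⇑(T (sgn σ)) =ᵐ[μ] fun t => ∑ i, sgn σ i • g i t := by
      intro σ
      have hvec : (sgn σ : Fin n → ℝ) = ∑ i, sgn σ i • (Pi.single i 1 : Fin n → ℝ) := by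
        funext j
        rw [Finset.sum_apply, Finset.sum_eq_single j]
        · simp
        · intro i _ hij
          simp [Pi.single_eq_of_ne (Ne.symm hij)]
        · intro h; exact absurd (Finset.mem_univ j) h
      have hTs : T (sgn σ) = ∑ i, sgn σ i • T (Pi.single i 1) := by
        conv_lhs => rw [hvec]
        rw [map_sum]
        exact Finset.sum_congr rfl fun i _ => by rw [_root_.map_smul]
      rw [hTs]
      exact coeFn_sum_smul _ _ _
    -- norms of special vectors
    have hsgn_norm : ∀ σ, ‖(sgn σ : Fin n → ℝ)‖ = 1 := by
      intro σ
      refine le_antisymm (pi_norm_le_iff_of_nonneg zero_le_one |>.mpr fun i => ?_) ?_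
      · rw [hsgndef]; simp only [Real.norm_eq_abs]
        by_cases h : i ∈ σ <;> simp [h]
      · have h1 := norm_le_pi_norm (sgn σ) i0
        have h2 : ‖sgn σ i0‖ = 1 := by
          rw [hsgndef]; simp only [Real.norm_eq_abs]
          by_cases h : i0 ∈ σ <;> simp [h]
        linarith
    have hsingle_norm : ∀ i : Fin n, ‖(Pi.single i 1 : Fin n → ℝ)‖ = 1 := by
      intro i
      refine le_antisymm (pi_norm_le_iff_of_nonneg zero_le_one |>.mpr fun j => ?_) ?_
      · rcases eq_or_ne j i with rfl | hj
        · simp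
        · rw [Pi.single_eq_of_ne hj]; simp
      · have h1 := norm_le_pi_norm (Pi.single i 1 : Fin n → ℝ) i
        rw [Pi.single_eq_same] at h1
        simpa using h1
    -- integral facts
    have hIc : ∀ σ, ∫ t, c σ t ^ q ∂μ ≤ 1 + e := by
      intro σ
      have h1 : ∫ t, c σ t ^ q ∂μ = ∫ t, ‖(T (sgn σ)) t‖ ^ q ∂μ := by
        refine integral_congr_ae ((hTsum σ).mono fun t ht => ?_)
        have ht' : (T (sgn σ)) t = ∑ i, sgn σ i • g i t := ht
        simp only [hcdef]
        rw [ht']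
      rw [h1, Lp_norm_rpow hp0 hptop]
      have h2 : ‖T (sgn σ)‖ ≤ lam0 := by
        have := (hT (sgn σ)).2
        rwa [hsgn_norm σ, mul_one] at this
      calc ‖T (sgn σ)‖ ^ q ≤ lam0 ^ q :=
            Real.rpow_le_rpow (norm_nonneg _) h2 hq0.le
        _ = 1 + e := hlam0q
    have hIu : ∀ i, 1 ≤ ∫ t, u i t ^ q ∂μ := by
      intro i
      have h1 : ∫ t, u i t ^ q ∂μ = ‖T (Pi.single i 1)‖ ^ q := by
        rw [hudef]; simp only []
        rw [hgdef]; simp only []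
        exact Lp_norm_rpow hp0 hptop _
      rw [h1]
      have h2 : 1 ≤ ‖T (Pi.single i 1)‖ := by
        have := (hT (Pi.single i 1)).1
        rwa [hsingle_norm i] at this
      exact Real.one_le_rpow h2 hq0.le
    -- integrability
    have hic : ∀ σ, Integrable (fun t => c σ t ^ q) μ := fun σ =>
      ((Lp.memLp (T (sgn σ))).ae_eq (hTsum σ)).integrable_norm_rpow hp0 hptop
    have hiu : ∀ i, Integrable (fun t => u i t ^ q) μ := fun i =>
      (Lp.memLp (T (Pi.single i 1))).integrable_norm_rpow hp0 hptop
    set W : M → ℝ := fun t => ∑ σ, c σ t ^ q with hWdef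
    have hiW : Integrable W μ := integrable_finset_sum _ (fun σ _ => hic σ)
    have hW0 : ∀ t, 0 ≤ W t := fun t =>
      Finset.sum_nonneg fun σ _ => Real.rpow_nonneg (hc0 σ t) q
    have hIW : ∫ t, W t ∂μ ≤ N * (1 + e) := by
      rw [hWdef]
      rw [integral_finset_sum _ (fun σ _ => hic σ)]
      calc ∑ σ, ∫ t, c σ t ^ q ∂μ ≤ ∑ _σ : Finset (Fin n), (1+e) :=
            Finset.sum_le_sum fun σ _ => hIc σ
        _ = N * (1+e) := by
            rw [Finset.sum_const, Finset.card_univ, nsmul_eq_mul, hNdef]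
    -- integrability of m ^ q
    have hmmeas : AEMeasurable m μ := by
      have key : ∀ (s : Finset (Fin n)), ∀ (hs : s.Nonempty),
          AEMeasurable (fun t => s.inf' hs (fun i => u i t)) μ := by
        intro s
        induction s using Finset.cons_induction with
        | empty => intro hs; exact absurd hs (by simp)
        | cons a s ha ih =>
          intro hs
          rcases s.eq_empty_or_nonempty with rfl | hs'
          · have : (fun t => (Finset.cons a ∅ ha).inf' hs (fun i => u i t))
                = fun t => u a t := by
              funext t; simp
            rw [this]
            exact (Lp.aestronglyMeasurable _).norm.aemeasurable
          · have : (fun t => (Finset.cons a s ha).inf' hs (fun i => u i t))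
                = fun t => min (u a t) (s.inf' hs' (fun i => u i t)) := by
              funext t; rw [Finset.inf'_cons]
            rw [this]
            exact AEMeasurable.min ((Lp.aestronglyMeasurable _).norm.aemeasurable) (ih hs')
      exact key Finset.univ Finset.univ_nonempty
    have him : Integrable (fun t => m t ^ q) μ := by
      refine Integrable.mono' (hiu i0)
        (((Real.continuous_rpow_const hq0.le).measurable.comp_aemeasurable hmmeas).aestronglyMeasurable)
        (Filter.Eventually.of_forall fun t => ?_)
      rw [Real.norm_eq_abs, abs_of_nonneg (Real.rpow_nonneg (hm0 t) q)]
      exact Real.rpow_le_rpow (hm0 t) (hm_le t i0) hq0.le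
    -- pointwise inequalities
    have hpair : ∀ (t : M) (i : Fin n), u i t * N ≤ ∑ σ, c σ t := by
      intro t i
      have hp := pairing (fun j => g j t) i
      calc u i t * N = (Fintype.card (Finset (Fin n)) : ℝ) * ‖g i t‖ := by
            rw [hudef, hNdef]; ring
        _ ≤ ∑ σ : Finset (Fin n), ‖∑ j, (if j ∈ σ then (1:ℝ) else -1) • g j t‖ := hp
        _ = ∑ σ, c σ t := rfl
    have hu_q : ∀ (t : M) (i : Fin n), u i t ^ q ≤ W t / N := by
      intro t i
      have hJen : ((∑ σ, c σ t) / N) ^ q ≤ W t / N := by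
        have hw : ∑ _σ : Finset (Fin n), (1/N : ℝ) = 1 := by
          rw [Finset.sum_const, Finset.card_univ, nsmul_eq_mul, hNdef]
          field_simp
        have hmap := (convexOn_rpow hq1.le).map_sum_le (t := Finset.univ)
          (w := fun _ => 1/N) (p := fun σ => c σ t)
          (fun σ _ => by positivity) hw (fun σ _ => Set.mem_Ici.mpr (hc0 σ t))
        simp only [smul_eq_mul] at hmap
        have hL : ∑ σ : Finset (Fin n), 1/N * c σ t = (∑ σ, c σ t) / N := by
          rw [Finset.sum_div]
          exact Finset.sum_congr rfl fun σ _ => by ring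
        have hR : ∑ σ : Finset (Fin n), 1/N * c σ t ^ q = W t / N := by
          rw [hWdef]
          simp only []
          rw [Finset.sum_div]
          exact Finset.sum_congr rfl fun σ _ => by ring
        rw [hL, hR] at hmap
        exact hmap
      have h1 : u i t ≤ (∑ σ, c σ t) / N := by
        rw [le_div_iff₀ hN0]
        exact hpair t i
      calc u i t ^ q ≤ ((∑ σ, c σ t) / N) ^ q :=
            Real.rpow_le_rpow (norm_nonneg _) h1 hq0.le
        _ ≤ W t / N := hJen
    have hP2 : ∀ t, ∑ i, u i t ^ q ≤ (nn - 1) * (W t / N) + m t ^ q := by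
      intro t
      obtain ⟨i₁, -, hi₁⟩ := Finset.exists_mem_eq_inf' (s := Finset.univ)
        (H := Finset.univ_nonempty) (fun i => u i t)
      have hmu : m t = u i₁ t := hi₁
      rw [← Finset.add_sum_erase Finset.univ (fun i => u i t ^ q) (Finset.mem_univ i₁)]
      have h1 : ∑ i ∈ Finset.univ.erase i₁, u i t ^ q ≤ (nn - 1) * (W t / N) := by
        calc ∑ i ∈ Finset.univ.erase i₁, u i t ^ q
            ≤ ∑ _i ∈ Finset.univ.erase i₁, W t / N :=
              Finset.sum_le_sum fun i _ => hu_q t i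
          _ = (nn - 1) * (W t / N) := by
              rw [Finset.sum_const, nsmul_eq_mul,
                Finset.card_erase_of_mem (Finset.mem_univ i₁), Finset.card_univ,
                Fintype.card_fin, Nat.cast_sub (by omega), Nat.cast_one, hnndef]
      have h2 : u i₁ t ^ q = m t ^ q := by rw [hmu]
      linarith
    -- integrate
    set Im : ℝ := ∫ t, m t ^ q ∂μ with hImdef
    have hWN : (∫ t, W t ∂μ) / N ≤ 1 + e := by
      rw [div_le_iff₀ hN0]
      calc ∫ t, W t ∂μ ≤ N * (1+e) := hIW
        _ = (1+e) * N := by ring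
    have hImα : nn - (nn - 1) * (1 + e) ≤ Im := by
      have h0 : (nn : ℝ) ≤ ∫ t, ∑ i, u i t ^ q ∂μ := by
        rw [integral_finset_sum _ fun i _ => hiu i]
        calc nn = ∑ _i : Fin n, (1:ℝ) := by
              rw [Finset.sum_const, Finset.card_univ, Fintype.card_fin, nsmul_eq_mul,
                mul_one, hnndef]
          _ ≤ ∑ i, ∫ t, u i t ^ q ∂μ := Finset.sum_le_sum fun i _ => hIu i
      have hiuS : Integrable (fun t => ∑ i, u i t ^ q) μ :=
        integrable_finset_sum _ fun i _ => hiu i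
      have hiR : Integrable (fun t => (nn-1) * (W t / N) + m t ^ q) μ :=
        ((hiW.div_const N).const_mul _).add him
      have h1 := integral_mono hiuS hiR hP2
      rw [integral_add ((hiW.div_const N).const_mul _) him, integral_const_mul,
        integral_div] at h1
      have h2 : (nn - 1) * ((∫ t, W t ∂μ) / N) ≤ (nn - 1) * (1 + e) :=
        mul_le_mul_of_nonneg_left hWN (by linarith)
      rw [← hImdef] at h1
      linarith
    -- find a good point
    have hgood : ∃ t, 0 < m t ∧ W t / N ≤ (1 + δ) * m t ^ q := by
      by_contra hbad
      push_neg at hbad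
      have hptw : ∀ t, (1 + δ) * m t ^ q ≤ W t / N := by
        intro t
        rcases (hm0 t).lt_or_eq with hmt | hmt
        · exact (hbad t hmt).le
        · rw [← hmt, Real.zero_rpow hq0.ne', mul_zero]
          exact div_nonneg (hW0 t) hN0.le
      have hint1 : (1 + δ) * Im ≤ (∫ t, W t ∂μ) / N := by
        have h := integral_mono (him.const_mul _) (hiW.div_const N) hptw
        rw [integral_const_mul, integral_div] at h
        rw [hImdef]
        exact h
      have hfin : (1 + δ) * Im ≤ 1 + e := le_trans hint1 hWN
      have hee : δ = e * (2 * nn^2) := by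
        rw [hedef]
        field_simp
      have hE : e * (2 * nn^2) ≤ 1 := by rw [← hee]; exact hδ1
      have hb : 2*e*nn^2*(nn-1) ≤ (nn-1) := by nlinarith [hE, hnn]
      have harith : 1 + e < (1 + δ) * (nn - (nn - 1) * (1 + e)) := by
        rw [hee]
        nlinarith [mul_le_mul_of_nonneg_left hb he0.le, he0, hnn,
          mul_pos he0 (show (0:ℝ) < 2*nn^2-2*nn+1 by nlinarith)]
      nlinarith [hImα, hfin, harith, hδ0, mul_le_mul_of_nonneg_left hImα (by linarith : (0:ℝ) ≤ 1 + δ)]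
    obtain ⟨t, hmt, hWt⟩ := hgood
    -- apply the pointwise lemma at t
    have happly := hδprop (fun σ => c σ t) (m t) hmt (fun σ => hc0 σ t)
      ?_ ?_
    rotate_left
    · calc m t * (Fintype.card (Finset (Fin n)) : ℝ) ≤ u i0 t * N :=
          mul_le_mul_of_nonneg_right (hm_le t i0) hN0.le
        _ ≤ ∑ σ, c σ t := hpair t i0
    · have h1 : W t ≤ (1 + δ) * m t ^ q * N := by
        rw [div_le_iff₀ hN0] at hWt
        linarith
      calc ∑ σ, c σ t ^ q = W t := rfl
        _ ≤ (1 + δ) * m t ^ q * (Fintype.card (Finset (Fin n)) : ℝ) := h1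
    -- construct the operator
    refine exists_clm (n := n) (b := (1+s) * m t) (lam := lam) (by omega) (fun i => g i t) hmt ?_ ?_ (fun i => hm_le t i) ?_
    · nlinarith [hmt]
    · have hl1 : (0:ℝ) < lam + 1 := by linarith
      have : s * (lam + 1) ≤ lam - 1 := by
        rw [← le_div_iff₀ hl1]
        exact hslam
      nlinarith [hmt]
    · intro θ hθ
      have hθσ : θ = sgn (Finset.univ.filter (fun i => θ i = 1)) := by
        funext i
        rw [hsgndef]
        simp only [Finset.mem_filter, Finset.mem_univ, true_and]
        rcases hθ i with h | h
        · rw [h]; simp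
        · rw [h]; norm_num
      rw [hθσ]
      exact happly _
end

section
/- Let 1 < p < ∞ and n ≥ 2, let (r_i) be the Rademacher sequence, and suppose there is ρ ∈ (0, 1/2) such that for all unit vectors x_1,...,x_n in X, E[‖r_1 x_1 + ... + r_n x_n‖^p] ≥ (1+ρ)^p. Then for all unit vectors f_1,...,f_n in L_p(μ; X), E[‖r_1 f_1 + ... + r_n f_n‖_{L_p(X)}^p] ≥ min{(1 + ρ/2)^p, 1 + ρ/(3n)}. -/
open MeasureTheory ProbabilityTheory

/-- sign pattern from a subset -/
noncomputable def sg9 (T : Finset ℕ) (i : ℕ) : ℝ := if i ∈ T then 1 else -1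

lemma sg9_abs (T : Finset ℕ) (i : ℕ) : |sg9 T i| = 1 := by
  unfold sg9; split <;> norm_num

lemma rpow_avg {p : ℝ} (hp : 1 ≤ p) {a b : ℝ} (ha : 0 ≤ a) (hb : 0 ≤ b) :
    ((a + b) / 2) ^ p ≤ (a ^ p + b ^ p) / 2 := by
  have := (convexOn_rpow hp).2 (Set.mem_Ici.2 ha) (Set.mem_Ici.2 hb)
    (by norm_num : (0:ℝ) ≤ 1/2) (by norm_num : (0:ℝ) ≤ 1/2) (by norm_num)
  simp only [smul_eq_mul] at this
  calc ((a + b) / 2) ^ p = (1/2 * a + 1/2 * b) ^ p := by ring_nf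
    _ ≤ 1/2 * a ^ p + 1/2 * b ^ p := this
    _ = (a ^ p + b ^ p) / 2 := by ring

lemma pair_rpow {p : ℝ} (hp : 1 ≤ p) {a b c : ℝ} (ha : 0 ≤ a) (hb : 0 ≤ b) (hc : 0 ≤ c)
    (h : 2 * c ≤ a + b) : 2 * c ^ p ≤ a ^ p + b ^ p := by
  have h1 : c ^ p ≤ ((a + b) / 2) ^ p :=
    Real.rpow_le_rpow hc (by linarith) (by linarith)
  have h2 := rpow_avg hp ha hb
  linarith

/-- convexity shift lemma : key for contraction principle -/
lemma shift_rpow {E : Type*} [NormedAddCommGroup E] [NormedSpace ℝ E]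
    {p : ℝ} (hp : 1 ≤ p) (v u : E) {t : ℝ} (ht : 1 ≤ t) :
    ‖v + u‖ ^ p + ‖v - u‖ ^ p ≤ ‖v + t • u‖ ^ p + ‖v - t • u‖ ^ p := by
  have ht0 : 0 < t := lt_of_lt_of_le one_pos ht
  set l : ℝ := (t + 1) / (2 * t) with hl
  have hl0 : 0 ≤ l := by positivity
  have hl1 : 0 ≤ 1 - l := by
    rw [hl, sub_nonneg, div_le_one (by positivity)]; linarith
  have hsum : l + (1 - l) = 1 := by ring
  have hv1 : v + u = l • (v + t • u) + (1 - l) • (v - t • u) := by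
    rw [smul_add, smul_sub, smul_smul, smul_smul]
    have : l * t = (t+1)/2 := by rw [hl]; field_simp
    rw [this]
    have : (1 - l) * t = (t-1)/2 := by rw [hl]; field_simp; ring
    rw [this]
    module
  have hv2 : v - u = l • (v - t • u) + (1 - l) • (v + t • u) := by
    rw [smul_add, smul_sub, smul_smul, smul_smul]
    have h1 : l * t = (t+1)/2 := by rw [hl]; field_simp
    have h2 : (1 - l) * t = (t-1)/2 := by rw [hl]; field_simp; ring
    rw [h1, h2]
    module
  set A := ‖v + t • u‖
  set B := ‖v - t • u‖
  have hA : 0 ≤ A := norm_nonneg _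
  have hB : 0 ≤ B := norm_nonneg _
  have hn1 : ‖v + u‖ ≤ l * A + (1 - l) * B := by
    rw [hv1]
    refine (norm_add_le _ _).trans ?_
    rw [norm_smul, norm_smul, Real.norm_eq_abs, Real.norm_eq_abs,
      abs_of_nonneg hl0, abs_of_nonneg hl1]
  have hn2 : ‖v - u‖ ≤ l * B + (1 - l) * A := by
    rw [hv2]
    refine (norm_add_le _ _).trans ?_
    rw [norm_smul, norm_smul, Real.norm_eq_abs, Real.norm_eq_abs,
      abs_of_nonneg hl0, abs_of_nonneg hl1]
  have hc1 : ‖v + u‖ ^ p ≤ (l * A + (1 - l) * B) ^ p :=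
    Real.rpow_le_rpow (norm_nonneg _) hn1 (by linarith)
  have hc2 : ‖v - u‖ ^ p ≤ (l * B + (1 - l) * A) ^ p :=
    Real.rpow_le_rpow (norm_nonneg _) hn2 (by linarith)
  have hx1 : (l * A + (1 - l) * B) ^ p ≤ l * A ^ p + (1 - l) * B ^ p := by
    have := (convexOn_rpow hp).2 (Set.mem_Ici.2 hA) (Set.mem_Ici.2 hB) hl0 hl1 hsum
    simpa using this
  have hx2 : (l * B + (1 - l) * A) ^ p ≤ l * B ^ p + (1 - l) * A ^ p := by
    have := (convexOn_rpow hp).2 (Set.mem_Ici.2 hB) (Set.mem_Ici.2 hA) hl0 hl1 hsum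
    simpa using this
  nlinarith [hc1, hc2, hx1, hx2]

lemma sum_insert_sg {E : Type*} [NormedAddCommGroup E] [NormedSpace ℝ E]
    {s T : Finset ℕ} {a : ℕ} (ha : a ∉ s) (hT : T ⊆ s) (g : ℕ → E) :
    (∑ i ∈ insert a s, sg9 T i • g i = -g a + ∑ i ∈ s, sg9 T i • g i) ∧
    (∑ i ∈ insert a s, sg9 (insert a T) i • g i = g a + ∑ i ∈ s, sg9 T i • g i) := by
  have haT : a ∉ T := fun h => ha (hT h)
  constructor
  · rw [Finset.sum_insert ha]
    congr 1
    unfold sg9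
    simp [haT]
  · rw [Finset.sum_insert ha]
    congr 1
    · unfold sg9; simp
    · refine Finset.sum_congr rfl fun i hi => ?_
      have hia : i ≠ a := fun h => ha (h ▸ hi)
      unfold sg9
      simp [hia]

lemma contr9 {E : Type*} [NormedAddCommGroup E] [NormedSpace ℝ E] {p : ℝ} (hp : 1 ≤ p)
    (s : Finset ℕ) (u : ℕ → E) (c : ℕ → ℝ) (hc : ∀ i ∈ s, 1 ≤ c i) :
    ∀ v : E, ∑ T ∈ s.powerset, ‖v + ∑ i ∈ s, sg9 T i • u i‖ ^ p
      ≤ ∑ T ∈ s.powerset, ‖v + ∑ i ∈ s, sg9 T i • (c i • u i)‖ ^ p := by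
  induction s using Finset.induction_on with
  | empty => simp
  | @insert a s ha IH =>
    intro v
    have hca : 1 ≤ c a := hc a (Finset.mem_insert_self a s)
    have hc' : ∀ i ∈ s, 1 ≤ c i := fun i hi => hc i (Finset.mem_insert_of_mem hi)
    rw [Finset.sum_powerset_insert ha, Finset.sum_powerset_insert ha]
    have key : ∀ T ∈ s.powerset,
        ‖v + ∑ i ∈ insert a s, sg9 T i • u i‖ ^ p
          + ‖v + ∑ i ∈ insert a s, sg9 (insert a T) i • u i‖ ^ p
        = ‖(v - u a) + ∑ i ∈ s, sg9 T i • u i‖ ^ p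
          + ‖(v + u a) + ∑ i ∈ s, sg9 T i • u i‖ ^ p := by
      intro T hT
      obtain ⟨h1, h2⟩ := sum_insert_sg ha (Finset.mem_powerset.1 hT) u
      rw [h1, h2]
      ring_nf
      congr 2 <;> abel_nf
    have key' : ∀ T ∈ s.powerset,
        ‖v + ∑ i ∈ insert a s, sg9 T i • (c i • u i)‖ ^ p
          + ‖v + ∑ i ∈ insert a s, sg9 (insert a T) i • (c i • u i)‖ ^ p
        = ‖(v - c a • u a) + ∑ i ∈ s, sg9 T i • (c i • u i)‖ ^ p
          + ‖(v + c a • u a) + ∑ i ∈ s, sg9 T i • (c i • u i)‖ ^ p := by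
      intro T hT
      obtain ⟨h1, h2⟩ := sum_insert_sg ha (Finset.mem_powerset.1 hT) (fun i => c i • u i)
      rw [h1, h2]
      congr 2 <;> abel_nf
    rw [← Finset.sum_add_distrib, ← Finset.sum_add_distrib,
      Finset.sum_congr rfl key, Finset.sum_congr rfl key']
    have step1 : ∑ T ∈ s.powerset,
        (‖(v - u a) + ∑ i ∈ s, sg9 T i • u i‖ ^ p
          + ‖(v + u a) + ∑ i ∈ s, sg9 T i • u i‖ ^ p)
        ≤ ∑ T ∈ s.powerset,
        (‖(v - u a) + ∑ i ∈ s, sg9 T i • (c i • u i)‖ ^ p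
          + ‖(v + u a) + ∑ i ∈ s, sg9 T i • (c i • u i)‖ ^ p) := by
      rw [Finset.sum_add_distrib, Finset.sum_add_distrib]
      exact add_le_add (IH hc' (v - u a)) (IH hc' (v + u a))
    refine step1.trans (Finset.sum_le_sum fun T _ => ?_)
    have := shift_rpow hp (v + ∑ i ∈ s, sg9 T i • (c i • u i)) (u a) hca
    calc ‖(v - u a) + ∑ i ∈ s, sg9 T i • (c i • u i)‖ ^ p
          + ‖(v + u a) + ∑ i ∈ s, sg9 T i • (c i • u i)‖ ^ p
        = ‖(v + ∑ i ∈ s, sg9 T i • (c i • u i)) + u a‖ ^ p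
          + ‖(v + ∑ i ∈ s, sg9 T i • (c i • u i)) - u a‖ ^ p := by
          rw [add_comm]; congr 2 <;> abel
      _ ≤ ‖(v + ∑ i ∈ s, sg9 T i • (c i • u i)) + c a • u a‖ ^ p
          + ‖(v + ∑ i ∈ s, sg9 T i • (c i • u i)) - c a • u a‖ ^ p := this
      _ = ‖(v - c a • u a) + ∑ i ∈ s, sg9 T i • (c i • u i)‖ ^ p
          + ‖(v + c a • u a) + ∑ i ∈ s, sg9 T i • (c i • u i)‖ ^ p := by
          rw [add_comm]; congr 2 <;> · congr 1; abel

lemma pair9 {E : Type*} [NormedAddCommGroup E] [NormedSpace ℝ E] {p : ℝ} (hp : 1 ≤ p)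
    (s : Finset ℕ) (g : ℕ → E) {j : ℕ} (hj : j ∈ s) :
    2 ^ s.card * ‖g j‖ ^ p ≤ ∑ T ∈ s.powerset, ‖∑ i ∈ s, sg9 T i • g i‖ ^ p := by
  have hs : s = insert j (s.erase j) := (Finset.insert_erase hj).symm
  have hjs : j ∉ s.erase j := Finset.notMem_erase j s
  rw [hs, Finset.sum_powerset_insert hjs, ← Finset.sum_add_distrib]
  have key : ∀ T ∈ (s.erase j).powerset,
      2 * ‖g j‖ ^ p ≤ ‖∑ i ∈ insert j (s.erase j), sg9 T i • g i‖ ^ p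
        + ‖∑ i ∈ insert j (s.erase j), sg9 (insert j T) i • g i‖ ^ p := by
    intro T hT
    obtain ⟨h1, h2⟩ := sum_insert_sg hjs (Finset.mem_powerset.1 hT) g
    rw [h1, h2]
    refine pair_rpow hp (norm_nonneg _) (norm_nonneg _) (norm_nonneg _) ?_
    have e1 : (g j + ∑ i ∈ s.erase j, sg9 T i • g i)
        - (-g j + ∑ i ∈ s.erase j, sg9 T i • g i) = (2:ℝ) • g j := by module
    calc 2 * ‖g j‖ = ‖(2:ℝ) • g j‖ := by rw [norm_smul]; simp
      _ = ‖(g j + ∑ i ∈ s.erase j, sg9 T i • g i)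
          - (-g j + ∑ i ∈ s.erase j, sg9 T i • g i)‖ := by rw [e1]
      _ ≤ ‖-g j + ∑ i ∈ s.erase j, sg9 T i • g i‖
          + ‖g j + ∑ i ∈ s.erase j, sg9 T i • g i‖ :=
          (norm_sub_le _ _).trans (le_of_eq (add_comm _ _))
  calc 2 ^ (insert j (s.erase j)).card * ‖g j‖ ^ p
      = ∑ _T ∈ (s.erase j).powerset, 2 * ‖g j‖ ^ p := by
        rw [Finset.sum_const, Finset.card_powerset,
          Finset.card_insert_of_notMem hjs]
        simp [pow_succ]
        ring
    _ ≤ _ := Finset.sum_le_sum key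

lemma core9 {E : Type*} [NormedAddCommGroup E] [NormedSpace ℝ E] {p ρ : ℝ}
    (hp : 1 ≤ p) (hρ0 : 0 < ρ) (hρ1 : ρ < 1/2) {n : ℕ} (hn : 2 ≤ n)
    {s : Finset ℕ} (hcard : s.card = n)
    (hXfin : ∀ u : ℕ → E, (∀ i ∈ s, ‖u i‖ = 1) →
      (1 + ρ) ^ p * 2 ^ n ≤ ∑ T ∈ s.powerset, ‖∑ i ∈ s, sg9 T i • u i‖ ^ p)
    (g : ℕ → E) :
    min ((1 + ρ/2)^p) (1 + ρ/(3*(n:ℝ))) * 2^n * ∑ i ∈ s, ‖g i‖^p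
      ≤ (n:ℝ) * ∑ T ∈ s.powerset, ‖∑ i ∈ s, sg9 T i • g i‖ ^ p := by
  have hp0 : 0 < p := lt_of_lt_of_le one_pos hp
  set K := min ((1 + ρ/2)^p) (1 + ρ/(3*(n:ℝ))) with hK
  have hK0 : 0 ≤ K := le_min (Real.rpow_nonneg (by linarith) p) (by positivity)
  set Φ := ∑ T ∈ s.powerset, ‖∑ i ∈ s, sg9 T i • g i‖ ^ p with hΦ
  have hΦ0 : 0 ≤ Φ := Finset.sum_nonneg fun T _ => Real.rpow_nonneg (norm_nonneg _) p
  have hsne : s.Nonempty := Finset.card_pos.1 (by omega)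
  obtain ⟨j, hj, hjmax⟩ := s.exists_max_image (fun i => ‖g i‖) hsne
  obtain ⟨k, hk, hkmin⟩ := s.exists_min_image (fun i => ‖g i‖) hsne
  set Mx := ‖g j‖ with hMx
  set m := ‖g k‖ with hm
  have hMx0 : 0 ≤ Mx := norm_nonneg _
  have hm0 : 0 ≤ m := norm_nonneg _
  have hmax : 2^n * Mx ^ p ≤ Φ := by
    have := pair9 hp s g hj
    rwa [hcard] at this
  -- contraction bound
  have hmin : 2^n * ((1 + ρ)^p * m ^ p) ≤ Φ := by
    rcases eq_or_lt_of_le hm0 with hm00 | hmpos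
    · rw [← hm00, Real.zero_rpow (ne_of_gt hp0)]
      simpa using hΦ0
    · set u : ℕ → E := fun i => ‖g i‖⁻¹ • g i with hu
      have hunit : ∀ i ∈ s, ‖u i‖ = 1 := by
        intro i hi
        have : 0 < ‖g i‖ := lt_of_lt_of_le hmpos (hkmin i hi)
        rw [hu]
        simp only [norm_smul, norm_inv, norm_norm]
        field_simp
      set c : ℕ → ℝ := fun i => ‖g i‖ / m with hc
      have hc1 : ∀ i ∈ s, 1 ≤ c i := by
        intro i hi
        rw [hc, le_div_iff₀ hmpos]
        simpa using hkmin i hi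
      have hgi : ∀ i ∈ s, g i = c i • (m • u i) := by
        intro i hi
        have hgp : 0 < ‖g i‖ := lt_of_lt_of_le hmpos (hkmin i hi)
        show g i = (‖g i‖ / m) • (m • (‖g i‖⁻¹ • g i))
        rw [smul_smul, smul_smul,
          show ‖g i‖ / m * m * ‖g i‖⁻¹ = 1 by field_simp, one_smul]
      have h1 : ∑ T ∈ s.powerset, ‖(0:E) + ∑ i ∈ s, sg9 T i • (m • u i)‖ ^ p ≤
          ∑ T ∈ s.powerset, ‖(0:E) + ∑ i ∈ s, sg9 T i • (c i • (m • u i))‖ ^ p :=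
        contr9 hp s (fun i => m • u i) c hc1 0
      have h2 : ∑ T ∈ s.powerset, ‖(0:E) + ∑ i ∈ s, sg9 T i • (c i • (m • u i))‖ ^ p = Φ := by
        refine Finset.sum_congr rfl fun T _ => ?_
        rw [zero_add]
        congr 1
        congr 1
        exact Finset.sum_congr rfl fun i hi => by rw [← hgi i hi]
      have h3 : ∑ T ∈ s.powerset, ‖(0:E) + ∑ i ∈ s, sg9 T i • (m • u i)‖ ^ p
          = m ^ p * ∑ T ∈ s.powerset, ‖∑ i ∈ s, sg9 T i • u i‖ ^ p := by
        rw [Finset.mul_sum]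
        refine Finset.sum_congr rfl fun T _ => ?_
        rw [zero_add]
        have : ∑ i ∈ s, sg9 T i • (m • u i) = m • ∑ i ∈ s, sg9 T i • u i := by
          rw [Finset.smul_sum]
          exact Finset.sum_congr rfl fun i _ => smul_comm _ _ _
        rw [this, norm_smul, Real.norm_eq_abs, abs_of_pos hmpos,
          Real.mul_rpow (le_of_lt hmpos) (norm_nonneg _)]
      have h4 := hXfin u hunit
      calc 2^n * ((1 + ρ)^p * m ^ p) = m ^ p * ((1 + ρ)^p * 2^n) := by ring
        _ ≤ m ^ p * ∑ T ∈ s.powerset, ‖∑ i ∈ s, sg9 T i • u i‖ ^ p := by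
            refine mul_le_mul_of_nonneg_left h4 (Real.rpow_nonneg hm0 p)
        _ = ∑ T ∈ s.powerset, ‖(0:E) + ∑ i ∈ s, sg9 T i • (m • u i)‖ ^ p := h3.symm
        _ ≤ ∑ T ∈ s.powerset, ‖(0:E) + ∑ i ∈ s, sg9 T i • (c i • (m • u i))‖ ^ p := h1
        _ = Φ := h2
  -- combine
  by_cases hcase : (1 + ρ/2)^p * Mx^p ≤ (1 + ρ)^p * m^p
  · have hsum : ∑ i ∈ s, ‖g i‖^p ≤ n * Mx^p := by
      calc ∑ i ∈ s, ‖g i‖^p ≤ ∑ _i ∈ s, Mx^p :=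
            Finset.sum_le_sum fun i hi =>
              Real.rpow_le_rpow (norm_nonneg _) (hjmax i hi) (le_of_lt hp0)
        _ = n * Mx^p := by rw [Finset.sum_const, hcard]; simp [mul_comm]
    have hKle : K ≤ (1 + ρ/2)^p := min_le_left _ _
    calc K * 2^n * ∑ i ∈ s, ‖g i‖^p ≤ (1 + ρ/2)^p * 2^n * (n * Mx^p) := by
          refine mul_le_mul (mul_le_mul_of_nonneg_right hKle (by positivity)) hsum
            (Finset.sum_nonneg fun i _ => Real.rpow_nonneg (norm_nonneg _) p) (by positivity)
      _ = n * (2^n * ((1 + ρ/2)^p * Mx^p)) := by ring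
      _ ≤ n * (2^n * ((1 + ρ)^p * m^p)) := by
          refine mul_le_mul_of_nonneg_left (mul_le_mul_of_nonneg_left hcase (by positivity))
            (by positivity)
      _ ≤ n * Φ := mul_le_mul_of_nonneg_left hmin (by positivity)
  · push_neg at hcase
    set c := ((1 + ρ/2)/(1 + ρ))^p with hcdef
    have hc0 : 0 ≤ c := Real.rpow_nonneg (by positivity) p
    have hmc : m^p ≤ c * Mx^p := by
      have h1ρ : (0:ℝ) < (1 + ρ)^p := Real.rpow_pos_of_pos (by linarith) p
      rw [hcdef, Real.div_rpow (by linarith) (by linarith)]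
      rw [div_mul_eq_mul_div, le_div_iff₀ h1ρ]
      nlinarith [le_of_lt hcase]
    have hcle : c ≤ 1 - ρ/3 := by
      have hbase : (1 + ρ/2)/(1 + ρ) ≤ 1 := by
        rw [div_le_one (by linarith)]; linarith
      have hbase0 : 0 < (1 + ρ/2)/(1 + ρ) := by positivity
      have h1 : c ≤ (1 + ρ/2)/(1 + ρ) := by
        rw [hcdef]
        calc ((1 + ρ/2)/(1 + ρ))^p ≤ ((1 + ρ/2)/(1 + ρ))^(1:ℝ) :=
              Real.rpow_le_rpow_of_exponent_ge hbase0 hbase hp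
          _ = (1 + ρ/2)/(1 + ρ) := Real.rpow_one _
      have h2 : (1 + ρ/2)/(1 + ρ) ≤ 1 - ρ/3 := by
        rw [div_le_iff₀ (by linarith)]
        nlinarith
      linarith
    have hsum : ∑ i ∈ s, ‖g i‖^p ≤ ((n:ℝ) - 1 + c) * Mx^p := by
      have hsplit : ∑ i ∈ s, ‖g i‖^p = ∑ i ∈ s.erase k, ‖g i‖^p + ‖g k‖^p :=
        ((Finset.add_sum_erase s (fun i => ‖g i‖ ^ p) hk).symm).trans (add_comm _ _)
      rw [hsplit]
      have h1 : ∑ i ∈ s.erase k, ‖g i‖^p ≤ ((n:ℝ) - 1) * Mx^p := by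
        calc ∑ i ∈ s.erase k, ‖g i‖^p ≤ ∑ _i ∈ s.erase k, Mx^p :=
              Finset.sum_le_sum fun i hi =>
                Real.rpow_le_rpow (norm_nonneg _) (hjmax i (Finset.mem_of_mem_erase hi))
                  (le_of_lt hp0)
          _ = ((n:ℝ) - 1) * Mx^p := by
              rw [Finset.sum_const, Finset.card_erase_of_mem hk, hcard]
              rw [nsmul_eq_mul]
              congr 1
              have : (1:ℕ) ≤ n := by omega
              push_cast [Nat.cast_sub this]
              ring
      linarith [hmc]
    have hKle : K ≤ 1 + ρ/(3*(n:ℝ)) := min_le_right _ _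
    have hn0 : (0:ℝ) < n := by positivity
    have halg : K * ((n:ℝ) - 1 + c) ≤ n := by
      have : (1 + ρ/(3*(n:ℝ))) * ((n:ℝ) - 1 + c) ≤ n := by
        have hc' : (n:ℝ) - 1 + c ≤ n - ρ/3 := by linarith
        have h0 : (0:ℝ) ≤ (n:ℝ) - 1 + c := by
          have : (2:ℝ) ≤ n := by exact_mod_cast hn
          linarith
        calc (1 + ρ/(3*(n:ℝ))) * ((n:ℝ) - 1 + c) ≤ (1 + ρ/(3*(n:ℝ))) * ((n:ℝ) - ρ/3) :=
              mul_le_mul_of_nonneg_left hc' (by positivity)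
          _ = n - ρ^2/(9*n) := by field_simp; ring
          _ ≤ n := by
              have : 0 ≤ ρ^2/(9*(n:ℝ)) := by positivity
              linarith
      calc K * ((n:ℝ) - 1 + c) ≤ (1 + ρ/(3*(n:ℝ))) * ((n:ℝ) - 1 + c) := by
            refine mul_le_mul_of_nonneg_right hKle ?_
            have : (2:ℝ) ≤ n := by exact_mod_cast hn
            linarith
        _ ≤ n := this
    have hMxp0 : 0 ≤ Mx^p := Real.rpow_nonneg hMx0 p
    calc K * 2^n * ∑ i ∈ s, ‖g i‖^p ≤ K * 2^n * (((n:ℝ) - 1 + c) * Mx^p) := by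
          refine mul_le_mul_of_nonneg_left hsum (by positivity)
      _ = (K * ((n:ℝ) - 1 + c)) * (2^n * Mx^p) := by ring
      _ ≤ (n:ℝ) * (2^n * Mx^p) := by
          refine mul_le_mul_of_nonneg_right halg ?_
          positivity
      _ ≤ (n:ℝ) * Φ := mul_le_mul_of_nonneg_left hmax (by positivity)

lemma integrable_dirac9 {α : Type*} [MeasurableSpace α] [MeasurableSingletonClass α]
    (f : α → ℝ) (x : α) : Integrable f (Measure.dirac x) := by
  have h : f =ᵐ[Measure.dirac x] fun _ => f x := by
    rw [ae_dirac_eq]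
    exact Filter.eventually_pure.2 rfl
  exact (integrable_const (f x)).congr h.symm

section Rad

variable {Ω : Type*} [MeasurableSpace Ω] (P : Measure Ω) [IsProbabilityMeasure P]
  (r : ℕ → Ω → ℝ) (hmeas : ∀ i, Measurable (r i))
  (hdist : ∀ i, Measure.map (r i) P
      = (2 : ENNReal)⁻¹ • (Measure.dirac (1 : ℝ) + Measure.dirac (-1 : ℝ)))

include hmeas hdist

lemma haer9 (i : ℕ) : ∀ᵐ ω ∂P, r i ω = 1 ∨ r i ω = -1 := by
  have hms : MeasurableSet ({1, -1} : Set ℝ) := by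
    rw [Set.insert_eq]
    exact (measurableSet_singleton _).union (measurableSet_singleton _)
  rw [ae_iff]
  have hset : {ω | ¬(r i ω = 1 ∨ r i ω = -1)} = r i ⁻¹' ({1, -1} : Set ℝ)ᶜ := by
    ext ω; simp [not_or]
  rw [hset, ← Measure.map_apply (hmeas i) hms.compl, hdist i]
  simp only [Measure.smul_apply, Measure.add_apply]
  rw [Measure.dirac_apply' _ hms.compl, Measure.dirac_apply' _ hms.compl]
  have h1 : (1:ℝ) ∈ ({1, -1} : Set ℝ) := by simp
  have h2 : (-1:ℝ) ∈ ({1, -1} : Set ℝ) := by simp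
  rw [Set.indicator_of_notMem (by simpa using h1), Set.indicator_of_notMem (by simpa using h2)]
  simp

variable {E : Type*} [NormedAddCommGroup E] [NormedSpace ℝ E]

lemma int9 {p : ℝ} (hp0 : 0 < p) (s : Finset ℕ) (g : ℕ → E) (v : E) :
    Integrable (fun ω => ‖v + ∑ i ∈ s, r i ω • g i‖ ^ p) P := by
  have hsm : StronglyMeasurable (fun ω => v + ∑ i ∈ s, r i ω • g i) := by
    refine stronglyMeasurable_const.add ?_
    refine Finset.stronglyMeasurable_fun_sum s fun i _ => ?_
    exact (hmeas i).stronglyMeasurable.smul_const (g i)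
  have hmeas' : AEStronglyMeasurable (fun ω => ‖v + ∑ i ∈ s, r i ω • g i‖ ^ p) P := by
    have : Continuous fun x : ℝ => x ^ p := Real.continuous_rpow_const hp0.le
    exact (this.comp_stronglyMeasurable hsm.norm).aestronglyMeasurable
  have hb : ∀ᵐ ω ∂P, ∀ i ∈ s, r i ω = 1 ∨ r i ω = -1 := by
    have h0 := (ae_ball_iff s.countable_toSet).2
      (fun i (_ : i ∈ (↑s : Set ℕ)) => haer9 P r hmeas hdist i)
    filter_upwards [h0] with ω h i hi using h i hi
  refine Integrable.mono' (integrable_const ((‖v‖ + ∑ i ∈ s, ‖g i‖) ^ p)) hmeas' ?_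
  filter_upwards [hb] with ω hω
  rw [Real.norm_eq_abs, abs_of_nonneg (Real.rpow_nonneg (norm_nonneg _) p)]
  refine Real.rpow_le_rpow (norm_nonneg _) ?_ hp0.le
  refine (norm_add_le _ _).trans (add_le_add_right ?_ _)
  refine (norm_sum_le _ _).trans ?_
  refine Finset.sum_le_sum fun i hi => ?_
  rw [norm_smul, Real.norm_eq_abs]
  rcases hω i hi with h | h <;> rw [h] <;> simp

lemma radD (hindep : iIndepFun (m := fun _ => Real.measurableSpace) r P)
    {p : ℝ} (hp0 : 0 < p) (s : Finset ℕ) (g : ℕ → E) :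
    ∀ v : E, ∫ ω, ‖v + ∑ i ∈ s, r i ω • g i‖ ^ p ∂P
      = (∑ T ∈ s.powerset, ‖v + ∑ i ∈ s, sg9 T i • g i‖ ^ p) / 2 ^ s.card := by
  induction s using Finset.induction_on with
  | empty => intro v; simp
  | @insert a s ha IH =>
    intro v
    set Y : Ω → (↥s → ℝ) := fun ω i => r i.1 ω with hY
    have hYmeas : Measurable Y := measurable_pi_lambda _ fun i => hmeas i.1
    have hIndep : IndepFun (r a) Y P := by
      have h0 := hindep.indepFun_finset {a} s (Finset.disjoint_singleton_left.mpr ha) hmeas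
      exact h0.comp (measurable_pi_apply (⟨a, Finset.mem_singleton_self a⟩ : ({a} : Finset ℕ)))
        measurable_id
    have hpairmeas : Measurable fun ω => (r a ω, Y ω) := (hmeas a).prodMk hYmeas
    have hmap : Measure.map (fun ω => (r a ω, Y ω)) P
        = (Measure.map (r a) P).prod (Measure.map Y P) :=
      (indepFun_iff_map_prod_eq_prod_map_map (hmeas a).aemeasurable hYmeas.aemeasurable).1 hIndep
    set H : ℝ × (↥s → ℝ) → ℝ := fun z => ‖v + z.1 • g a + ∑ i : ↥s, z.2 i • g i.1‖ ^ p with hH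
    have hHcont : Continuous H := by
      have h1 : Continuous fun z : ℝ × (↥s → ℝ) => v + z.1 • g a + ∑ i : ↥s, z.2 i • g i.1 := by
        refine (continuous_const.add (continuous_fst.smul continuous_const)).add ?_
        exact continuous_finset_sum _ fun i _ =>
          ((continuous_apply i).comp continuous_snd).smul continuous_const
      exact (Real.continuous_rpow_const hp0.le).comp h1.norm
    have hpt : ∀ ω, ‖v + ∑ i ∈ insert a s, r i ω • g i‖ ^ p = H (r a ω, Y ω) := by
      intro ω
      show _ = ‖v + r a ω • g a + ∑ i : ↥s, r i.1 ω • g i.1‖ ^ p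
      rw [Finset.sum_coe_sort s fun i => r i ω • g i, Finset.sum_insert ha, ← add_assoc]
    have hint0 : Integrable (fun ω => H (r a ω, Y ω)) P := by
      refine (int9 P r hmeas hdist hp0 (insert a s) g v).congr ?_
      exact Filter.Eventually.of_forall hpt
    haveI : IsProbabilityMeasure (Measure.map Y P) :=
      Measure.isProbabilityMeasure_map hYmeas.aemeasurable
    haveI : IsProbabilityMeasure (Measure.map (r a) P) :=
      Measure.isProbabilityMeasure_map (hmeas a).aemeasurable
    have hintH : Integrable H ((Measure.map (r a) P).prod (Measure.map Y P)) := by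
      rw [← hmap, integrable_map_measure hHcont.aestronglyMeasurable hpairmeas.aemeasurable]
      exact hint0
    have hG : ∀ t : ℝ, ∫ y, H (t, y) ∂(Measure.map Y P)
        = ∫ ω, ‖(v + t • g a) + ∑ i ∈ s, r i ω • g i‖ ^ p ∂P := by
      intro t
      have hc : AEStronglyMeasurable (fun y : ↥s → ℝ => H (t, y)) (Measure.map Y P) :=
        Continuous.aestronglyMeasurable
          (hHcont.comp (continuous_const.prodMk continuous_id) :
            Continuous fun y : ↥s → ℝ => H (t, y))
      rw [integral_map hYmeas.aemeasurable hc]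
      refine integral_congr_ae (Filter.Eventually.of_forall fun ω => ?_)
      show ‖v + t • g a + ∑ i : ↥s, r i.1 ω • g i.1‖ ^ p = _
      rw [Finset.sum_coe_sort s fun i => r i ω • g i]
    have main : ∫ ω, ‖v + ∑ i ∈ insert a s, r i ω • g i‖ ^ p ∂P
        = ((2:ENNReal)⁻¹).toReal •
          ((∫ ω, ‖(v + (1:ℝ) • g a) + ∑ i ∈ s, r i ω • g i‖ ^ p ∂P)
            + ∫ ω, ‖(v + (-1:ℝ) • g a) + ∑ i ∈ s, r i ω • g i‖ ^ p ∂P) := by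
      calc ∫ ω, ‖v + ∑ i ∈ insert a s, r i ω • g i‖ ^ p ∂P
          = ∫ ω, H (r a ω, Y ω) ∂P :=
            integral_congr_ae (Filter.Eventually.of_forall hpt)
        _ = ∫ z, H z ∂(Measure.map (fun ω => (r a ω, Y ω)) P) :=
            (integral_map hpairmeas.aemeasurable
              (by rw [hmap]; exact hHcont.aestronglyMeasurable)).symm
        _ = ∫ z, H z ∂((Measure.map (r a) P).prod (Measure.map Y P)) := by rw [hmap]
        _ = ∫ t, ∫ y, H (t, y) ∂(Measure.map Y P) ∂(Measure.map (r a) P) :=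
            integral_prod H hintH
        _ = ((2:ENNReal)⁻¹).toReal •
            ((∫ y, H (1, y) ∂(Measure.map Y P)) + ∫ y, H (-1, y) ∂(Measure.map Y P)) := by
            rw [hdist a, integral_smul_measure,
              integral_add_measure (integrable_dirac9 _ 1) (integrable_dirac9 _ (-1)),
              integral_dirac, integral_dirac]
        _ = _ := by rw [hG 1, hG (-1)]
    rw [main, IH (v + (1:ℝ) • g a), IH (v + (-1:ℝ) • g a),
      Finset.sum_powerset_insert ha, Finset.card_insert_of_notMem ha]
    have ep9 : ∀ T ∈ s.powerset,
        ‖v + ∑ i ∈ insert a s, sg9 (insert a T) i • g i‖ ^ p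
          = ‖(v + (1:ℝ) • g a) + ∑ i ∈ s, sg9 T i • g i‖ ^ p := by
      intro T hT
      rw [(sum_insert_sg ha (Finset.mem_powerset.1 hT) g).2, one_smul]
      congr 1
      congr 1
      abel
    have em9 : ∀ T ∈ s.powerset,
        ‖v + ∑ i ∈ insert a s, sg9 T i • g i‖ ^ p
          = ‖(v + (-1:ℝ) • g a) + ∑ i ∈ s, sg9 T i • g i‖ ^ p := by
      intro T hT
      rw [(sum_insert_sg ha (Finset.mem_powerset.1 hT) g).1, neg_one_smul]
      congr 1
      congr 1
      abel
    rw [Finset.sum_congr rfl em9, Finset.sum_congr rfl ep9]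
    have h2 : ((2:ENNReal)⁻¹).toReal = (2:ℝ)⁻¹ := by
      simp
    rw [h2, smul_eq_mul, pow_succ]
    have h2c : (0:ℝ) < 2 ^ s.card := by positivity
    field_simp
    ring

end Rad

section LpStuff

variable {M : Type*} [MeasurableSpace M] {μ : Measure M}
  {X : Type*} [NormedAddCommGroup X] [NormedSpace ℝ X]

lemma coeFn_sum_smul {q : ENNReal} [Fact (1 ≤ q)] (s : Finset ℕ) (c : ℕ → ℝ)
    (f : ℕ → Lp X q μ) :
    (↑↑(∑ i ∈ s, c i • f i) : M → X) =ᵐ[μ] fun w => ∑ i ∈ s, c i • (f i w) := by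
  induction s using Finset.induction_on with
  | empty => simp only [Finset.sum_empty]; exact Lp.coeFn_zero X q μ
  | @insert a s ha IH =>
    rw [Finset.sum_insert ha]
    filter_upwards [Lp.coeFn_add (c a • f a) (∑ i ∈ s, c i • f i),
      Lp.coeFn_smul (c a) (f a), IH] with w h1 h2 h3
    rw [Finset.sum_insert ha, h1]
    simp only [Pi.add_apply]
    rw [h2, h3]
    rfl

lemma norm_rpow_eq_integral {p : ℝ} (hp0 : 0 < p) [Fact (1 ≤ ENNReal.ofReal p)]
    (F : Lp X (ENNReal.ofReal p) μ) :
    ‖F‖ ^ p = ∫ w, ‖F w‖ ^ p ∂μ := by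
  have hq0 : ENNReal.ofReal p ≠ 0 := by
    simp [ENNReal.ofReal_eq_zero, not_le, hp0]
  have hqT : ENNReal.ofReal p ≠ ⊤ := ENNReal.ofReal_ne_top
  have h1 := (Lp.memLp F).eLpNorm_eq_integral_rpow_norm hq0 hqT
  have htr : (ENNReal.ofReal p).toReal = p := ENNReal.toReal_ofReal hp0.le
  rw [Lp.norm_def, h1, htr, ENNReal.toReal_ofReal (by positivity)]
  exact Real.rpow_inv_rpow
    (integral_nonneg fun w => Real.rpow_nonneg (norm_nonneg _) p) (ne_of_gt hp0)

end LpStuff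

theorem stmt9 {Ω : Type*} [MeasurableSpace Ω] (P : Measure Ω) [IsProbabilityMeasure P]
    {X : Type*} [NormedAddCommGroup X] [NormedSpace ℝ X] [CompleteSpace X]
    {M : Type*} [MeasurableSpace M] (μ : Measure M)
    (p : ℝ) (hp : 1 < p) [Fact (1 ≤ ENNReal.ofReal p)]
    (n : ℕ) (hn : 2 ≤ n)
    (r : ℕ → Ω → ℝ) (hmeas : ∀ i, Measurable (r i))
    (hindep : iIndepFun (m := fun _ => Real.measurableSpace) r P)
    (hdist : ∀ i, Measure.map (r i) P
      = (2 : ENNReal)⁻¹ • (Measure.dirac (1 : ℝ) + Measure.dirac (-1 : ℝ)))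
    (ρ : ℝ) (hρ0 : 0 < ρ) (hρ1 : ρ < 1 / 2)
    (hX : ∀ x : ℕ → X, (∀ i ∈ Finset.Icc 1 n, ‖x i‖ = 1) →
      (1 + ρ) ^ p ≤ ∫ ω, ‖∑ i ∈ Finset.Icc 1 n, r i ω • x i‖ ^ p ∂P)
    (f : ℕ → Lp X (ENNReal.ofReal p) μ) (hf : ∀ i ∈ Finset.Icc 1 n, ‖f i‖ = 1) :
    min ((1 + ρ / 2) ^ p) (1 + ρ / (3 * n))
      ≤ ∫ ω, ‖∑ i ∈ Finset.Icc 1 n, r i ω • f i‖ ^ p ∂P := by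
  classical
  have hp0 : 0 < p := lt_trans one_pos hp
  have hp1 : 1 ≤ p := hp.le
  set s := Finset.Icc 1 n with hs
  have hcard : s.card = n := by rw [hs, Nat.card_Icc]; omega
  have hn0 : (0:ℝ) < n := by
    have : (0:ℕ) < n := by omega
    exact_mod_cast this
  have hq0 : ENNReal.ofReal p ≠ 0 := by simp [ENNReal.ofReal_eq_zero, not_le, hp0]
  have hqT : ENNReal.ofReal p ≠ ⊤ := ENNReal.ofReal_ne_top
  have htr : (ENNReal.ofReal p).toReal = p := ENNReal.toReal_ofReal hp0.le
  -- finite form of hX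
  have hXfin : ∀ u : ℕ → X, (∀ i ∈ s, ‖u i‖ = 1) →
      (1 + ρ) ^ p * 2 ^ n ≤ ∑ T ∈ s.powerset, ‖∑ i ∈ s, sg9 T i • u i‖ ^ p := by
    intro u hu
    have h1 := hX u hu
    have h2 := radD P r hmeas hdist hindep hp0 s u 0
    simp only [zero_add] at h2
    rw [h2, hcard, le_div_iff₀ (by positivity)] at h1
    exact h1
  -- main reduction over Ω
  have hmain := radD P r hmeas hdist hindep hp0 s f 0
  simp only [zero_add] at hmain
  rw [hmain, hcard, le_div_iff₀ (by positivity)]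
  set K := min ((1 + ρ / 2) ^ p) (1 + ρ / (3 * (n:ℝ))) with hK
  -- integrability facts on M
  have hG_int : ∀ T ∈ s.powerset,
      Integrable (fun w => ‖(∑ i ∈ s, sg9 T i • f i : Lp X (ENNReal.ofReal p) μ) w‖ ^ p) μ := by
    intro T _
    have h := (Lp.memLp (∑ i ∈ s, sg9 T i • f i)).integrable_norm_rpow hq0 hqT
    rwa [htr] at h
  have hf_int : ∀ i, Integrable (fun w => ‖f i w‖ ^ p) μ := by
    intro i
    have h := (Lp.memLp (f i)).integrable_norm_rpow hq0 hqT
    rwa [htr] at h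
  -- norm identity
  have hA : ∑ T ∈ s.powerset, ‖(∑ i ∈ s, sg9 T i • f i : Lp X (ENNReal.ofReal p) μ)‖ ^ p
      = ∫ w, ∑ T ∈ s.powerset,
          ‖(∑ i ∈ s, sg9 T i • f i : Lp X (ENNReal.ofReal p) μ) w‖ ^ p ∂μ := by
    rw [integral_finset_sum _ hG_int]
    exact Finset.sum_congr rfl fun T _ => norm_rpow_eq_integral hp0 _
  -- a.e. representation
  have hae : ∀ᵐ w ∂μ, ∀ T ∈ s.powerset,
      (∑ i ∈ s, sg9 T i • f i : Lp X (ENNReal.ofReal p) μ) w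
        = ∑ i ∈ s, sg9 T i • (f i w) := by
    have h0 := (ae_ball_iff (s.powerset.countable_toSet)).2
      (fun T (_ : T ∈ (↑s.powerset : Set (Finset ℕ))) => coeFn_sum_smul s (sg9 T) f)
    filter_upwards [h0] with w h T hT using h T hT
  -- pointwise bound
  have hpt : ∀ᵐ w ∂μ, K * 2 ^ n * (1 / (n:ℝ)) * ∑ i ∈ s, ‖f i w‖ ^ p
      ≤ ∑ T ∈ s.powerset,
          ‖(∑ i ∈ s, sg9 T i • f i : Lp X (ENNReal.ofReal p) μ) w‖ ^ p := by
    filter_upwards [hae] with w hw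
    have hcore := core9 hp1 hρ0 hρ1 hn hcard hXfin (fun i => f i w)
    have heq : ∑ T ∈ s.powerset,
        ‖(∑ i ∈ s, sg9 T i • f i : Lp X (ENNReal.ofReal p) μ) w‖ ^ p
        = ∑ T ∈ s.powerset, ‖∑ i ∈ s, sg9 T i • (f i w)‖ ^ p :=
      Finset.sum_congr rfl fun T hT => by rw [hw T hT]
    rw [heq]
    have hrw : K * 2 ^ n * (1 / (n:ℝ)) * ∑ i ∈ s, ‖f i w‖ ^ p
        = (K * 2 ^ n * ∑ i ∈ s, ‖f i w‖ ^ p) / n := by ring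
    rw [hrw, div_le_iff₀ hn0]
    calc K * 2 ^ n * ∑ i ∈ s, ‖f i w‖ ^ p
        ≤ (n:ℝ) * ∑ T ∈ s.powerset, ‖∑ i ∈ s, sg9 T i • (f i w)‖ ^ p := hcore
      _ = (∑ T ∈ s.powerset, ‖∑ i ∈ s, sg9 T i • (f i w)‖ ^ p) * n := mul_comm _ _
  -- integrate the pointwise bound
  have hint1 : Integrable (fun w => ∑ T ∈ s.powerset,
      ‖(∑ i ∈ s, sg9 T i • f i : Lp X (ENNReal.ofReal p) μ) w‖ ^ p) μ :=
    integrable_finset_sum _ hG_int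
  have hint2 : Integrable (fun w =>
      K * 2 ^ n * (1 / (n:ℝ)) * ∑ i ∈ s, ‖f i w‖ ^ p) μ :=
    (integrable_finset_sum _ fun i _ => hf_int i).const_mul _
  have hmono := integral_mono_ae hint2 hint1 hpt
  rw [hA]
  refine le_trans ?_ hmono
  rw [integral_const_mul, integral_finset_sum _ fun i _ => hf_int i]
  have hone : ∀ i ∈ s, ∫ w, ‖f i w‖ ^ p ∂μ = 1 := by
    intro i hi
    rw [← norm_rpow_eq_integral hp0 (f i), hf i hi, Real.one_rpow]
  rw [Finset.sum_congr rfl hone, Finset.sum_const, hcard]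
  simp only [nsmul_eq_mul, mul_one]
  rw [show K * 2 ^ n * (1 / (n:ℝ)) * n = K * 2 ^ n * ((1 / (n:ℝ)) * n) by ring,
    one_div, inv_mul_cancel₀ (ne_of_gt hn0), mul_one]
end

section
/- Let X be a real Banach space, φ a strictly convex increasing function on [0,∞) with φ(0)=0, and r a symmetric random variable with ‖r‖_∞ = 1. A point x in the unit sphere of X is an extreme point of the closed unit ball if and only if: for every y ∈ X, E[φ(‖x + r y‖)] = φ(1) implies y = 0. -/
open MeasureTheory

private lemma convA {φ : ℝ → ℝ} (hφ : StrictConvexOn ℝ (Set.Ici 0) φ)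
    (hφm : MonotoneOn φ (Set.Ici 0)) {a b : ℝ} (ha : 0 ≤ a) (hb : 0 ≤ b)
    (hab : 2 ≤ a + b) : 2 * φ 1 ≤ φ a + φ b := by
  have h1 : φ 1 ≤ φ ((a + b) / 2) :=
    hφm (Set.mem_Ici.2 zero_le_one) (Set.mem_Ici.2 (by linarith)) (by linarith)
  have h2 := hφ.convexOn.2 (Set.mem_Ici.2 ha) (Set.mem_Ici.2 hb)
    (by norm_num : (0:ℝ) ≤ 1/2) (by norm_num : (0:ℝ) ≤ 1/2) (by norm_num)
  simp only [smul_eq_mul] at h2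
  have e : (1/2:ℝ) * a + (1/2) * b = (a + b) / 2 := by ring
  rw [e] at h2
  linarith

private lemma convB {φ : ℝ → ℝ} (hφ : StrictConvexOn ℝ (Set.Ici 0) φ)
    (hφm : MonotoneOn φ (Set.Ici 0)) {a b : ℝ} (ha : 0 ≤ a) (hb : 0 ≤ b)
    (hab : 2 ≤ a + b) (heq : φ a + φ b = 2 * φ 1) : a = 1 ∧ b = 1 := by
  have hab1 : a = b := by
    by_contra hne
    have h2 := hφ.2 (Set.mem_Ici.2 ha) (Set.mem_Ici.2 hb) hne
      (by norm_num : (0:ℝ) < 1/2) (by norm_num : (0:ℝ) < 1/2) (by norm_num)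
    simp only [smul_eq_mul] at h2
    have e : (1/2:ℝ) * a + (1/2) * b = (a + b) / 2 := by ring
    rw [e] at h2
    have h1 : φ 1 ≤ φ ((a + b) / 2) :=
      hφm (Set.mem_Ici.2 zero_le_one) (Set.mem_Ici.2 (by linarith)) (by linarith)
    linarith
  subst hab1
  have hφa : φ a = φ 1 := by linarith
  have ha1 : 1 ≤ a := by linarith
  rcases eq_or_lt_of_le ha1 with h | h
  · exact ⟨h.symm, h.symm⟩
  · exfalso
    have h2 := hφ.2 (Set.mem_Ici.2 zero_le_one) (Set.mem_Ici.2 ha) (ne_of_lt h)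
      (by norm_num : (0:ℝ) < 1/2) (by norm_num : (0:ℝ) < 1/2) (by norm_num)
    simp only [smul_eq_mul] at h2
    have e : (1/2:ℝ) * 1 + (1/2) * a = (1 + a) / 2 := by ring
    rw [e] at h2
    have h1 : φ 1 ≤ φ ((1 + a) / 2) :=
      hφm (Set.mem_Ici.2 zero_le_one) (Set.mem_Ici.2 (by linarith)) (by linarith)
    linarith

theorem stmt10 {Ω : Type*} [MeasurableSpace Ω] (P : Measure Ω) [IsProbabilityMeasure P]
    {X : Type*} [NormedAddCommGroup X] [NormedSpace ℝ X]
    (r : Ω → ℝ) (hmeas : Measurable r)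
    (hsymm : Measure.map r P = Measure.map (fun ω => -(r ω)) P)
    (hnorm : eLpNorm r ⊤ P = 1)
    (φ : ℝ → ℝ) (hφ : StrictConvexOn ℝ (Set.Ici 0) φ)
    (hφm : MonotoneOn φ (Set.Ici 0)) (hφ0 : φ 0 = 0)
    (x : X) (hx : ‖x‖ = 1) :
    (∀ y : X, max ‖x + y‖ ‖x - y‖ = 1 → y = 0) ↔
      (∀ y : X, ∫ ω, φ ‖x + r ω • y‖ ∂P = φ 1 → y = 0) := by
  -- a.e. bound |r| ≤ 1
  have hr1 : ∀ᵐ ω ∂P, |r ω| ≤ 1 := by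
    have h := ae_le_eLpNormEssSup (f := r) (μ := P)
    rw [← eLpNorm_exponent_top, hnorm] at h
    filter_upwards [h] with ω hω
    have h2 : ‖r ω‖₊ ≤ 1 := by rw [enorm_eq_nnnorm] at hω; exact_mod_cast hω
    have h3 : ‖r ω‖ ≤ 1 := by exact_mod_cast h2
    rwa [Real.norm_eq_abs] at h3
  -- monotone measurable extension of φ
  set ψ : ℝ → ℝ := fun t => φ (max t 0) with hψdef
  have hψmono : Monotone ψ := fun s t hst =>
    hφm (Set.mem_Ici.2 (le_max_right s 0)) (Set.mem_Ici.2 (le_max_right t 0))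
      (max_le_max hst le_rfl)
  have hψmeas : Measurable ψ := hψmono.measurable
  have hψeq : ∀ t : ℝ, 0 ≤ t → ψ t = φ t := fun t ht => by simp [hψdef, max_eq_left ht]
  have key_meas : ∀ y : X, Measurable fun ω => ‖x + r ω • y‖ := by
    intro y
    have h1 : StronglyMeasurable fun ω => x + r ω • y :=
      stronglyMeasurable_const.add (hmeas.stronglyMeasurable.smul_const y)
    exact h1.norm.measurable
  have hφnn : ∀ t : ℝ, 0 ≤ t → 0 ≤ φ t := fun t ht => by
    rw [← hφ0]; exact hφm (Set.mem_Ici.2 le_rfl) (Set.mem_Ici.2 ht) ht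
  have key_int : ∀ y : X, Integrable (fun ω => φ ‖x + r ω • y‖) P := by
    intro y
    have hm : Measurable fun ω => φ ‖x + r ω • y‖ := by
      have e : (fun ω => φ ‖x + r ω • y‖) = fun ω => ψ ‖x + r ω • y‖ := by
        funext ω; rw [hψeq _ (norm_nonneg _)]
      rw [e]
      exact hψmeas.comp (key_meas y)
    refine Integrable.mono' (integrable_const (φ (1 + ‖y‖))) hm.aestronglyMeasurable ?_
    filter_upwards [hr1] with ω hω
    rw [Real.norm_eq_abs, abs_of_nonneg (hφnn _ (norm_nonneg _))]
    refine hφm (Set.mem_Ici.2 (norm_nonneg _)) (Set.mem_Ici.2 (by positivity)) ?_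
    calc ‖x + r ω • y‖ ≤ ‖x‖ + ‖r ω • y‖ := norm_add_le _ _
      _ ≤ 1 + ‖y‖ := by
          rw [hx, norm_smul, Real.norm_eq_abs]
          have := mul_le_mul_of_nonneg_right hω (norm_nonneg y)
          linarith
  -- symmetry transfer
  have key_symm : ∀ y : X,
      ∫ ω, φ ‖x + r ω • y‖ ∂P = ∫ ω, φ ‖x - r ω • y‖ ∂P := by
    intro y
    have hg : Measurable fun t : ℝ => ψ ‖x + t • y‖ := by
      have hc : Continuous fun t : ℝ => ‖x + t • y‖ :=
        (continuous_const.add (continuous_id.smul continuous_const)).norm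
      exact hψmeas.comp hc.measurable
    calc ∫ ω, φ ‖x + r ω • y‖ ∂P = ∫ ω, ψ ‖x + r ω • y‖ ∂P :=
          integral_congr_ae (Filter.Eventually.of_forall fun ω =>
            (hψeq _ (norm_nonneg _)).symm)
      _ = ∫ t, ψ ‖x + t • y‖ ∂(Measure.map r P) :=
          (integral_map hmeas.aemeasurable hg.aestronglyMeasurable).symm
      _ = ∫ t, ψ ‖x + t • y‖ ∂(Measure.map (fun ω => -(r ω)) P) := by rw [hsymm]
      _ = ∫ ω, ψ ‖x + (-(r ω)) • y‖ ∂P :=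
          integral_map hmeas.neg.aemeasurable hg.aestronglyMeasurable
      _ = ∫ ω, φ ‖x - r ω • y‖ ∂P := by
          refine integral_congr_ae (Filter.Eventually.of_forall fun ω => ?_)
          show ψ ‖x + (-(r ω)) • y‖ = φ ‖x - r ω • y‖
          rw [neg_smul, ← sub_eq_add_neg, hψeq _ (norm_nonneg _)]
  have hsum2 : ∀ (u : X), 2 ≤ ‖x + u‖ + ‖x - u‖ := by
    intro u
    have h := norm_add_le (x + u) (x - u)
    have e : (x + u) + (x - u) = x + x := by abel
    rw [e] at h
    have : ‖x + x‖ = 2 := by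
      rw [← two_smul ℝ x, norm_smul, hx]
      norm_num
    linarith
  have hr_ne : ∃ᶠ ω in ae P, r ω ≠ 0 := by
    by_contra h
    rw [Filter.not_frequently] at h
    simp only [not_not] at h
    have h0 : eLpNorm r ⊤ P = 0 := by
      rw [eLpNorm_congr_ae (h : r =ᵐ[P] (fun _ => 0))]
      exact eLpNorm_zero
    rw [hnorm] at h0
    exact one_ne_zero h0
  constructor
  · intro hext y hint
    have hGint : ∫ ω, φ ‖x - r ω • y‖ ∂P = φ 1 := (key_symm y).symm.trans hint
    have hFi := key_int y
    have hGi : Integrable (fun ω => φ ‖x - r ω • y‖) P := by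
      have h := key_int (-y)
      simpa [smul_neg, ← sub_eq_add_neg] using h
    set h : Ω → ℝ := fun ω => φ ‖x + r ω • y‖ + φ ‖x - r ω • y‖ - 2 * φ 1 with hh
    have hpos : 0 ≤ᵐ[P] h := by
      filter_upwards with ω
      have := convA hφ hφm (norm_nonneg (x + r ω • y)) (norm_nonneg (x - r ω • y))
        (hsum2 (r ω • y))
      simp only [hh, Pi.zero_apply]
      linarith
    have hFG : Integrable (fun ω => φ ‖x + r ω • y‖ + φ ‖x - r ω • y‖) P := hFi.add hGi
    have hhi : Integrable h P := hFG.sub (integrable_const _)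
    have hint0 : ∫ ω, h ω ∂P = 0 := by
      rw [hh]
      rw [integral_sub hFG (integrable_const _), integral_add hFi hGi, hint, hGint,
        integral_const]
      simp only [probReal_univ, one_smul]
      ring
    have hae : h =ᵐ[P] 0 := (integral_eq_zero_iff_of_nonneg_ae hpos hhi).1 hint0
    have hkey : ∀ᵐ ω ∂P, r ω = 0 ∨ y = 0 := by
      filter_upwards [hae] with ω hω
      have heq : φ ‖x + r ω • y‖ + φ ‖x - r ω • y‖ = 2 * φ 1 := by
        simp only [hh, Pi.zero_apply] at hω; linarith
      obtain ⟨h1, h2⟩ := convB hφ hφm (norm_nonneg _) (norm_nonneg _) (hsum2 (r ω • y)) heq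
      have h3 := hext (r ω • y) (by rw [h1, h2]; simp)
      exact smul_eq_zero.1 h3
    obtain ⟨ω, hω1, hω2⟩ := (hr_ne.and_eventually hkey).exists
    rcases hω2 with h | h
    · exact absurd h hω1
    · exact h
  · intro hcond y hmax
    have h1 : ‖x + y‖ ≤ 1 := le_of_le_of_eq (le_max_left _ _) hmax
    have h2 : ‖x - y‖ ≤ 1 := le_of_le_of_eq (le_max_right _ _) hmax
    have hble : ∀ t : ℝ, |t| ≤ 1 → ‖x + t • y‖ ≤ 1 := by
      intro t ht
      obtain ⟨ht1, ht2⟩ := abs_le.1 ht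
      have hdecomp : x + t • y = ((1 + t)/2) • (x + y) + ((1 - t)/2) • (x - y) := by
        rw [smul_add, smul_sub]
        have e1 : ((1 + t)/2) • x + ((1 - t)/2) • x = x := by
          rw [← add_smul]
          have : (1 + t)/2 + (1 - t)/2 = 1 := by ring
          rw [this, one_smul]
        have e2 : ((1 + t)/2) • y - ((1 - t)/2) • y = t • y := by
          rw [← sub_smul]
          have : (1 + t)/2 - (1 - t)/2 = t := by ring
          rw [this]
        calc x + t • y = (((1 + t)/2) • x + ((1 - t)/2) • x) + (((1 + t)/2) • y - ((1 - t)/2) • y) := by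
              rw [e1, e2]
          _ = _ := by abel
      rw [hdecomp]
      calc ‖((1 + t)/2) • (x + y) + ((1 - t)/2) • (x - y)‖
          ≤ ‖((1 + t)/2) • (x + y)‖ + ‖((1 - t)/2) • (x - y)‖ := norm_add_le _ _
        _ ≤ (1 + t)/2 * 1 + (1 - t)/2 * 1 := by
            rw [norm_smul, norm_smul, Real.norm_eq_abs, Real.norm_eq_abs,
              abs_of_nonneg (by linarith : (0:ℝ) ≤ (1 + t)/2),
              abs_of_nonneg (by linarith : (0:ℝ) ≤ (1 - t)/2)]
            have := mul_le_mul_of_nonneg_left h1 (by linarith : (0:ℝ) ≤ (1 + t)/2)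
            have := mul_le_mul_of_nonneg_left h2 (by linarith : (0:ℝ) ≤ (1 - t)/2)
            linarith
        _ = 1 := by ring
    apply hcond y
    have hae : ∀ᵐ ω ∂P, φ ‖x + r ω • y‖ = φ 1 := by
      filter_upwards [hr1] with ω hω
      have ha := hble (r ω) hω
      have hb : ‖x - r ω • y‖ ≤ 1 := by
        have := hble (-(r ω)) (by rwa [abs_neg])
        rwa [neg_smul, ← sub_eq_add_neg] at this
      have hs := hsum2 (r ω • y)
      have : ‖x + r ω • y‖ = 1 := by linarith
      rw [this]
    rw [integral_congr_ae hae, integral_const]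
    simp
end

section
/- Let X be a real Banach space, φ a strictly convex increasing function on [0,∞) with φ(0)=0, and r a symmetric random variable with ‖r‖_∞ = 1. A point x ∈ S_X is a strongly extreme point of B_X if and only if for every ε > 0 there exists δ > 0 such that ‖y‖ ≥ ε implies E[φ(‖x + r y‖)] ≥ φ(1) + δ. -/
open MeasureTheory

lemma strictMono_of_strictConvex (φ : ℝ → ℝ) (hφ : StrictConvexOn ℝ (Set.Ici 0) φ)
    (hφm : MonotoneOn φ (Set.Ici 0)) : StrictMonoOn φ (Set.Ici 0) := by
  intro u hu v hv huv
  rcases lt_or_ge (φ u) (φ v) with h | h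
  · exact h
  exfalso
  have h1 : φ v = φ u := le_antisymm h (hφm hu hv huv.le)
  simp only [Set.mem_Ici] at hu hv
  have hmid : (1/2 : ℝ) * u + (1/2 : ℝ) * v ∈ Set.Ici (0:ℝ) := by
    simp only [Set.mem_Ici]; nlinarith
  have hkey := hφ.2 (by simpa using hu) (by simpa using hv) (ne_of_lt huv)
      (by norm_num : (0:ℝ) < 1/2) (by norm_num : (0:ℝ) < 1/2) (by norm_num)
  have hle : φ u ≤ φ ((1/2 : ℝ) • u + (1/2 : ℝ) • v) := by
    apply hφm (by simpa using hu)
    · simpa using hmid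
    · simp only [smul_eq_mul]; nlinarith
  simp only [smul_eq_mul] at hkey hle
  nlinarith

lemma gap_lemma (φ : ℝ → ℝ) (hφ : StrictConvexOn ℝ (Set.Ici 0) φ)
    (hφm : MonotoneOn φ (Set.Ici 0)) {δ : ℝ} (hδ0 : 0 < δ) (hδ1 : δ ≤ 1) :
    ∃ c : ℝ, 0 < c ∧ ∀ a b : ℝ, 0 ≤ b → 2 ≤ a + b → 1 + δ ≤ a →
      2 * φ 1 + c ≤ φ a + φ b := by
  have hsm := strictMono_of_strictConvex φ hφ hφm
  have h1 : (1:ℝ) ∈ Set.Ici (0:ℝ) := by norm_num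
  have h1δ : (1+δ:ℝ) ∈ Set.Ici (0:ℝ) := by simp; linarith
  have hhalf : (1-δ/2:ℝ) ∈ Set.Ici (0:ℝ) := by simp; linarith
  set c1 := φ (1+δ) - φ 1 with hc1
  have hc1pos : 0 < c1 := by
    have := hsm h1 h1δ (by linarith)
    simp only [hc1]; linarith
  set s1 := c1 / δ with hs1
  have hs1pos : 0 < s1 := div_pos hc1pos hδ0
  set s2 := (φ 1 - φ (1-δ/2)) / (δ/2) with hs2
  have hs2lt : s2 < s1 := by
    have h := hφ.secant_strict_mono h1 hhalf h1δ (by intro hh; linarith)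
      (by intro hh; linarith) (by linarith)
    have e1 : (φ (1-δ/2) - φ 1) / ((1-δ/2) - 1) = s2 := by
      rw [hs2, ← neg_div_neg_eq]; ring_nf
    have e2 : (φ (1+δ) - φ 1) / ((1+δ) - 1) = s1 := by
      rw [hs1, hc1]; ring_nf
    rw [e1, e2] at h; exact h
  refine ⟨min (c1/2) ((δ/2)*(s1-s2)), lt_min (by linarith) (mul_pos (by linarith) (by linarith)), ?_⟩
  intro a b hb hab ha
  have ha0 : (0:ℝ) ≤ a := by linarith
  -- slope bound: φ a - φ 1 ≥ (a-1) * s1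
  have hslope_a : (a - 1) * s1 ≤ φ a - φ 1 := by
    rcases eq_or_lt_of_le ha with heq | hlt
    · rw [← heq]; rw [hs1]; field_simp; apply le_of_eq; rw [hc1]; ring
    · have h := hφ.convexOn.secant_mono h1 h1δ (Set.mem_Ici.mpr ha0)
        (by intro hh; linarith) (by intro hh; linarith) (by linarith)
      have e2 : (φ (1+δ) - φ 1) / ((1+δ) - 1) = s1 := by rw [hs1, hc1]; ring_nf
      rw [e2] at h
      have hA : (0:ℝ) < a - 1 := by linarith
      calc (a-1) * s1 ≤ (a-1) * ((φ a - φ 1)/(a-1)) := by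
            apply mul_le_mul_of_nonneg_left h hA.le
        _ = φ a - φ 1 := by field_simp
  rcases le_or_gt 1 b with hb1 | hb1
  · -- b ≥ 1 : φ b ≥ φ 1
    have h2 : φ 1 ≤ φ b := hφm h1 (Set.mem_Ici.mpr hb) hb1
    have h3 : δ * s1 ≤ (a-1) * s1 := by
      apply mul_le_mul_of_nonneg_right (by linarith) hs1pos.le
    have h4 : δ * s1 = c1 := by rw [hs1]; field_simp
    have := min_le_left (c1/2) ((δ/2)*(s1-s2))
    nlinarith
  · -- b < 1 : φ 1 - φ b ≤ (1-b) * (slope from b to 1)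
    have hbmem : b ∈ Set.Ici (0:ℝ) := Set.mem_Ici.mpr hb
    rcases le_or_gt (1 - δ/2) b with hbig | hsmall
    · -- φ 1 - φ b ≤ (1-b) * s1, and a-1 ≥ δ, 1-b ≤ δ/2
      have h : (φ b - φ 1) / (b - 1) ≤ s1 := by
        have h := hφ.convexOn.secant_mono h1 hbmem h1δ
          (by intro hh; linarith) (by intro hh; linarith) (by linarith)
        have e2 : (φ (1+δ) - φ 1) / ((1+δ) - 1) = s1 := by rw [hs1, hc1]; ring_nf
        rw [e2] at h; exact h
      have hB : (0:ℝ) < 1 - b := by linarith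
      have h5 : φ 1 - φ b ≤ (1-b) * s1 := by
        have := mul_le_mul_of_nonneg_left h hB.le
        have hne : b - 1 ≠ 0 := by linarith
        have e : (1-b) * ((φ b - φ 1)/(b-1)) = φ 1 - φ b := by
          field_simp; ring
        nlinarith [this, e]
      have h6 : (1-b) * s1 ≤ (δ/2) * s1 := by
        apply mul_le_mul_of_nonneg_right (by linarith) hs1pos.le
      have h7 : (δ/2) * s1 = c1/2 := by rw [hs1]; field_simp
      have h8 : δ * s1 ≤ (a-1)*s1 :=
        mul_le_mul_of_nonneg_right (by linarith) hs1pos.le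
      have h9 : δ * s1 = c1 := by rw [hs1]; field_simp
      have := min_le_left (c1/2) ((δ/2)*(s1-s2))
      nlinarith
    · -- b < 1 - δ/2 : slope(b,1) ≤ s2
      have h : (φ b - φ 1) / (b - 1) ≤ s2 := by
        have h := hφ.convexOn.secant_mono h1 hbmem hhalf
          (by intro hh; linarith) (by intro hh; linarith) (by linarith)
        have e1 : (φ (1-δ/2) - φ 1) / ((1-δ/2) - 1) = s2 := by
          rw [hs2, ← neg_div_neg_eq]; ring_nf
        rw [e1] at h; exact h
      have hB : (0:ℝ) < 1 - b := by linarith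
      have h5 : φ 1 - φ b ≤ (1-b) * s2 := by
        have := mul_le_mul_of_nonneg_left h hB.le
        have hne : b - 1 ≠ 0 := by linarith
        have e : (1-b) * ((φ b - φ 1)/(b-1)) = φ 1 - φ b := by
          field_simp; ring
        nlinarith [this, e]
      -- a - 1 ≥ 1 - b, so φa - φ1 ≥ (1-b) s1 ; gap ≥ (1-b)(s1-s2) ≥ (δ/2)(s1-s2)
      have h6 : (1-b) * s1 ≤ (a-1) * s1 :=
        mul_le_mul_of_nonneg_right (by linarith) hs1pos.le
      have h7 : (δ/2) * (s1 - s2) ≤ (1-b) * (s1 - s2) :=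
        mul_le_mul_of_nonneg_right (by linarith) (by linarith)
      have := min_le_right (c1/2) ((δ/2)*(s1-s2))
      nlinarith


theorem stmt11 {Ω : Type*} [MeasurableSpace Ω] (P : Measure Ω) [IsProbabilityMeasure P]
    {X : Type*} [NormedAddCommGroup X] [NormedSpace ℝ X]
    (r : Ω → ℝ) (hmeas : Measurable r)
    (hsymm : Measure.map r P = Measure.map (fun ω => -(r ω)) P)
    (hnorm : eLpNorm r ⊤ P = 1)
    (φ : ℝ → ℝ) (hφ : StrictConvexOn ℝ (Set.Ici 0) φ)
    (hφm : MonotoneOn φ (Set.Ici 0)) (hφ0 : φ 0 = 0)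
    (x : X) (hx : ‖x‖ = 1) :
    (∀ ε : ℝ, 0 < ε → ∃ δ : ℝ, 0 < δ ∧
        ∀ y : X, ε ≤ ‖y‖ → 1 + δ ≤ max ‖x + y‖ ‖x - y‖) ↔
      (∀ ε : ℝ, 0 < ε → ∃ δ : ℝ, 0 < δ ∧
        ∀ y : X, ε ≤ ‖y‖ → φ 1 + δ ≤ ∫ ω, φ ‖x + r ω • y‖ ∂P) := by
  -- basic facts
  have hsm := strictMono_of_strictConvex φ hφ hφm
  have hr1 : ∀ᵐ ω ∂P, |r ω| ≤ 1 := by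
    have h := ae_le_eLpNormEssSup (f := r) (μ := P)
    rw [← eLpNorm_exponent_top, hnorm] at h
    filter_upwards [h] with ω hω
    have h1 : ‖r ω‖₊ ≤ 1 := by exact_mod_cast (show ((‖r ω‖₊ : ENNReal)) ≤ 1 from hω)
    calc |r ω| = (‖r ω‖₊ : ℝ) := by simp [Real.norm_eq_abs]
      _ ≤ 1 := by exact_mod_cast h1
  have hmono : Monotone (fun t : ℝ => φ (max t 0)) := fun s t hst =>
    hφm (Set.mem_Ici.mpr (le_max_right _ _)) (Set.mem_Ici.mpr (le_max_right _ _)) (max_le_max hst le_rfl)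
  have hFmeas : ∀ y : X, Measurable (fun t : ℝ => φ ‖x + t • y‖) := by
    intro y
    have he : (fun t : ℝ => φ ‖x + t • y‖)
        = (fun t => φ (max t 0)) ∘ (fun t : ℝ => ‖x + t • y‖) := by
      funext t; simp [Function.comp, max_eq_left (norm_nonneg _)]
    rw [he]
    exact hmono.measurable.comp
      ((continuous_const.add (continuous_id.smul continuous_const)).norm).measurable
  have hmeasΩ : ∀ y : X, Measurable (fun ω => φ ‖x + r ω • y‖) :=
    fun y => (hFmeas y).comp hmeas
  have hnn : ∀ t : ℝ, 0 ≤ t → 0 ≤ φ t := by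
    intro t ht
    have := hφm (Set.mem_Ici.mpr le_rfl) (Set.mem_Ici.mpr ht) ht
    rw [hφ0] at this; exact this
  have hInt : ∀ y : X, Integrable (fun ω => φ ‖x + r ω • y‖) P := by
    intro y
    refine (integrable_const (φ (1 + ‖y‖))).mono' (hmeasΩ y).aestronglyMeasurable ?_
    filter_upwards [hr1] with ω hω
    rw [Real.norm_eq_abs, abs_of_nonneg (hnn _ (norm_nonneg _))]
    apply hφm (Set.mem_Ici.mpr (norm_nonneg _))
      (Set.mem_Ici.mpr (by positivity : (0:ℝ) ≤ 1 + ‖y‖))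
    calc ‖x + r ω • y‖ ≤ ‖x‖ + ‖r ω • y‖ := norm_add_le _ _
      _ = 1 + |r ω| * ‖y‖ := by rw [hx, norm_smul, Real.norm_eq_abs]
      _ ≤ 1 + 1 * ‖y‖ := by nlinarith [norm_nonneg y]
      _ = 1 + ‖y‖ := by ring
  have hneg : ∀ y : X, (fun ω => φ ‖x - r ω • y‖) = (fun ω => φ ‖x + r ω • (-y)‖) := by
    intro y; funext ω; rw [smul_neg, ← sub_eq_add_neg]
  have hsymInt : ∀ y : X, ∫ ω, φ ‖x + r ω • y‖ ∂P = ∫ ω, φ ‖x - r ω • y‖ ∂P := by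
    intro y
    have h1 : ∫ ω, φ ‖x + r ω • y‖ ∂P = ∫ t, φ ‖x + t • y‖ ∂(Measure.map r P) :=
      (integral_map hmeas.aemeasurable (hFmeas y).aestronglyMeasurable).symm
    have h2 : ∫ t, φ ‖x + t • y‖ ∂(Measure.map (fun ω => -(r ω)) P)
        = ∫ ω, φ ‖x + (-(r ω)) • y‖ ∂P :=
      integral_map (hmeas.neg).aemeasurable (hFmeas y).aestronglyMeasurable
    rw [h1, hsymm, h2]
    congr 1; funext ω; rw [neg_smul, ← sub_eq_add_neg]
  constructor
  · -- hard direction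
    intro hL ε hε
    obtain ⟨δ0, hδ0, hmax⟩ := hL (ε/2) (by linarith)
    set δ := min δ0 1 with hδdef
    obtain ⟨c, hc, hgap⟩ := gap_lemma φ hφ hφm (lt_min hδ0 one_pos) (min_le_right _ _)
    set B : Set Ω := {ω | 1/2 ≤ |r ω|} with hBdef
    have hB : MeasurableSet B := measurableSet_le measurable_const hmeas.abs
    have hPB : 0 < (P B).toReal := by
      refine ENNReal.toReal_pos ?_ (measure_ne_top P B)
      intro h0
      have hae : ∀ᵐ ω ∂P, ω ∉ B := (measure_eq_zero_iff_ae_notMem (μ := P)).mp h0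
      have hbound : ∀ᵐ ω ∂P, ‖r ω‖ ≤ 1/2 := by
        filter_upwards [hae] with ω hω
        have h2 : ¬ ((1:ℝ)/2 ≤ |r ω|) := hω
        rw [Real.norm_eq_abs]
        linarith [not_le.mp h2]
      have := eLpNormEssSup_le_of_ae_bound hbound
      rw [← eLpNorm_exponent_top, hnorm] at this
      have hlt : ENNReal.ofReal (1/2) < 1 := ENNReal.ofReal_lt_one.mpr (by norm_num)
      exact (not_le.mpr hlt) this
    refine ⟨c/2 * (P B).toReal, by positivity, ?_⟩
    intro y hy
    have hsum_ae : ∀ᵐ ω ∂P, 2 * φ 1 + B.indicator (fun _ => c) ω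
        ≤ φ ‖x + r ω • y‖ + φ ‖x - r ω • y‖ := by
      filter_upwards [hr1] with ω hω
      set t := r ω with ht
      have hab2 : 2 ≤ ‖x + t • y‖ + ‖x - t • y‖ := by
        have he : (x + t • y) + (x - t • y) = (2:ℝ) • x := by module
        calc (2:ℝ) = ‖(2:ℝ) • x‖ := by
              rw [norm_smul, hx, Real.norm_eq_abs]; norm_num
          _ = ‖(x + t • y) + (x - t • y)‖ := by rw [he]
          _ ≤ ‖x + t • y‖ + ‖x - t • y‖ := norm_add_le _ _
      by_cases hmem : ω ∈ B
      · rw [Set.indicator_of_mem hmem]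
        have hhalf : (1:ℝ)/2 ≤ |t| := hmem
        have hty : ε/2 ≤ ‖t • y‖ := by
          rw [norm_smul, Real.norm_eq_abs]
          nlinarith [norm_nonneg y]
        have hM := hmax (t • y) hty
        have hδle : 1 + δ ≤ max ‖x + t • y‖ ‖x - t • y‖ := by
          have : δ ≤ δ0 := min_le_left _ _
          linarith
        rcases le_total ‖x - t • y‖ ‖x + t • y‖ with hc' | hc'
        · have h1δ : 1 + δ ≤ ‖x + t • y‖ := by
            rwa [max_eq_left hc'] at hδle
          have := hgap ‖x + t • y‖ ‖x - t • y‖ (norm_nonneg _) hab2 h1δ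
          linarith
        · have h1δ : 1 + δ ≤ ‖x - t • y‖ := by
            rwa [max_eq_right hc'] at hδle
          have := hgap ‖x - t • y‖ ‖x + t • y‖ (norm_nonneg _) (by linarith) h1δ
          linarith
      · rw [Set.indicator_of_notMem hmem]
        set a := ‖x + t • y‖; set b := ‖x - t • y‖
        have hmid := hφ.convexOn.2 (Set.mem_Ici.mpr (norm_nonneg (x + t • y)))
          (Set.mem_Ici.mpr (norm_nonneg (x - t • y)))
          (by norm_num : (0:ℝ) ≤ 1/2) (by norm_num : (0:ℝ) ≤ 1/2) (by norm_num)
        have h1m : φ 1 ≤ φ ((1/2:ℝ) • a + (1/2:ℝ) • b) := by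
          apply hφm (Set.mem_Ici.mpr zero_le_one)
          · simp only [smul_eq_mul, Set.mem_Ici]
            nlinarith [norm_nonneg (x + t • y), norm_nonneg (x - t • y)]
          · simp only [smul_eq_mul]; linarith
        simp only [smul_eq_mul] at hmid h1m
        linarith
    have hIndInt : Integrable (B.indicator (fun _ => c)) P :=
      (integrable_const c).indicator hB
    have hg := hInt (-y)
    rw [← hneg y] at hg
    have hIA : Integrable (fun ω => 2 * φ 1 + B.indicator (fun _ => c) ω) P :=
      (integrable_const (2 * φ 1)).add hIndInt
    have hSumInt : Integrable (fun ω => φ ‖x + r ω • y‖ + φ ‖x - r ω • y‖) P :=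
      (hInt y).add hg
    have hIle := integral_mono_ae hIA hSumInt hsum_ae
    have e1 : ∫ ω, (2 * φ 1 + B.indicator (fun _ => c) ω) ∂P
        = 2 * φ 1 + c * (P B).toReal := by
      rw [integral_add (integrable_const _) hIndInt, integral_const,
        integral_indicator_const c hB]
      simp only [measureReal_def, measure_univ, ENNReal.toReal_one, one_smul, smul_eq_mul]
      ring
    have e2 : ∫ ω, (φ ‖x + r ω • y‖ + φ ‖x - r ω • y‖) ∂P
        = 2 * ∫ ω, φ ‖x + r ω • y‖ ∂P := by
      rw [integral_add (hInt y) hg, ← hsymInt y]; ring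
    rw [e1, e2] at hIle
    linarith
  · -- easy direction
    intro hR ε hε
    obtain ⟨δ, hδ, hineq⟩ := hR ε hε
    have hL : 0 < φ 2 - φ 1 := by
      have := hsm (Set.mem_Ici.mpr zero_le_one) (Set.mem_Ici.mpr (by norm_num : (0:ℝ) ≤ 2))
        (by norm_num)
      linarith
    set L := φ 2 - φ 1 with hLdef
    refine ⟨min 1 (δ/(2*L)), lt_min one_pos (by positivity), ?_⟩
    intro y hy
    by_contra hcon
    push_neg at hcon
    set δ' := min 1 (δ/(2*L)) with hδ'def
    have hδ'pos : 0 < δ' := lt_min one_pos (by positivity)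
    set M := max ‖x + y‖ ‖x - y‖ with hM
    have hM1 : 1 ≤ M := by
      have he : (x + y) + (x - y) = (2:ℝ) • x := by module
      have : (2:ℝ) ≤ ‖x + y‖ + ‖x - y‖ := by
        calc (2:ℝ) = ‖(2:ℝ) • x‖ := by rw [norm_smul, hx, Real.norm_eq_abs]; norm_num
          _ = ‖(x + y) + (x - y)‖ := by rw [he]
          _ ≤ ‖x + y‖ + ‖x - y‖ := norm_add_le _ _
      rcases le_total ‖x + y‖ ‖x - y‖ with h | h
      · rw [hM, max_eq_right h]; linarith
      · rw [hM, max_eq_left h]; linarith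
    have hkey : ∀ t : ℝ, |t| ≤ 1 → ‖x + t • y‖ ≤ M := by
      intro t ht
      obtain ⟨ht1, ht2⟩ := abs_le.mp ht
      have he : x + t • y = ((1+t)/2) • (x + y) + ((1-t)/2) • (x - y) := by
        match_scalars <;> ring
      calc ‖x + t • y‖ = ‖((1+t)/2) • (x + y) + ((1-t)/2) • (x - y)‖ := by rw [he]
        _ ≤ ‖((1+t)/2) • (x + y)‖ + ‖((1-t)/2) • (x - y)‖ := norm_add_le _ _
        _ = ((1+t)/2) * ‖x + y‖ + ((1-t)/2) * ‖x - y‖ := by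
            rw [norm_smul, norm_smul, Real.norm_eq_abs, Real.norm_eq_abs,
              abs_of_nonneg (by linarith), abs_of_nonneg (by linarith)]
        _ ≤ ((1+t)/2) * M + ((1-t)/2) * M := by
            have h1 : ‖x + y‖ ≤ M := le_max_left _ _
            have h2 : ‖x - y‖ ≤ M := le_max_right _ _
            have e1 : (0:ℝ) ≤ (1+t)/2 := by linarith
            have e2 : (0:ℝ) ≤ (1-t)/2 := by linarith
            nlinarith
        _ = M := by ring
    have hub : ∫ ω, φ ‖x + r ω • y‖ ∂P ≤ φ M := by
      have hb : ∀ᵐ ω ∂P, φ ‖x + r ω • y‖ ≤ φ M := by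
        filter_upwards [hr1] with ω hω
        exact hφm (Set.mem_Ici.mpr (norm_nonneg _)) (Set.mem_Ici.mpr (by linarith))
          (hkey _ hω)
      have := integral_mono_ae (hInt y) (integrable_const (φ M)) hb
      simpa [measure_univ] using this
    have hφM : φ M ≤ φ (1 + δ') :=
      hφm (Set.mem_Ici.mpr (by linarith)) (Set.mem_Ici.mpr (by linarith)) hcon.le
    have hslope : φ (1 + δ') - φ 1 ≤ δ' * L := by
      rcases eq_or_lt_of_le (show δ' ≤ 1 from min_le_left _ _) with heq | hlt
      · rw [show (1:ℝ) + δ' = 2 from by rw [heq]; norm_num, heq, one_mul, hLdef]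
      · have h := hφ.convexOn.secant_mono (Set.mem_Ici.mpr zero_le_one)
          (Set.mem_Ici.mpr (by linarith : (0:ℝ) ≤ 1 + δ'))
          (Set.mem_Ici.mpr (by norm_num : (0:ℝ) ≤ 2))
          (by intro hh; nlinarith [hδ'pos]) (by norm_num) (by linarith)
        have e2 : (φ 2 - φ 1) / (2 - 1) = L := by rw [hLdef]; norm_num
        rw [e2] at h
        have : (1 + δ') - 1 = δ' := by ring
        rw [this] at h
        calc φ (1 + δ') - φ 1 = δ' * ((φ (1 + δ') - φ 1) / δ') := by field_simp
          _ ≤ δ' * L := mul_le_mul_of_nonneg_left h hδ'pos.le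
    have hδ'L : δ' * L ≤ δ/2 := by
      have h1 : δ' ≤ δ/(2*L) := min_le_right _ _
      calc δ' * L ≤ (δ/(2*L)) * L := mul_le_mul_of_nonneg_right h1 hL.le
        _ = δ/2 := by field_simp
    have hfin := hineq y hy
    clear_value L δ' M
    linarith [hub, hφM, hslope, hδ'L, hfin, hδ]
end

section
/- Let X be a real Banach space, φ a strictly convex increasing function on [0,∞) with φ(0)=0, and r a symmetric random variable with ‖r‖_∞ = 1. Then X is uniformly convex if and only if for every ε > 0, δ_φ(ε) := inf{ E[φ(‖x + r y‖)] − φ(1) : x ∈ S_X, ‖y‖ ≥ ε } > 0. -/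
open MeasureTheory

private lemma maj12 {φ : ℝ → ℝ} (hφ : ConvexOn ℝ (Set.Ici 0) φ) {a b c d : ℝ}
    (hc : 0 ≤ c) (hca : c ≤ a) (hab : a ≤ b) (hbd : b ≤ d)
    (hsum : a + b = c + d) : φ a + φ b ≤ φ c + φ d := by
  rcases eq_or_lt_of_le (hca.trans (hab.trans hbd)) with h | hcd
  · have ha : a = c := by linarith
    have hb : b = d := by linarith
    rw [ha, hb]
  · have hdc : 0 < d - c := by linarith
    set l := (d - a) / (d - c) with hl
    have hl0 : 0 ≤ l := div_nonneg (by linarith) hdc.le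
    have hl1 : 0 ≤ 1 - l := by
      rw [hl, sub_nonneg, div_le_one hdc]; linarith
    have hd0 : (0:ℝ) ≤ d := by linarith
    have key : l * (d - c) = d - a := div_mul_cancel₀ _ hdc.ne'
    have ha' : l • c + (1 - l) • d = a := by
      simp only [smul_eq_mul]; linear_combination -key
    have hb' : (1 - l) • c + l • d = b := by
      rw [show b = c + d - a by linarith]
      simp only [smul_eq_mul]; linear_combination key
    have h1 := hφ.2 (Set.mem_Ici.2 hc) (Set.mem_Ici.2 hd0) hl0 hl1 (by ring)
    have h2 := hφ.2 (Set.mem_Ici.2 hc) (Set.mem_Ici.2 hd0) hl1 hl0 (by ring)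
    rw [ha'] at h1
    rw [hb'] at h2
    simp only [smul_eq_mul] at h1 h2
    linarith

private lemma aux12 {φ : ℝ → ℝ} (hφ : ConvexOn ℝ (Set.Ici 0) φ)
    (hφm : MonotoneOn φ (Set.Ici 0)) (hφ0 : φ 0 = 0) {u v η : ℝ}
    (hv : 0 ≤ v) (hsum : 2 ≤ u + v) (hmax : 1 + η ≤ u) (hη0 : 0 ≤ η) (hη1 : η ≤ 1) :
    φ (1 - η) + φ (1 + η) ≤ φ u + φ v := by
  rcases le_total u 2 with h2 | h2
  · have h1 : φ (1 - η) + φ (1 + η) ≤ φ (2 - u) + φ u :=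
      maj12 hφ (by linarith) (by linarith) (by linarith) hmax (by ring)
    have h2' : φ (2 - u) ≤ φ v :=
      hφm (Set.mem_Ici.2 (by linarith)) (Set.mem_Ici.2 hv) (by linarith)
    linarith
  · have h1 : φ (1 - η) + φ (1 + η) ≤ φ 0 + φ 2 :=
      maj12 hφ le_rfl (by linarith) (by linarith) (by linarith) (by ring)
    have h2' : φ 2 ≤ φ u :=
      hφm (Set.mem_Ici.2 (by norm_num)) (Set.mem_Ici.2 (by linarith)) h2
    have h3 : 0 ≤ φ v := by
      rw [← hφ0]; exact hφm (Set.mem_Ici.2 le_rfl) (Set.mem_Ici.2 hv) hv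
    linarith

theorem stmt12 {Ω : Type*} [MeasurableSpace Ω] (P : Measure Ω) [IsProbabilityMeasure P]
    {X : Type*} [NormedAddCommGroup X] [NormedSpace ℝ X]
    (r : Ω → ℝ) (hmeas : Measurable r)
    (hsymm : Measure.map r P = Measure.map (fun ω => -(r ω)) P)
    (hnorm : eLpNorm r ⊤ P = 1)
    (φ : ℝ → ℝ) (hφ : StrictConvexOn ℝ (Set.Ici 0) φ)
    (hφm : MonotoneOn φ (Set.Ici 0)) (hφ0 : φ 0 = 0) :
    (∀ ε : ℝ, 0 < ε → ∃ δ : ℝ, 0 < δ ∧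
        ∀ x y : X, ‖x‖ = 1 → ε ≤ ‖y‖ → 1 + δ ≤ max ‖x + y‖ ‖x - y‖) ↔
      (∀ ε : ℝ, 0 < ε → ∃ δ : ℝ, 0 < δ ∧
        ∀ x y : X, ‖x‖ = 1 → ε ≤ ‖y‖ →
          φ 1 + δ ≤ ∫ ω, φ ‖x + r ω • y‖ ∂P) := by
  have hφc : ConvexOn ℝ (Set.Ici 0) φ := hφ.convexOn
  have hφ1 : (0:ℝ) ≤ φ 1 := by
    rw [← hφ0]
    exact hφm (Set.mem_Ici.2 le_rfl) (Set.mem_Ici.2 zero_le_one) zero_le_one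
  -- a.e. bound |r| ≤ 1
  have hr1 : ∀ᵐ ω ∂P, |r ω| ≤ 1 := by
    have h := ae_le_eLpNormEssSup (f := r) (μ := P)
    rw [← eLpNorm_exponent_top, hnorm] at h
    filter_upwards [h] with ω hω
    have : ‖r ω‖₊ ≤ 1 := by
      have h' : (‖r ω‖₊ : ENNReal) ≤ 1 := hω
      exact_mod_cast h'
    simpa [← Real.norm_eq_abs, ← coe_nnnorm] using (NNReal.coe_le_coe.2 this)
  -- measurability of the auxiliary functions
  have hψ : Monotone fun s : ℝ => φ (max s 0) := fun s t hst =>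
    hφm (Set.mem_Ici.2 (le_max_right s 0)) (Set.mem_Ici.2 (le_max_right t 0))
      (max_le_max hst le_rfl)
  have hfmeas : ∀ x y : X, Measurable fun t : ℝ => φ ‖x + t • y‖ := by
    intro x y
    have hcont : Continuous fun t : ℝ => ‖x + t • y‖ := by continuity
    have : (fun t : ℝ => φ ‖x + t • y‖)
        = (fun s : ℝ => φ (max s 0)) ∘ fun t : ℝ => ‖x + t • y‖ := by
      funext t; simp [Function.comp, max_eq_left (norm_nonneg _)]
    rw [this]
    exact hψ.measurable.comp hcont.measurable
  constructor
  · -- forward direction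
    intro h ε hε
    obtain ⟨δ₀, hδ₀, hUC⟩ := h (ε / 2) (by linarith)
    set η := min δ₀ 1 with hηdef
    have hη0 : 0 < η := lt_min hδ₀ one_pos
    have hη1 : η ≤ 1 := min_le_right _ _
    set δ₁ := (φ (1 - η) + φ (1 + η)) / 2 - φ 1 with hδ₁def
    have hδ₁ : 0 < δ₁ := by
      have hne : (1 - η : ℝ) ≠ 1 + η := by intro h'; linarith
      have := hφ.2 (Set.mem_Ici.2 (by linarith)) (Set.mem_Ici.2 (by linarith)) hne
        (by norm_num : (0:ℝ) < 1/2) (by norm_num : (0:ℝ) < 1/2) (by norm_num)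
      simp only [smul_eq_mul] at this
      have h1 : (1:ℝ)/2 * (1 - η) + 1/2 * (1 + η) = 1 := by ring
      rw [h1] at this
      simp only [hδ₁def]; linarith
    set A := {ω | 1/2 ≤ |r ω|} with hAdef
    have hA : MeasurableSet A := measurableSet_le measurable_const hmeas.abs
    have hPA : P A ≠ 0 := by
      intro h0
      have hae : ∀ᵐ ω ∂P, ‖r ω‖ ≤ 1/2 := by
        rw [ae_iff]
        refine measure_mono_null ?_ h0
        intro ω hω
        simp only [Real.norm_eq_abs, not_le] at hω
        simp only [hAdef, Set.mem_setOf_eq]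
        exact hω.le
      have hle := eLpNormEssSup_le_of_ae_bound hae
      rw [← eLpNorm_exponent_top, hnorm] at hle
      rw [ENNReal.one_le_ofReal] at hle
      linarith
    have hp : 0 < (P A).toReal := ENNReal.toReal_pos hPA (measure_ne_top P A)
    refine ⟨δ₁ * (P A).toReal, mul_pos hδ₁ hp, fun x y hx hy => ?_⟩
    have hy0 : (0:ℝ) ≤ ‖y‖ := norm_nonneg y
    set F := fun ω => φ ‖x + r ω • y‖ with hFdef
    set G := fun ω => φ ‖x - r ω • y‖ with hGdef
    have hFm : Measurable F := (hfmeas x y).comp hmeas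
    have hGm : Measurable G := by
      have : G = (fun t : ℝ => φ ‖x + t • y‖) ∘ fun ω => -(r ω) := by
        funext ω; simp [hGdef, Function.comp, sub_eq_add_neg, neg_smul]
      rw [this]
      exact (hfmeas x y).comp hmeas.neg
    -- nonnegativity and boundedness
    have hFnn : ∀ ω, 0 ≤ F ω := fun ω => by
      rw [← hφ0]
      exact hφm (Set.mem_Ici.2 le_rfl) (Set.mem_Ici.2 (norm_nonneg _)) (norm_nonneg _)
    have hGnn : ∀ ω, 0 ≤ G ω := fun ω => by
      rw [← hφ0]
      exact hφm (Set.mem_Ici.2 le_rfl) (Set.mem_Ici.2 (norm_nonneg _)) (norm_nonneg _)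
    have hC : (0:ℝ) ≤ φ (1 + ‖y‖) := by
      rw [← hφ0]
      exact hφm (Set.mem_Ici.2 le_rfl) (Set.mem_Ici.2 (by linarith)) (by linarith)
    have hFbd : ∀ᵐ ω ∂P, ‖F ω‖ ≤ φ (1 + ‖y‖) := by
      filter_upwards [hr1] with ω hω
      rw [Real.norm_eq_abs, abs_of_nonneg (hFnn ω)]
      have hb : ‖x + r ω • y‖ ≤ 1 + ‖y‖ := by
        calc ‖x + r ω • y‖ ≤ ‖x‖ + ‖r ω • y‖ := norm_add_le _ _
          _ = 1 + |r ω| * ‖y‖ := by rw [hx, norm_smul, Real.norm_eq_abs]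
          _ ≤ 1 + 1 * ‖y‖ := by nlinarith [abs_nonneg (r ω)]
          _ = 1 + ‖y‖ := by ring
      exact hφm (Set.mem_Ici.2 (norm_nonneg _)) (Set.mem_Ici.2 (by linarith)) hb
    have hGbd : ∀ᵐ ω ∂P, ‖G ω‖ ≤ φ (1 + ‖y‖) := by
      filter_upwards [hr1] with ω hω
      rw [Real.norm_eq_abs, abs_of_nonneg (hGnn ω)]
      have hb : ‖x - r ω • y‖ ≤ 1 + ‖y‖ := by
        calc ‖x - r ω • y‖ ≤ ‖x‖ + ‖r ω • y‖ := norm_sub_le _ _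
          _ = 1 + |r ω| * ‖y‖ := by rw [hx, norm_smul, Real.norm_eq_abs]
          _ ≤ 1 + 1 * ‖y‖ := by nlinarith [abs_nonneg (r ω)]
          _ = 1 + ‖y‖ := by ring
      exact hφm (Set.mem_Ici.2 (norm_nonneg _)) (Set.mem_Ici.2 (by linarith)) hb
    have hFint : Integrable F P :=
      Integrable.mono' (integrable_const _) hFm.aestronglyMeasurable hFbd
    have hGint : Integrable G P :=
      Integrable.mono' (integrable_const _) hGm.aestronglyMeasurable hGbd
    -- symmetry: ∫ F = ∫ G
    have hsymint : ∫ ω, F ω ∂P = ∫ ω, G ω ∂P := by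
      have hfsm : ∀ μ : Measure ℝ, AEStronglyMeasurable (fun t : ℝ => φ ‖x + t • y‖) μ :=
        fun μ => (hfmeas x y).aestronglyMeasurable
      calc ∫ ω, F ω ∂P = ∫ t, φ ‖x + t • y‖ ∂(Measure.map r P) :=
            (integral_map hmeas.aemeasurable (hfsm _)).symm
        _ = ∫ t, φ ‖x + t • y‖ ∂(Measure.map (fun ω => -(r ω)) P) := by rw [hsymm]
        _ = ∫ ω, φ ‖x + (-(r ω)) • y‖ ∂P := integral_map hmeas.neg.aemeasurable (hfsm _)
        _ = ∫ ω, G ω ∂P := by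
            congr 1; funext ω; rw [hGdef]; simp [sub_eq_add_neg, neg_smul]
    -- pointwise lower bound
    have hpt : ∀ ω, φ 1 + A.indicator (fun _ => δ₁) ω ≤ (F ω + G ω) / 2 := by
      intro ω
      have hsum2 : (2:ℝ) ≤ ‖x + r ω • y‖ + ‖x - r ω • y‖ := by
        have := norm_add_le (x + r ω • y) (x - r ω • y)
        have h2 : (x + r ω • y) + (x - r ω • y) = x + x := by abel
        rw [h2] at this
        have hxx : ‖x + x‖ = 2 := by
          rw [show x + x = (2:ℝ) • x by module, norm_smul, hx]; norm_num
        linarith [this, hxx ▸ this]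
      by_cases hωA : ω ∈ A
      · have hrω : 1/2 ≤ |r ω| := hωA
        have hz : ε / 2 ≤ ‖r ω • y‖ := by
          rw [norm_smul, Real.norm_eq_abs]
          nlinarith
        have hmax := hUC x (r ω • y) hx hz
        have hmax' : 1 + η ≤ max ‖x + r ω • y‖ ‖x - r ω • y‖ := by
          refine le_trans ?_ hmax
          simp only [hηdef]
          have := min_le_left δ₀ 1
          linarith [min_le_left δ₀ (1:ℝ)]
        have key : φ (1 - η) + φ (1 + η) ≤ F ω + G ω := by
          rcases le_total ‖x - r ω • y‖ ‖x + r ω • y‖ with hc | hc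
          · rw [max_eq_left hc] at hmax'
            exact aux12 hφc hφm hφ0 (norm_nonneg _) hsum2 hmax' hη0.le hη1
          · rw [max_eq_right hc] at hmax'
            have := aux12 hφc hφm hφ0 (norm_nonneg (x + r ω • y))
              (by linarith) hmax' hη0.le hη1
            simp only [hFdef, hGdef]; linarith
        rw [Set.indicator_of_mem hωA]
        simp only [hδ₁def]; linarith
      · rw [Set.indicator_of_notMem hωA]
        have hmid := hφc.2 (Set.mem_Ici.2 (norm_nonneg (x + r ω • y)))
          (Set.mem_Ici.2 (norm_nonneg (x - r ω • y)))
          (by norm_num : (0:ℝ) ≤ 1/2) (by norm_num : (0:ℝ) ≤ 1/2) (by norm_num)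
        simp only [smul_eq_mul] at hmid
        have hmono : φ 1 ≤ φ (1/2 * ‖x + r ω • y‖ + 1/2 * ‖x - r ω • y‖) :=
          hφm (Set.mem_Ici.2 zero_le_one)
            (Set.mem_Ici.2 (by positivity)) (by linarith)
        simp only [hFdef, hGdef]
        linarith
    -- integrate
    have hHint : Integrable (fun ω => φ 1 + A.indicator (fun _ => δ₁) ω) P :=
      (integrable_const _).add ((integrable_const δ₁).indicator hA)
    have hint2 : Integrable (fun ω => (F ω + G ω) / 2) P := (hFint.add hGint).div_const 2
    have hle := integral_mono hHint hint2 hpt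
    have hHval : ∫ ω, (φ 1 + A.indicator (fun _ => δ₁) ω) ∂P = φ 1 + δ₁ * (P A).toReal := by
      rw [integral_add (integrable_const _) ((integrable_const δ₁).indicator hA),
        integral_const, integral_indicator_const _ hA]
      simp [mul_comm, Measure.real]
    have hval2 : ∫ ω, (F ω + G ω) / 2 ∂P = ∫ ω, F ω ∂P := by
      rw [integral_div, integral_add hFint hGint, ← hsymint]
      ring
    rw [hHval, hval2] at hle
    exact hle
  · -- backward direction
    intro h ε hε
    obtain ⟨δ, hδ, hbound⟩ := h ε hε
    set K := φ 2 - φ 1 with hKdef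
    have hK0 : 0 ≤ K := by
      have := hφm (Set.mem_Ici.2 zero_le_one) (Set.mem_Ici.2 (by norm_num : (0:ℝ) ≤ 2))
        (by norm_num)
      simp only [hKdef]; linarith
    set t := min 1 (δ / (2 * (K + 1))) with htdef
    have ht0 : 0 < t := lt_min one_pos (by positivity)
    have ht1 : t ≤ 1 := min_le_left _ _
    have htK : t * K < δ := by
      have h1 : t ≤ δ / (2 * (K + 1)) := min_le_right _ _
      have h2 : t * K ≤ δ / (2 * (K + 1)) * K := by nlinarith
      have h3 : δ / (2 * (K + 1)) * K < δ := by
        rw [div_mul_eq_mul_div, div_lt_iff₀ (by positivity)]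
        nlinarith
      exact lt_of_le_of_lt h2 h3
    refine ⟨t, ht0, fun x y hx hy => ?_⟩
    set M := max ‖x + y‖ ‖x - y‖ with hMdef
    have hM0 : (0:ℝ) ≤ M := le_trans (norm_nonneg _) (le_max_left _ _)
    by_contra hcon
    push_neg at hcon
    -- so M < 1 + t
    have hbd := hbound x y hx hy
    -- pointwise a.e. bound on the integrand
    have hptw : ∀ᵐ ω ∂P, φ ‖x + r ω • y‖ ≤ φ M := by
      filter_upwards [hr1] with ω hω
      have hnb : ‖x + r ω • y‖ ≤ M := by
        have hdecomp : x + r ω • y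
            = ((1 + r ω) / 2) • (x + y) + ((1 - r ω) / 2) • (x - y) := by
          module
        have h1 : (0:ℝ) ≤ (1 + r ω) / 2 := by
          have := abs_le.1 hω; linarith [this.1]
        have h2 : (0:ℝ) ≤ (1 - r ω) / 2 := by
          have := abs_le.1 hω; linarith [this.2]
        calc ‖x + r ω • y‖
            ≤ ‖((1 + r ω) / 2) • (x + y)‖ + ‖((1 - r ω) / 2) • (x - y)‖ := by
              rw [hdecomp]; exact norm_add_le _ _
          _ = (1 + r ω) / 2 * ‖x + y‖ + (1 - r ω) / 2 * ‖x - y‖ := by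
              rw [norm_smul, norm_smul, Real.norm_eq_abs, Real.norm_eq_abs,
                abs_of_nonneg h1, abs_of_nonneg h2]
          _ ≤ (1 + r ω) / 2 * M + (1 - r ω) / 2 * M := by
              have := le_max_left ‖x + y‖ ‖x - y‖
              have := le_max_right ‖x + y‖ ‖x - y‖
              nlinarith
          _ = M := by ring
      exact hφm (Set.mem_Ici.2 (norm_nonneg _)) (Set.mem_Ici.2 hM0) hnb
    by_cases hI : Integrable (fun ω => φ ‖x + r ω • y‖) P
    · have hle : ∫ ω, φ ‖x + r ω • y‖ ∂P ≤ φ M := by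
        have := integral_mono_ae hI (integrable_const (φ M)) hptw
        simpa using this
      -- φ M ≤ φ (1 + t) ≤ φ 1 + t * K < φ 1 + δ
      have hMt : φ M ≤ φ (1 + t) :=
        hφm (Set.mem_Ici.2 hM0) (Set.mem_Ici.2 (by linarith)) (le_of_lt hcon)
      have hconv : φ (1 + t) ≤ φ 1 + t * K := by
        have h1 := hφc.2 (Set.mem_Ici.2 zero_le_one)
          (Set.mem_Ici.2 (by norm_num : (0:ℝ) ≤ 2)) (by linarith : (0:ℝ) ≤ 1 - t)
          ht0.le (by ring)
        simp only [smul_eq_mul] at h1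
        have h2 : (1 - t) * 1 + t * 2 = 1 + t := by ring
        rw [h2] at h1
        simp only [hKdef]; linarith
      linarith
    · rw [integral_undef hI] at hbd
      linarith
end

section
/- For every 1 < p < ∞ there exists a constant C = C(p) > 0 such that for all real numbers s, t: ( |(s−t)/C|^2 + |(s+t)/2|^2 )^{1/2} ≤ ( (|s|^p + |t|^p)/2 )^{1/p}. -/
open Real Set

-- Step inequality from Bernoulli: (p-1)u ≤ (1+u)^(p-1) - (1-u)^(p-1)
lemma bern_step (p : ℝ) (hp : 1 < p) {u : ℝ} (hu0 : 0 ≤ u) (hu1 : u ≤ 1) :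
    (p - 1) * u ≤ (1 + u) ^ (p - 1) - (1 - u) ^ (p - 1) := by
  rcases le_or_gt p 2 with h2 | h2
  · have h1 : (1 + (-u)) ^ (p - 1) ≤ 1 + (p - 1) * (-u) :=
      rpow_one_add_le_one_add_mul_self (by linarith) (by linarith) (by linarith)
    have h3 : (1 : ℝ) ≤ (1 + u) ^ (p - 1) :=
      Real.one_le_rpow (by linarith) (by linarith)
    have : (1 - u) ^ (p - 1) ≤ 1 - (p - 1) * u := by
      rw [show (1 : ℝ) - u = 1 + (-u) by ring]; linarith
    linarith
  · have h1 : 1 + (p - 1) * u ≤ (1 + u) ^ (p - 1) :=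
      one_add_mul_self_le_rpow_one_add (by linarith) (by linarith)
    have h3 : (1 - u) ^ (p - 1) ≤ 1 :=
      Real.rpow_le_one (by linarith) (by linarith) (by linarith)
    linarith

-- Quadratic lower bound
lemma L1 (p : ℝ) (hp : 1 < p) {u : ℝ} (hu0 : 0 ≤ u) (hu1 : u ≤ 1) :
    2 + p * (p - 1) / 2 * u ^ 2 ≤ (1 + u) ^ p + (1 - u) ^ p := by
  set F : ℝ → ℝ := fun u => (1 + u) ^ p + (1 - u) ^ p - p * (p - 1) / 2 * u ^ 2 with hF
  have hderiv : ∀ x ∈ Ioo (0 : ℝ) 1, HasDerivAt F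
      (1 * p * (1 + x) ^ (p - 1) + (-1) * p * (1 - x) ^ (p - 1)
        - p * (p - 1) / 2 * (↑(2 : ℕ) * x ^ (2 - 1))) x := by
    intro x hx
    have h1 : HasDerivAt (fun u : ℝ => 1 + u) 1 x := by
      simpa using (hasDerivAt_id x).const_add (1 : ℝ)
    have h2 : HasDerivAt (fun u : ℝ => 1 - u) (-1) x := by
      simpa using (hasDerivAt_id x).const_sub (1 : ℝ)
    have h1' := h1.rpow_const (p := p) (Or.inl (by nlinarith [hx.1]))
    have h2' := h2.rpow_const (p := p) (Or.inl (by nlinarith [hx.2]))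
    have h3 : HasDerivAt (fun u : ℝ => p * (p - 1) / 2 * u ^ 2)
        (p * (p - 1) / 2 * (↑(2:ℕ) * x ^ (2 - 1))) x :=
      (hasDerivAt_pow 2 x).const_mul (p * (p - 1) / 2)
    exact (h1'.add h2').sub h3
  have hmono : MonotoneOn F (Icc (0 : ℝ) 1) := by
    apply monotoneOn_of_deriv_nonneg (convex_Icc 0 1)
    · apply ContinuousOn.sub (ContinuousOn.add ?_ ?_) (by fun_prop)
      · exact (continuous_const.add continuous_id).continuousOn.rpow_const
          (fun x _ => Or.inr (by linarith))
      · exact (continuous_const.sub continuous_id).continuousOn.rpow_const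
          (fun x _ => Or.inr (by linarith))
    · intro x hx
      rw [interior_Icc] at hx
      exact (hderiv x hx).differentiableAt.differentiableWithinAt
    · intro x hx
      rw [interior_Icc] at hx
      rw [(hderiv x hx).deriv]
      have hb := bern_step p hp (le_of_lt hx.1) (le_of_lt hx.2)
      have hp0 : 0 < p := by linarith
      push_cast
      nlinarith [hx.1.le]
  have key := hmono (Set.mem_Icc.mpr ⟨le_refl 0, zero_le_one⟩) (Set.mem_Icc.mpr ⟨hu0, hu1⟩) hu0
  have h0 : F 0 = 2 := by
    simp [hF]; norm_num
  rw [h0] at key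
  simp only [hF] at key
  linarith

-- ordered nonneg version, 1 < p ≤ 2
lemma aux_le2 (p : ℝ) (hp : 1 < p) (hp2 : p ≤ 2) {a b : ℝ} (hb : 0 ≤ b) (hba : b ≤ a) :
    ((a + b) / 2) ^ 2 + p * (p - 1) / 4 * ((a - b) / 2) ^ 2
      ≤ ((a ^ p + b ^ p) / 2) ^ (2 / p) := by
  have hp0 : 0 < p := by linarith
  rcases eq_or_lt_of_le (hb.trans hba) with h | ha
  · have ha0 : a = 0 := h.symm
    have hb0 : b = 0 := le_antisymm (ha0 ▸ hba) hb
    simp [ha0, hb0, Real.zero_rpow hp0.ne', Real.zero_rpow (by positivity : (2/p : ℝ) ≠ 0)]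
  · set T : ℝ := (a + b) / 2 with hT
    have hab : 0 < a + b := by linarith
    have hTpos : 0 < T := by positivity
    set u : ℝ := (a - b) / (a + b) with hu
    have hu0 : 0 ≤ u := div_nonneg (by linarith) hab.le
    have hu1 : u ≤ 1 := (div_le_one hab).mpr (by linarith)
    have haT : a = T * (1 + u) := by
      rw [hT, hu]; field_simp; ring
    have hbT : b = T * (1 - u) := by
      rw [hT, hu]; field_simp; ring
    have hmean : T ^ p * (1 + p * (p - 1) / 4 * u ^ 2) ≤ (a ^ p + b ^ p) / 2 := by
      have hL := L1 p hp hu0 hu1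
      have hap : a ^ p = T ^ p * (1 + u) ^ p := by
        rw [haT, Real.mul_rpow hTpos.le (by linarith)]
      have hbp : b ^ p = T ^ p * (1 - u) ^ p := by
        rw [hbT, Real.mul_rpow hTpos.le (by linarith)]
      rw [hap, hbp]
      have hTp : (0:ℝ) ≤ T ^ p := Real.rpow_nonneg hTpos.le p
      nlinarith
    have hM1 : (1:ℝ) ≤ 1 + p * (p - 1) / 4 * u ^ 2 := by
      have := mul_nonneg (by nlinarith : (0:ℝ) ≤ p * (p - 1) / 4) (sq_nonneg u)
      linarith
    calc ((a + b) / 2) ^ 2 + p * (p - 1) / 4 * ((a - b) / 2) ^ 2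
        = T ^ 2 * (1 + p * (p - 1) / 4 * u ^ 2) := by
          rw [hT, hu]; field_simp
      _ ≤ T ^ 2 * ((1 + p * (p - 1) / 4 * u ^ 2) ^ (2 / p)) := by
          have h2p : (1:ℝ) ≤ 2 / p := by
            rw [le_div_iff₀ hp0]; linarith
          have := Real.rpow_le_rpow_of_exponent_le hM1 h2p
          rw [Real.rpow_one] at this
          nlinarith [sq_nonneg T]
      _ = (T ^ p) ^ (2 / p) * ((1 + p * (p - 1) / 4 * u ^ 2) ^ (2 / p)) := by
          rw [← Real.rpow_natCast T 2, ← Real.rpow_mul hTpos.le]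
          congr 1
          field_simp
          norm_num
      _ = (T ^ p * (1 + p * (p - 1) / 4 * u ^ 2)) ^ (2 / p) := by
          rw [Real.mul_rpow (Real.rpow_nonneg hTpos.le p) (by linarith)]
      _ ≤ ((a ^ p + b ^ p) / 2) ^ (2 / p) := by
          apply Real.rpow_le_rpow _ hmean (by positivity)
          positivity
  
-- key inequality
lemma keyineq (p : ℝ) (hp : 1 < p) :
    ∃ ε : ℝ, 0 < ε ∧ ε ≤ 1 ∧ ∀ s t : ℝ,
      ((s + t) / 2) ^ 2 + ε * ((s - t) / 2) ^ 2 ≤ ((|s| ^ p + |t| ^ p) / 2) ^ (2 / p) := by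
  have hp0 : 0 < p := by linarith
  rcases le_or_gt p 2 with hp2 | hp2
  · refine ⟨p * (p - 1) / 4, by nlinarith, by nlinarith, fun s t => ?_⟩
    set ε := p * (p - 1) / 4 with hε
    have hε1 : ε ≤ 1 := by rw [hε]; nlinarith
    have hε0 : 0 < ε := by rw [hε]; nlinarith
    -- order |s|,|t|
    rcases le_total |t| |s| with hts | hts
    · have hA := aux_le2 p hp hp2 (abs_nonneg t) hts
      rw [← hε] at hA
      have h1 : ((s + t) / 2) ^ 2 + ε * ((s - t) / 2) ^ 2
          ≤ ((|s| + |t|) / 2) ^ 2 + ε * ((|s| - |t|) / 2) ^ 2 := by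
        have e1 : (s + t) ^ 2 + (s - t) ^ 2 = (|s| + |t|) ^ 2 + (|s| - |t|) ^ 2 := by
          have := sq_abs s; have := sq_abs t; nlinarith
        have e2 : (s + t) ^ 2 ≤ (|s| + |t|) ^ 2 := by
          have h := abs_add_le s t
          have := abs_nonneg (s + t)
          nlinarith [sq_abs (s + t)]
        nlinarith
      linarith
    · have hA := aux_le2 p hp hp2 (abs_nonneg s) hts
      rw [← hε] at hA
      have h1 : ((s + t) / 2) ^ 2 + ε * ((s - t) / 2) ^ 2
          ≤ ((|t| + |s|) / 2) ^ 2 + ε * ((|t| - |s|) / 2) ^ 2 := by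
        have e1 : (s + t) ^ 2 + (s - t) ^ 2 = (|t| + |s|) ^ 2 + (|t| - |s|) ^ 2 := by
          have := sq_abs s; have := sq_abs t; nlinarith
        have e2 : (s + t) ^ 2 ≤ (|t| + |s|) ^ 2 := by
          have h := abs_add_le s t
          have := abs_nonneg (s + t)
          nlinarith [sq_abs (s + t)]
        nlinarith
      rw [add_comm (|s| ^ p)]
      linarith
  · -- p ≥ 2 : use convexity of x ^ (p/2)
    refine ⟨1, one_pos, le_refl 1, fun s t => ?_⟩
    have hconv := (convexOn_rpow (p := p / 2) (by linarith)).2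
      (mem_Ici.mpr (sq_nonneg |s|)) (mem_Ici.mpr (sq_nonneg |t|))
      (by norm_num : (0:ℝ) ≤ 1/2) (by norm_num : (0:ℝ) ≤ 1/2) (by norm_num)
    simp only [smul_eq_mul] at hconv
    have habs : ∀ x : ℝ, (|x| ^ 2) ^ (p / 2 : ℝ) = |x| ^ p := by
      intro x
      rw [← Real.rpow_natCast |x| 2, ← Real.rpow_mul (abs_nonneg x)]
      congr 1
      push_cast
      ring
    rw [habs, habs] at hconv
    -- hconv : (1/2 * |s|^2 + 1/2 * |t|^2) ^ (p/2) ≤ 1/2 * |s|^p + 1/2 * |t|^p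
    have h2 : ((s + t) / 2) ^ 2 + 1 * ((s - t) / 2) ^ 2 = 1/2 * |s|^2 + 1/2 * |t|^2 := by
      rw [sq_abs, sq_abs]; ring
    rw [h2]
    set A : ℝ := 1/2 * |s|^2 + 1/2 * |t|^2 with hA
    have hA0 : 0 ≤ A := by positivity
    have := Real.rpow_le_rpow (Real.rpow_nonneg hA0 (p/2)) hconv
      (le_of_lt (by positivity : (0:ℝ) < 2 / p))
    rw [← Real.rpow_mul hA0] at this
    have hpp : p / 2 * (2 / p) = 1 := by field_simp
    rw [hpp, Real.rpow_one] at this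
    calc A ≤ (1/2 * |s|^p + 1/2 * |t|^p) ^ (2/p) := this
      _ = ((|s| ^ p + |t| ^ p) / 2) ^ (2 / p) := by ring_nf

theorem stmt15 (p : ℝ) (hp : 1 < p) :
    ∃ C : ℝ, 0 < C ∧ ∀ s t : ℝ,
      Real.sqrt (((s - t) / C) ^ 2 + ((s + t) / 2) ^ 2)
        ≤ ((|s| ^ p + |t| ^ p) / 2) ^ (1 / p) := by
  obtain ⟨ε, hε0, hε1, hkey⟩ := keyineq p hp
  have hs : 0 < Real.sqrt ε := Real.sqrt_pos.mpr hε0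
  refine ⟨2 / Real.sqrt ε, by positivity, fun s t => ?_⟩
  set R : ℝ := ((|s| ^ p + |t| ^ p) / 2) ^ (1 / p) with hR
  have hR0 : 0 ≤ R := Real.rpow_nonneg (by positivity) _
  have hterm : ((s - t) / (2 / Real.sqrt ε)) ^ 2 = ε * ((s - t) / 2) ^ 2 := by
    rw [div_div_eq_mul_div, div_pow, div_pow, mul_pow, Real.sq_sqrt hε0.le]
    ring
  have hR2 : R ^ 2 = ((|s| ^ p + |t| ^ p) / 2) ^ (2 / p) := by
    rw [hR, ← Real.rpow_natCast _ 2, ← Real.rpow_mul (by positivity)]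
    congr 1
    push_cast
    ring
  have hle : ((s - t) / (2 / Real.sqrt ε)) ^ 2 + ((s + t) / 2) ^ 2 ≤ R ^ 2 := by
    rw [hterm, hR2]
    have := hkey s t
    linarith
  calc Real.sqrt (((s - t) / (2 / Real.sqrt ε)) ^ 2 + ((s + t) / 2) ^ 2)
      ≤ Real.sqrt (R ^ 2) := Real.sqrt_le_sqrt hle
    _ = R := by rw [Real.sqrt_sq hR0]
end

section
/- Every uniformly convex Banach lattice is uniformly monotone. -/
set_option maxHeartbeats 1000000 in


private lemma tri_abs {E : Type*} [Lattice E] [AddCommGroup E]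
    [CovariantClass E E (· + ·) (· ≤ ·)] [CovariantClass E E (Function.swap (· + ·)) (· ≤ ·)]
    (a b : E) : |a + b| ≤ |a| + |b| :=
  abs_le'.2 ⟨add_le_add (le_abs_self a) (le_abs_self b),
    by rw [neg_add]; exact add_le_add (neg_le_abs a) (neg_le_abs b)⟩

theorem stmt17 {E : Type*} [NormedAddCommGroup E] [Lattice E] [HasSolidNorm E]
    [IsOrderedAddMonoid E] [NormedSpace ℝ E]
    [CompleteSpace E]
    (huc : ∀ ε : ℝ, 0 < ε → ∃ δ : ℝ, 0 < δ ∧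
      ∀ x y : E, ‖x‖ = 1 → ε ≤ ‖y‖ → 1 + δ ≤ max ‖x + y‖ ‖x - y‖) :
    ∀ ε : ℝ, 0 < ε → ∃ δ : ℝ, 0 < δ ∧
      ∀ x y : E, ‖x‖ = 1 → ε ≤ ‖y‖ → 1 + δ ≤ ‖|x| + |y|‖ := by
  intro ε hε
  obtain ⟨δ, hδ, h⟩ := huc ε hε
  refine ⟨δ, hδ, fun x y hx hy => ?_⟩
  have h1 : ‖|x|‖ = 1 := by rw [norm_abs_eq_norm]; exact hx
  have key := h |x| y h1 hy
  have hs : ∀ z : E, |z| ≤ |x| + |y| → ‖z‖ ≤ ‖|x| + |y|‖ := fun z hz =>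
    HasSolidNorm.solid (by rwa [abs_of_nonneg (add_nonneg (abs_nonneg x) (abs_nonneg y))])
  have h2 : ‖|x| + y‖ ≤ ‖|x| + |y|‖ :=
    hs _ ((tri_abs (|x|) y).trans (by rw [abs_abs]))
  have h3 : ‖|x| - y‖ ≤ ‖|x| + |y|‖ :=
    hs _ (by simpa [sub_eq_add_neg, abs_abs] using tri_abs (|x|) (-y))
  exact key.trans (max_le h2 h3)
end
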